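/- arXiv:0707.1552 — 12 statements merged into one kernel-verified Lean document; each statement's English description precedes it below -/
import Mathlib

section
/- Let K be a field of characteristic p > 0 and f₁, f₂ ∈ K[x] \ K[x^p] nonconstant polynomials. If f₁ and f₂ have a common composite, then they have a common composite which is not in K[x^p]. -/
open Polynomial

section Pi

variable {K L : Type*} [Field K] [Field L]

/-- Apply a linear functional to the coefficients of a polynomial. -/
noncomputable def lmapPoly [Algebra K L] (π : L →ₗ[K] K) (u : L[X]) : K[X] :=
  ⟨AddMonoidAlgebra.ofCoeff (u.toFinsupp.coeff.mapRange π (map_zero π))⟩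

lemma coeff_lmapPoly [Algebra K L] (π : L →ₗ[K] K) (u : L[X]) (n : ℕ) :
    (lmapPoly π u).coeff n = π (u.coeff n) := by
  rcases u with ⟨u⟩
  simp [lmapPoly, coeff, Finsupp.mapRange_apply]

lemma lmapPoly_add [Algebra K L] (π : L →ₗ[K] K) (u v : L[X]) :
    lmapPoly π (u + v) = lmapPoly π u + lmapPoly π v := by
  ext n; simp [coeff_lmapPoly, map_add]

lemma lmapPoly_C_mul_map [Algebra K L] (π : L →ₗ[K] K) (c : L) (w : K[X]) :
    lmapPoly π (C c * w.map (algebraMap K L)) = C (π c) * w := by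
  ext n
  rw [coeff_lmapPoly, coeff_C_mul, coeff_C_mul, coeff_map]
  have : c * algebraMap K L (w.coeff n) = (w.coeff n) • c := by
    rw [Algebra.smul_def]; ring
  rw [this, map_smul, smul_eq_mul, mul_comm]

lemma lmapPoly_comp [Algebra K L] (π : L →ₗ[K] K) (u : L[X]) (f : K[X]) :
    lmapPoly π (u.comp (f.map (algebraMap K L))) = (lmapPoly π u).comp f := by
  induction u using Polynomial.induction_on' with
  | add u v hu hv => rw [add_comp, lmapPoly_add, lmapPoly_add, add_comp, hu, hv]
  | monomial n c =>
      have hmono : lmapPoly π (monomial n c) = monomial n (π c) := by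
        ext m
        rw [coeff_lmapPoly, coeff_monomial, coeff_monomial]
        split_ifs <;> simp
      have h1 : (monomial n c).comp (f.map (algebraMap K L)) =
          C c * (f ^ n).map (algebraMap K L) := by
        rw [← C_mul_X_pow_eq_monomial, mul_comp, C_comp, X_pow_comp, Polynomial.map_pow]
      have h2 : (monomial n (π c)).comp f = C (π c) * f ^ n := by
        rw [← C_mul_X_pow_eq_monomial, mul_comp, C_comp, X_pow_comp]
      rw [h1, lmapPoly_C_mul_map, hmono, h2]

end Pi

section Perfect

variable {L : Type*} [Field L]

lemma comp_ne_C {A F : L[X]} (hA : A ≠ 0) (hF : F.natDegree ≠ 0) : A.comp F ≠ 0 := by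
  intro h
  rcases Polynomial.comp_eq_zero_iff.mp h with rfl | ⟨-, hC⟩
  · exact hA rfl
  · exact hF (by rw [hC, natDegree_C])

lemma perfect_step (p : ℕ) (hp : p.Prime) [CharP L p] [ExpChar L p] [PerfectRing L p]
    (F₁ F₂ : L[X]) (hdF₁ : F₁.natDegree ≠ 0) (hdF₂ : F₂.natDegree ≠ 0)
    (hF₁ : derivative F₁ ≠ 0) (hF₂ : derivative F₂ ≠ 0) :
    ∀ n (A B : L[X]), (A.comp F₁).natDegree ≤ n → A.natDegree ≠ 0 → B.natDegree ≠ 0 →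
      A.comp F₁ = B.comp F₂ →
      ∃ A' B' : L[X], A'.natDegree ≠ 0 ∧ B'.natDegree ≠ 0 ∧ A'.comp F₁ = B'.comp F₂ ∧
        derivative (A'.comp F₁) ≠ 0 := by
  intro n
  induction n using Nat.strong_induction_on with
  | _ n ih =>
    intro A B hle hA hB hAB
    by_cases hder : derivative (A.comp F₁) ≠ 0
    · exact ⟨A, B, hA, hB, hAB, hder⟩
    push_neg at hder
    -- derivative A = 0 and derivative B = 0
    have hA0 : A ≠ 0 := fun h => hA (by simp [h])
    have hB0 : B ≠ 0 := fun h => hB (by simp [h])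
    have hdA : derivative A = 0 := by
      have := derivative_comp A F₁
      rw [hder] at this
      rcases mul_eq_zero.mp this.symm with h | h
      · exact absurd h hF₁
      · rw [Polynomial.comp_eq_zero_iff] at h
        rcases h with h | ⟨-, hC⟩
        · exact h
        · exact absurd (by rw [hC, natDegree_C]) hdF₁
    have hdB : derivative B = 0 := by
      have := derivative_comp B F₂
      rw [← hAB, hder] at this
      rcases mul_eq_zero.mp this.symm with h | h
      · exact absurd h hF₂
      · rw [Polynomial.comp_eq_zero_iff] at h
        rcases h with h | ⟨-, hC⟩
        · exact h
        · exact absurd (by rw [hC, natDegree_C]) hdF₂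
    set B₁ := contract p A with hB₁
    set B₂ := contract p B with hB₂
    have hexp₁ : expand L p B₁ = A := expand_contract p hdA hp.ne_zero
    have hexp₂ : expand L p B₂ = B := expand_contract p hdB hp.ne_zero
    -- rewrite compositions
    have key : B₁.comp (map (frobenius L p) F₁) = B₂.comp (map (frobenius L p) F₂) := by
      apply expand_injective hp.pos
      have e1 : ∀ (B' F : L[X]), expand L p (B'.comp (map (frobenius L p) F)) =
          (expand L p B').comp F := by
        intro B' F
        have h3 : (map (frobenius L p) F).comp (X ^ p) = F ^ p := by
          rw [← expand_eq_comp_X_pow, ← map_expand, map_frobenius_expand]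
        rw [expand_eq_comp_X_pow, expand_eq_comp_X_pow, comp_assoc, comp_assoc, h3, X_pow_comp]
      rw [e1, e1, hexp₁, hexp₂, hAB]
    -- unmap frobenius
    set ψ : L →+* L := (frobeniusEquiv L p).symm.toRingHom with hψ
    have hψφ : ∀ (F : L[X]), map ψ (map (frobenius L p) F) = F := by
      intro F
      rw [map_map]
      have : ψ.comp (frobenius L p) = RingHom.id L := by
        ext x; simp [hψ, frobeniusEquiv_symm_apply_frobenius]
      rw [this, map_id]
    have key2 : (map ψ B₁).comp F₁ = (map ψ B₂).comp F₂ := by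
      have := congrArg (map ψ) key
      rwa [Polynomial.map_comp, Polynomial.map_comp, hψφ, hψφ] at this
    -- degrees
    have hndB₁ : B₁.natDegree ≠ 0 := by
      intro h
      apply hA
      rw [← hexp₁, natDegree_expand, h, zero_mul]
    have hndB₂ : B₂.natDegree ≠ 0 := by
      intro h
      apply hB
      rw [← hexp₂, natDegree_expand, h, zero_mul]
    have hmapdeg : ∀ u : L[X], (map ψ u).natDegree = u.natDegree := fun u =>
      natDegree_map_eq_of_injective ψ.injective u
    have hlt : ((map ψ B₁).comp F₁).natDegree < n := by
      have h1 : (A.comp F₁).natDegree = p * ((map ψ B₁).comp F₁).natDegree := by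
        rw [natDegree_comp, natDegree_comp, hmapdeg, ← hexp₁, natDegree_expand]
        ring
      have h2 : 0 < ((map ψ B₁).comp F₁).natDegree := by
        rw [natDegree_comp, hmapdeg]
        exact Nat.pos_of_ne_zero (by simp [hndB₁, hdF₁])
      calc ((map ψ B₁).comp F₁).natDegree < p * ((map ψ B₁).comp F₁).natDegree := by
            nlinarith [hp.two_le]
        _ = (A.comp F₁).natDegree := h1.symm
        _ ≤ n := hle
    exact ih _ hlt (map ψ B₁) (map ψ B₂) le_rfl
      (by rw [hmapdeg]; exact hndB₁) (by rw [hmapdeg]; exact hndB₂) key2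

end Perfect

theorem stmt_1 (K : Type*) [Field K] (p : ℕ) (hp : p.Prime) [CharP K p]
    (f₁ f₂ : K[X]) (hf₁ : f₁.natDegree ≠ 0) (hf₂ : f₂.natDegree ≠ 0)
    (hs₁ : ¬ ∃ g : K[X], Polynomial.expand K p g = f₁)
    (hs₂ : ¬ ∃ g : K[X], Polynomial.expand K p g = f₂)
    (h : ∃ g₁ g₂ : K[X], g₁.natDegree ≠ 0 ∧ g₂.natDegree ≠ 0 ∧ g₁.comp f₁ = g₂.comp f₂) :
    ∃ g₁ g₂ : K[X], g₁.natDegree ≠ 0 ∧ g₂.natDegree ≠ 0 ∧ g₁.comp f₁ = g₂.comp f₂ ∧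
      ¬ ∃ g : K[X], Polynomial.expand K p g = g₁.comp f₁ := by
  obtain ⟨g₁, g₂, hg₁, hg₂, heq⟩ := h
  haveI := Fact.mk hp
  set L := AlgebraicClosure K
  set ι : K →+* L := algebraMap K L with hι
  haveI : CharP L p := charP_of_injective_algebraMap ι.injective p
  haveI : ExpChar L p := ExpChar.prime hp
  -- derivatives of f₁, f₂ are nonzero
  have hdf₁ : derivative f₁ ≠ 0 := fun h0 =>
    hs₁ ⟨contract p f₁, expand_contract p h0 hp.ne_zero⟩
  have hdf₂ : derivative f₂ ≠ 0 := fun h0 =>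
    hs₂ ⟨contract p f₂, expand_contract p h0 hp.ne_zero⟩
  set F₁ := f₁.map ι with hF₁def
  set F₂ := f₂.map ι with hF₂def
  have hmapdeg : ∀ u : K[X], (u.map ι).natDegree = u.natDegree := fun u =>
    natDegree_map_eq_of_injective ι.injective u
  have hdF₁ : F₁.natDegree ≠ 0 := by rw [hF₁def, hmapdeg]; exact hf₁
  have hdF₂ : F₂.natDegree ≠ 0 := by rw [hF₂def, hmapdeg]; exact hf₂
  have hderF₁ : derivative F₁ ≠ 0 := by
    rw [hF₁def, derivative_map]
    exact fun h0 => hdf₁ (map_injective ι ι.injective (by simpa using h0))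
  have hderF₂ : derivative F₂ ≠ 0 := by
    rw [hF₂def, derivative_map]
    exact fun h0 => hdf₂ (map_injective ι ι.injective (by simpa using h0))
  have hcomp : (g₁.map ι).comp F₁ = (g₂.map ι).comp F₂ := by
    rw [hF₁def, hF₂def, ← Polynomial.map_comp, ← Polynomial.map_comp, heq]
  obtain ⟨A, B, hA, hB, hAB, hder⟩ :=
    perfect_step p hp F₁ F₂ hdF₁ hdF₂ hderF₁ hderF₂ ((g₁.map ι).comp F₁).natDegree
      (g₁.map ι) (g₂.map ι) le_rfl (by rw [hmapdeg]; exact hg₁) (by rw [hmapdeg]; exact hg₂) hcomp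
  -- extract a coefficient witnessing derivative A ≠ 0
  have hdA : derivative A ≠ 0 := by
    intro h0
    apply hder
    rw [derivative_comp, h0, zero_comp, mul_zero]
  obtain ⟨m, hm⟩ : ∃ m, (derivative A).coeff m ≠ 0 := by
    by_contra hc
    push_neg at hc
    exact hdA (Polynomial.ext fun m => by simpa using hc m)
  rw [coeff_derivative] at hm
  have hc : A.coeff (m + 1) ≠ 0 := fun h0 => hm (by rw [h0, zero_mul])
  have hn : ((m : K) + 1) ≠ 0 := by
    intro h0
    apply hm
    have : ((m : L) + 1) = ι ((m : K) + 1) := by rw [map_add, map_natCast, map_one]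
    rw [this, h0, map_zero, mul_zero]
  -- build a K-linear functional π : L → K with π (A.coeff (m+1)) = 1
  obtain ⟨π, hπ⟩ : ∃ π : L →ₗ[K] K, π (A.coeff (m + 1)) = 1 := by
    set c := A.coeff (m + 1)
    have hli : LinearIndepOn K id ({c} : Set L) :=
      LinearIndepOn.singleton hc
    set b := Module.Basis.extend hli with hb
    have hmem : c ∈ hli.extend (Set.subset_univ _) := hli.subset_extend _ rfl
    refine ⟨b.coord ⟨c, hmem⟩, ?_⟩
    have hcb : c = b ⟨c, hmem⟩ := (Module.Basis.extend_apply_self hli ⟨c, hmem⟩).symm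
    have h4 : b.coord ⟨c, hmem⟩ c = b.coord ⟨c, hmem⟩ (b ⟨c, hmem⟩) :=
      congrArg (b.coord ⟨c, hmem⟩) hcb
    rw [h4, Module.Basis.coord_apply, Module.Basis.repr_self, Finsupp.single_eq_same]
  refine ⟨lmapPoly π A, lmapPoly π B, ?_, ?_, ?_, ?_⟩
  · -- natDegree ≠ 0
    intro h0
    have : (lmapPoly π A).coeff (m + 1) = 0 := by
      apply coeff_eq_zero_of_natDegree_lt
      omega
    rw [coeff_lmapPoly, hπ] at this
    exact one_ne_zero this
  · intro h0
    have hcompK : (lmapPoly π A).comp f₁ = (lmapPoly π B).comp f₂ := by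
      rw [← lmapPoly_comp, ← lmapPoly_comp, ← hF₁def, ← hF₂def, hAB]
    have hd1 : (lmapPoly π A).natDegree ≠ 0 := by
      intro h1
      have : (lmapPoly π A).coeff (m + 1) = 0 := by
        apply coeff_eq_zero_of_natDegree_lt; omega
      rw [coeff_lmapPoly, hπ] at this
      exact one_ne_zero this
    have := congrArg natDegree hcompK
    rw [natDegree_comp, natDegree_comp, h0, zero_mul] at this
    exact hd1 (by
      rcases Nat.mul_eq_zero.mp this with h | h
      · exact h
      · exact absurd h hf₁)
  · rw [← lmapPoly_comp, ← lmapPoly_comp, ← hF₁def, ← hF₂def, hAB]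
  · rintro ⟨g, hg⟩
    -- the composite has nonzero derivative, but expand has zero derivative
    have hdg : derivative (expand K p g) = 0 := by
      rw [expand_eq_comp_X_pow, derivative_comp, derivative_X_pow]
      have : ((p : K[X])) = 0 := by
        rw [← C_eq_natCast, CharP.cast_eq_zero K p, map_zero]
      simp [this]
    have hPA : derivative (lmapPoly π A) ≠ 0 := by
      intro h0
      have := congrArg (fun q => q.coeff m) h0
      simp only [coeff_derivative, coeff_zero, coeff_lmapPoly] at this
      rw [hπ, one_mul] at this
      exact hn this
    have : derivative ((lmapPoly π A).comp f₁) ≠ 0 := by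
      rw [derivative_comp]
      apply mul_ne_zero hdf₁
      exact comp_ne_C hPA hf₁
    rw [← hg] at this
    exact this hdg
end

section
/- Let K be a field and f₁, f₂ ∈ K[x] nonconstant. If the intersection of the rational function subfields K(f₁) ∩ K(f₂) properly contains K, then f₁ and f₂ have a common polynomial composite h, and moreover K(f₁) ∩ K(f₂) = K(h) and K[f₁] ∩ K[f₂] = K[h] for any minimal-degree common composite h. -/
open Polynomial IntermediateField

noncomputable section

namespace Stmt2Aux
variable {K : Type*} [Field K]

lemma phi_inj : Function.Injective (algebraMap K[X] (RatFunc K)) :=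
  IsFractionRing.injective _ _

lemma aeval_phi (f p : K[X]) :
    aeval (algebraMap K[X] (RatFunc K) f) p = algebraMap K[X] (RatFunc K) (p.comp f) := by
  rw [show algebraMap K[X] (RatFunc K) f = (IsScalarTower.toAlgHom K K[X] (RatFunc K)) f from rfl,
    aeval_algHom_apply]
  simp [aeval_def, Polynomial.comp]

lemma comp_mem (f p : K[X]) :
    algebraMap K[X] (RatFunc K) (p.comp f) ∈ K⟮algebraMap K[X] (RatFunc K) f⟯ := by
  rw [mem_adjoin_simple_iff]
  exact ⟨p, 1, by simp [aeval_phi]⟩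

lemma comp_ne_zero {f p : K[X]} (hf : f.natDegree ≠ 0) (hp : p ≠ 0) : p.comp f ≠ 0 := by
  intro h
  have hl := leadingCoeff_comp (p := p) (q := f) hf
  rw [h, leadingCoeff_zero] at hl
  have h1 : p.leadingCoeff ≠ 0 := leadingCoeff_ne_zero.mpr hp
  have h2 : f.leadingCoeff ≠ 0 := leadingCoeff_ne_zero.mpr (fun h0 => hf (by simp [h0]))
  exact (mul_ne_zero h1 (pow_ne_zero _ h2)) hl.symm

/-- Representation: every element of `K(f)` is a ratio of composites with coprime parts. -/
lemma rep (f : K[X]) (hf : f.natDegree ≠ 0) {r : RatFunc K}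
    (hr : r ∈ K⟮algebraMap K[X] (RatFunc K) f⟯) :
    ∃ A B : K[X], IsCoprime A B ∧ B ≠ 0 ∧
      r * algebraMap K[X] (RatFunc K) (B.comp f) = algebraMap K[X] (RatFunc K) (A.comp f) := by
  rw [mem_adjoin_simple_iff] at hr
  obtain ⟨p, q, hr⟩ := hr
  rw [aeval_phi, aeval_phi] at hr
  by_cases hq : q = 0
  · refine ⟨0, 1, isCoprime_zero_left.mpr isUnit_one, one_ne_zero, ?_⟩
    rw [hr, hq]
    simp
  · -- reduce the fraction
    classical
    set d := EuclideanDomain.gcd p q with hd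
    have hd0 : d ≠ 0 := fun h => hq (EuclideanDomain.gcd_eq_zero_iff.mp h).2
    set A := p / d with hA
    set B := q / d with hB
    have hpd : p = d * A := (EuclideanDomain.mul_div_cancel' hd0 (EuclideanDomain.gcd_dvd_left p q)).symm
    have hqd : q = d * B := (EuclideanDomain.mul_div_cancel' hd0 (EuclideanDomain.gcd_dvd_right p q)).symm
    have hcop : IsCoprime A B := by
      refine ⟨EuclideanDomain.gcdA p q, EuclideanDomain.gcdB p q, ?_⟩
      apply mul_left_cancel₀ hd0
      rw [mul_one]
      calc d * (EuclideanDomain.gcdA p q * A + EuclideanDomain.gcdB p q * B)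
          = p * EuclideanDomain.gcdA p q + q * EuclideanDomain.gcdB p q := by
            rw [hpd, hqd]; ring
        _ = d := (EuclideanDomain.gcd_eq_gcd_ab p q).symm
    have hB0 : B ≠ 0 := fun h => hq (by rw [hqd, h, mul_zero])
    refine ⟨A, B, hcop, hB0, ?_⟩
    have hBf : (B.comp f) ≠ 0 := comp_ne_zero hf hB0
    have hdf : (d.comp f) ≠ 0 := comp_ne_zero hf hd0
    have hBf' : algebraMap K[X] (RatFunc K) (B.comp f) ≠ 0 :=
      fun h => hBf (phi_inj (by simpa using h))
    have hdf' : algebraMap K[X] (RatFunc K) (d.comp f) ≠ 0 :=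
      fun h => hdf (phi_inj (by simpa using h))
    rw [hpd, hqd, mul_comp, mul_comp, map_mul, map_mul] at hr
    rw [hr]
    field_simp

variable {K : Type*} [Field K]

lemma isCoprime_comp {A B f : K[X]} (h : IsCoprime A B) :
    IsCoprime (A.comp f) (B.comp f) := by
  obtain ⟨u, v, huv⟩ := h
  exact ⟨u.comp f, v.comp f, by rw [← mul_comp, ← mul_comp, ← add_comp, huv, one_comp]⟩

lemma phi_C (k : K) : algebraMap K[X] (RatFunc K) (C k) = algebraMap K (RatFunc K) k := by
  rw [IsScalarTower.algebraMap_apply K K[X] (RatFunc K)]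
  rfl

/-- A polynomial lying in `K(f)` is a polynomial in `f`. -/
lemma comp_of_poly_mem (f : K[X]) (hf : f.natDegree ≠ 0) {p : K[X]}
    (hp : algebraMap K[X] (RatFunc K) p ∈ K⟮algebraMap K[X] (RatFunc K) f⟯) :
    ∃ G : K[X], G.comp f = p := by
  obtain ⟨A, B, hcop, hB0, heq⟩ := rep f hf hp
  have h1 : p * B.comp f = A.comp f := by
    apply phi_inj; rw [map_mul]; exact heq
  have hdvdA : B.comp f ∣ A.comp f := ⟨p, by rw [← h1]; ring⟩
  obtain ⟨u, v, huv⟩ := isCoprime_comp (f := f) hcop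
  have hdvd1 : B.comp f ∣ 1 := by
    rw [← huv]
    exact dvd_add (Dvd.dvd.mul_left hdvdA u) (Dvd.dvd.mul_left dvd_rfl v)
  obtain ⟨e, he, hCe⟩ := Polynomial.isUnit_iff.mp (isUnit_of_dvd_one hdvd1)
  have he0 : e ≠ 0 := he.ne_zero
  refine ⟨C e⁻¹ * A, ?_⟩
  rw [mul_comp, C_comp, ← h1, ← hCe]
  rw [← mul_assoc]
  rw [mul_comm (C e⁻¹) p, mul_assoc, ← C_mul, inv_mul_cancel₀ he0, C_1, mul_one]

/-- Two nonconstant polynomials whose rational-function fields share a nonconstant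
element have a common composite. -/
lemma exists_common_comp (f₁ f₂ : K[X]) (hf₁ : f₁.natDegree ≠ 0) (hf₂ : f₂.natDegree ≠ 0)
    {r : RatFunc K} (hr₁ : r ∈ K⟮algebraMap K[X] (RatFunc K) f₁⟯)
    (hr₂ : r ∈ K⟮algebraMap K[X] (RatFunc K) f₂⟯)
    (hrK : r ∉ (⊥ : IntermediateField K (RatFunc K))) :
    ∃ g₁ g₂ : K[X], g₁.natDegree ≠ 0 ∧ g₂.natDegree ≠ 0 ∧ g₁.comp f₁ = g₂.comp f₂ := by
  obtain ⟨A, B, hAB, hB0, h1⟩ := rep f₁ hf₁ hr₁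
  obtain ⟨Cq, D, hCD, hD0, h2⟩ := rep f₂ hf₂ hr₂
  have hb0 : B.comp f₁ ≠ 0 := comp_ne_zero hf₁ hB0
  have hd0 : D.comp f₂ ≠ 0 := comp_ne_zero hf₂ hD0
  have hb0' : algebraMap K[X] (RatFunc K) (B.comp f₁) ≠ 0 := by
    simpa using fun hh => hb0 (phi_inj (by simpa using hh))
  have hcross : A.comp f₁ * D.comp f₂ = Cq.comp f₂ * B.comp f₁ := by
    apply phi_inj
    rw [map_mul, map_mul, ← h1, ← h2]; ring
  have hbd : B.comp f₁ ∣ D.comp f₂ := by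
    refine (isCoprime_comp hAB).symm.dvd_of_dvd_mul_left ?_
    exact ⟨Cq.comp f₂, by rw [hcross]; ring⟩
  have hdb : D.comp f₂ ∣ B.comp f₁ := by
    refine (isCoprime_comp hCD).symm.dvd_of_dvd_mul_left ?_
    exact ⟨A.comp f₁, by rw [← hcross]; ring⟩
  obtain ⟨w, hw⟩ := associated_of_dvd_dvd hbd hdb
  obtain ⟨e, he, hCe⟩ := Polynomial.isUnit_iff.mp w.isUnit
  have he0 : e ≠ 0 := he.ne_zero
  have hw' : D.comp f₂ = B.comp f₁ * C e := by rw [← hw, hCe]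
  by_cases hBdeg : B.natDegree ≠ 0
  · refine ⟨B, C e⁻¹ * D, hBdeg, ?_, ?_⟩
    · intro hg2
      have : ((C e⁻¹ * D).comp f₂).natDegree = 0 := by
        rw [natDegree_comp, hg2, zero_mul]
      rw [mul_comp, C_comp, hw'] at this
      rw [show C e⁻¹ * (B.comp f₁ * C e) = B.comp f₁ by
        rw [mul_comm (B.comp f₁), ← mul_assoc, ← C_mul, inv_mul_cancel₀ he0, C_1, one_mul]] at this
      rw [natDegree_comp] at this
      exact hBdeg (by
        rcases Nat.mul_eq_zero.mp this with h | h
        · exact h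
        · exact absurd h hf₁)
    · rw [mul_comp, C_comp, hw', mul_comm (C e⁻¹), mul_assoc, ← C_mul,
        mul_inv_cancel₀ he0, C_1, mul_one]
  · push_neg at hBdeg
    -- B is a nonzero constant; then A must be nonconstant (else r ∈ K)
    obtain ⟨β, hβ⟩ : ∃ β, C β = B := Polynomial.natDegree_eq_zero.mp hBdeg
    have hβ0 : β ≠ 0 := fun hh => hB0 (by rw [← hβ, hh, C_0])
    have hAdeg : A.natDegree ≠ 0 := by
      intro hA
      obtain ⟨α, hα⟩ : ∃ α, C α = A := Polynomial.natDegree_eq_zero.mp hA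
      apply hrK
      rw [mem_bot]
      refine ⟨α * β⁻¹, ?_⟩
      have : r = algebraMap K[X] (RatFunc K) (A.comp f₁) /
          algebraMap K[X] (RatFunc K) (B.comp f₁) := by
        field_simp [← h1]
        exact h1
      rw [this, ← hα, ← hβ, C_comp, C_comp, phi_C, phi_C, map_mul, map_inv₀, div_eq_mul_inv]
    -- from hcross : A∘f₁ * D∘f₂ = Cq∘f₂ * B∘f₁ and D∘f₂ = B∘f₁ * C e
    have hc : Cq.comp f₂ = A.comp f₁ * C e := by
      have hBf : B.comp f₁ ≠ 0 := hb0
      apply mul_right_cancel₀ hBf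
      calc Cq.comp f₂ * B.comp f₁ = A.comp f₁ * D.comp f₂ := hcross.symm
        _ = A.comp f₁ * C e * B.comp f₁ := by rw [hw']; ring
    refine ⟨A * C e, Cq, ?_, ?_, ?_⟩
    · intro hh
      rw [natDegree_mul (fun h0 => hAdeg (by rw [h0]; simp)) (fun h0 => he0 (by
        simpa using (C_eq_zero.mp h0))), natDegree_C, add_zero] at hh
      exact hAdeg hh
    · intro hq
      have h0 : ((Cq.comp f₂)).natDegree = 0 := by rw [natDegree_comp, hq, zero_mul]
      rw [hc, natDegree_mul (comp_ne_zero hf₁ (fun h0 => hAdeg (by rw [h0]; simp)))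
        (fun h0 => he0 (C_eq_zero.mp h0)), natDegree_C, add_zero, natDegree_comp] at h0
      rcases Nat.mul_eq_zero.mp h0 with h | h
      · exact hAdeg h
      · exact hf₁ h
    · rw [mul_comp, C_comp, hc]


/-- The swap of the two variables of `K[X][Y]`. -/
noncomputable def sw : Polynomial (Polynomial K) →+* Polynomial (Polynomial K) :=
  eval₂RingHom
    (eval₂RingHom ((C : K[X] →+* Polynomial (Polynomial K)).comp (C : K →+* K[X]))
      (X : Polynomial (Polynomial K)))
    (C (X : K[X]))

lemma sw_X : sw (X : Polynomial (Polynomial K)) = C X := by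
  simp [sw]

lemma sw_CC (k : K) : sw (C (C k)) = C (C k) := by
  simp [sw]

lemma sw_C (p : K[X]) : sw (C p) = p.map C := by
  have : (sw : Polynomial (Polynomial K) →+* _).comp (C : K[X] →+* _)
      = mapRingHom (C : K →+* K[X]) := by
    apply Polynomial.ringHom_ext
    · intro a
      simp [sw]
    · simp [sw]
  calc sw (C p) = ((sw : Polynomial (Polynomial K) →+* _).comp (C : K[X] →+* _)) p := rfl
    _ = mapRingHom (C : K →+* K[X]) p := by rw [this]
    _ = p.map C := rfl

lemma sw_map_C (p : K[X]) : sw (p.map C) = C p := by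
  have : (sw : Polynomial (Polynomial K) →+* _).comp (mapRingHom (C : K →+* K[X]))
      = (C : K[X] →+* Polynomial (Polynomial K)) := by
    apply Polynomial.ringHom_ext
    · intro a
      simp only [RingHom.comp_apply, coe_mapRingHom, map_C]
      exact sw_CC a
    · simp only [RingHom.comp_apply, coe_mapRingHom, map_X]
      rw [sw_X]
  calc sw (p.map C) = ((sw : Polynomial (Polynomial K) →+* _).comp
        (mapRingHom (C : K →+* K[X]))) p := rfl
    _ = C p := by rw [this]

lemma sw_sw (P : Polynomial (Polynomial K)) : sw (sw P) = P := by
  have : (sw : Polynomial (Polynomial K) →+* _).comp sw = RingHom.id _ := by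
    apply Polynomial.ringHom_ext
    · intro a
      simp only [RingHom.comp_apply, RingHom.id_apply]
      rw [sw_C, sw_map_C]
    · simp only [RingHom.comp_apply, RingHom.id_apply]
      rw [sw_X, sw_C, map_X]
  calc sw (sw P) = ((sw : Polynomial (Polynomial K) →+* _).comp sw) P := rfl
    _ = P := by rw [this]; rfl

lemma sw_ne_zero {P : Polynomial (Polynomial K)} (h : P ≠ 0) : sw P ≠ 0 := by
  intro h0
  apply h
  rw [← sw_sw P, h0, map_zero]

lemma coeff_sw (P : Polynomial (Polynomial K)) (i j : ℕ) :
    ((sw P).coeff j).coeff i = ((P.coeff i).coeff j) := by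
  induction P using Polynomial.induction_on' with
  | add p q hp hq => simp [hp, hq]
  | monomial n p =>
      rw [show (monomial n p : Polynomial (Polynomial K)) = C p * X ^ n by
        rw [C_mul_X_pow_eq_monomial]]
      rw [map_mul, map_pow, sw_C, sw_X, ← map_pow, coeff_mul_C, coeff_map,
        coeff_mul_X_pow', coeff_mul_X_pow']
      split_ifs with hni
      · simp only [coeff_C]
        split_ifs <;> simp
      · simp


lemma natDegree_sw_le {P : Polynomial (Polynomial K)} {D : ℕ}
    (h : ∀ i, (P.coeff i).natDegree ≤ D) : (sw P).natDegree ≤ D := by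
  rw [natDegree_le_iff_coeff_eq_zero]
  intro N hN
  ext i
  rw [coeff_sw, coeff_zero]
  exact coeff_eq_zero_of_natDegree_lt (lt_of_le_of_lt (h i) hN)

lemma le_natDegree_sw {P : Polynomial (Polynomial K)} {i : ℕ} (h : P.coeff i ≠ 0) :
    (P.coeff i).natDegree ≤ (sw P).natDegree := by
  apply le_natDegree_of_ne_zero
  intro h0
  apply h
  have := coeff_sw P i ((P.coeff i).natDegree)
  rw [h0, coeff_zero] at this
  exact leadingCoeff_eq_zero.mp this.symm

/-- The key degree computation: if `M` is monic in `T`, its coefficient of largest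
`X`-degree is `A` with `deg A ≥ 1`, and `M` divides `A(T) - A(X)`, then
`deg_T M = deg A`. -/
lemma key_deg {M : Polynomial (Polynomial K)} {A : K[X]} (hM : M.Monic)
    {i₀ : ℕ} (hA : M.coeff i₀ = A)
    (hmax : ∀ i, (M.coeff i).natDegree ≤ A.natDegree)
    (hd : A.natDegree ≠ 0)
    (hdvd : M ∣ (A.map C - C A)) : M.natDegree = A.natDegree := by
  set d := A.natDegree with hdd
  set F : Polynomial (Polynomial K) := A.map C - C A with hF
  have hA0 : A ≠ 0 := fun h => hd (by rw [hdd, h, natDegree_zero])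
  have hFd : F.coeff d = C (A.coeff d) := by
    rw [hF, coeff_sub, coeff_map, coeff_C, if_neg (fun h : d = 0 => hd h), sub_zero]
  have hAtop : A.coeff d ≠ 0 := by
    rw [hdd, ← leadingCoeff]
    exact leadingCoeff_ne_zero.mpr hA0
  have hFd0 : F.coeff d ≠ 0 := by
    rw [hFd]
    exact fun h => hAtop (C_injective (by simpa using h))
  have hF0 : F ≠ 0 := fun h => hFd0 (by rw [h, coeff_zero])
  have hFdeg : F.natDegree = d := by
    apply le_antisymm
    · refine le_trans (natDegree_sub_le _ _) ?_
      rw [natDegree_C]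
      exact max_le natDegree_map_le (Nat.zero_le _)
    · exact le_natDegree_of_ne_zero hFd0
  have hswF : sw F = -F := by
    rw [hF, map_sub, sw_map_C, sw_C, neg_sub]
  obtain ⟨G, hG⟩ := hdvd
  have hM0 : M ≠ 0 := hM.ne_zero
  have hG0 : G ≠ 0 := by
    intro h
    rw [h, mul_zero] at hG
    exact hF0 hG
  have hswM : (sw M).natDegree = d := by
    apply le_antisymm (natDegree_sw_le hmax)
    have h1 : M.coeff i₀ ≠ 0 := by rw [hA]; exact hA0
    have := le_natDegree_sw h1
    rwa [hA] at this
  have heq : -F = sw M * sw G := by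
    rw [← hswF, hG, map_mul]
  have hdeq : d = (sw M).natDegree + (sw G).natDegree := by
    have h1 : (-F).natDegree = d := by rw [natDegree_neg, hFdeg]
    rw [← h1, heq, natDegree_mul (sw_ne_zero hM0) (sw_ne_zero hG0)]
  have hswG0 : (sw G).natDegree = 0 := by omega
  set g' := (sw G).coeff 0 with hg'
  have hswG : sw G = C g' := (eq_C_of_natDegree_eq_zero hswG0)
  have hcoeffd : -(C (A.coeff d)) = (sw M).coeff d * g' := by
    have := congrArg (fun P => Polynomial.coeff P d) heq
    rw [coeff_neg, hFd, hswG, coeff_mul_C] at this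
    exact this
  have hdvdg : g' ∣ C (A.coeff d) := by
    refine ⟨-((sw M).coeff d), ?_⟩
    rw [← neg_eq_iff_eq_neg.mpr hcoeffd.symm]
    ring
  have hug : IsUnit g' := isUnit_of_dvd_unit hdvdg (isUnit_C.mpr hAtop.isUnit)
  obtain ⟨γ, hγu, hγ⟩ := Polynomial.isUnit_iff.mp hug
  have hGC : G = C (C γ) := by
    rw [← sw_sw G, hswG, ← hγ, sw_C, map_C]
  have hγ0 : (C (C γ) : Polynomial (Polynomial K)) ≠ 0 := by
    simp only [ne_eq, C_eq_zero]
    exact hγu.ne_zero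
  rw [hGC] at hG
  have := congrArg Polynomial.natDegree hG
  rw [hFdeg, natDegree_mul hM0 hγ0, natDegree_C, add_zero] at this
  exact this.symm



lemma adjoin_X_top :
    IntermediateField.adjoin K {algebraMap K[X] (RatFunc K) X} = ⊤ := by
  rw [eq_top_iff]
  intro r _
  refine RatFunc.induction_on r ?_
  intro p q hq
  rw [mem_adjoin_simple_iff]
  exact ⟨p, q, by rw [aeval_phi, aeval_phi, comp_X, comp_X]⟩

lemma trans_x : Transcendental K (algebraMap K[X] (RatFunc K) X) :=
  (transcendental_algebraMap_iff phi_inj).mpr (Polynomial.transcendental_X K)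

variable (E : IntermediateField K (RatFunc K))

lemma aeval_ann {w : K[X]} (hwE : algebraMap K[X] (RatFunc K) w ∈ E) :
    aeval (algebraMap K[X] (RatFunc K) X)
      (w.map (algebraMap K E) - C (⟨algebraMap K[X] (RatFunc K) w, hwE⟩ : E)) = 0 := by
  rw [map_sub, aeval_map_algebraMap, aeval_C, aeval_phi, comp_X]
  have : (algebraMap E (RatFunc K)) (⟨algebraMap K[X] (RatFunc K) w, hwE⟩ : E)
      = algebraMap K[X] (RatFunc K) w := rfl
  rw [this, sub_self]

lemma ann_natDegree {w : K[X]} (hw : w.natDegree ≠ 0) (e : E) :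
    (w.map (algebraMap K E) - C e).natDegree = w.natDegree ∧
      (w.map (algebraMap K E) - C e) ≠ 0 := by
  have hinj : Function.Injective (algebraMap K E) := (algebraMap K E).injective
  have hcoeff : (w.map (algebraMap K E) - C e).coeff w.natDegree
      = algebraMap K E w.leadingCoeff := by
    rw [coeff_sub, coeff_map, coeff_C, if_neg hw, sub_zero]; rfl
  have hw0 : w ≠ 0 := fun h => hw (by rw [h, natDegree_zero])
  have hc0 : (w.map (algebraMap K E) - C e).coeff w.natDegree ≠ 0 := by
    rw [hcoeff]
    simpa using fun h => (leadingCoeff_ne_zero.mpr hw0) (hinj (by simpa using h))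
  constructor
  · apply le_antisymm
    · refine le_trans (natDegree_sub_le _ _) ?_
      rw [natDegree_C]
      exact max_le (natDegree_map_le) (Nat.zero_le _)
    · exact le_natDegree_of_ne_zero hc0
  · exact fun h => hc0 (by rw [h, coeff_zero])

lemma isIntegral_x {w : K[X]} (hwE : algebraMap K[X] (RatFunc K) w ∈ E)
    (hw : w.natDegree ≠ 0) : IsIntegral E (algebraMap K[X] (RatFunc K) X) :=
  isAlgebraic_iff_isIntegral.mp ⟨_, (ann_natDegree E hw _).2, aeval_ann E hwE⟩

lemma adjoin_x_top_E : adjoin E {algebraMap K[X] (RatFunc K) X} = ⊤ :=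
  adjoin_eq_top_of_adjoin_eq_top K adjoin_X_top

lemma finiteDimensional_E {w : K[X]} (hwE : algebraMap K[X] (RatFunc K) w ∈ E)
    (hw : w.natDegree ≠ 0) : FiniteDimensional E (RatFunc K) := by
  have h1 : FiniteDimensional E E⟮algebraMap K[X] (RatFunc K) X⟯ :=
    adjoin.finiteDimensional (isIntegral_x E hwE hw)
  rw [adjoin_x_top_E] at h1
  exact Module.Finite.equiv (topEquiv (F := E) (E := RatFunc K)).toLinearEquiv

lemma finrank_eq_minpoly {w : K[X]} (hwE : algebraMap K[X] (RatFunc K) w ∈ E)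
    (hw : w.natDegree ≠ 0) :
    Module.finrank E (RatFunc K)
      = (minpoly E (algebraMap K[X] (RatFunc K) X)).natDegree := by
  have h := adjoin.finrank (isIntegral_x E hwE hw)
  rw [adjoin_x_top_E] at h
  rwa [finrank_top'] at h

lemma finrank_le_deg {w : K[X]} (hwE : algebraMap K[X] (RatFunc K) w ∈ E)
    (hw : w.natDegree ≠ 0) : Module.finrank E (RatFunc K) ≤ w.natDegree := by
  rw [finrank_eq_minpoly E hwE hw]
  set P : E[X] := w.map (algebraMap K E) - C (⟨algebraMap K[X] (RatFunc K) w, hwE⟩ : E) with hP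
  obtain ⟨hPdeg, hP0⟩ := ann_natDegree E hw (⟨algebraMap K[X] (RatFunc K) w, hwE⟩ : E)
  have hmon : (P * C P.leadingCoeff⁻¹).Monic := monic_mul_leadingCoeff_inv hP0
  have haev : aeval (algebraMap K[X] (RatFunc K) X) (P * C P.leadingCoeff⁻¹) = 0 := by
    rw [map_mul, aeval_ann E hwE, zero_mul]
  have hdeg := minpoly.min E (algebraMap K[X] (RatFunc K) X) hmon haev
  have h2 : (P * C P.leadingCoeff⁻¹).natDegree = w.natDegree := by
    rw [natDegree_mul_C, hPdeg]
    exact inv_ne_zero (leadingCoeff_ne_zero.mpr hP0)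
  calc (minpoly E (algebraMap K[X] (RatFunc K) X)).natDegree
      ≤ (P * C P.leadingCoeff⁻¹).natDegree := natDegree_le_natDegree hdeg
    _ = w.natDegree := h2



lemma algC_eq : (algebraMap K[X] (RatFunc K)).comp (C : K →+* K[X]) = algebraMap K (RatFunc K) := by
  rw [← Polynomial.algebraMap_eq (R := K)]
  exact (IsScalarTower.algebraMap_eq K K[X] (RatFunc K)).symm ▸ rfl

lemma algL_eq (L : IntermediateField K (RatFunc K)) :
    (algebraMap L (RatFunc K)).comp (algebraMap K L) = algebraMap K (RatFunc K) :=
  (IsScalarTower.algebraMap_eq K L (RatFunc K)).symm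

/-- The mapped minimal polynomial divides the mapped annihilator `A(T) - A(X)`. -/
lemma mbar_dvd (L : IntermediateField K (RatFunc K)) {A : K[X]}
    (hAL : algebraMap K[X] (RatFunc K) A ∈ L) :
    (minpoly L (algebraMap K[X] (RatFunc K) X)).map (algebraMap L (RatFunc K))
      ∣ (A.map C - C A).map (algebraMap K[X] (RatFunc K)) := by
  have h1 : minpoly L (algebraMap K[X] (RatFunc K) X)
      ∣ (A.map (algebraMap K L) - C (⟨algebraMap K[X] (RatFunc K) A, hAL⟩ : L)) :=
    minpoly.dvd _ _ (aeval_ann L hAL)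
  have h2 := Polynomial.map_dvd (algebraMap L (RatFunc K)) h1
  have h3 : (A.map (algebraMap K L) - C (⟨algebraMap K[X] (RatFunc K) A, hAL⟩ : L)).map
        (algebraMap L (RatFunc K))
      = (A.map C - C A).map (algebraMap K[X] (RatFunc K)) := by
    rw [Polynomial.map_sub, Polynomial.map_sub, map_C, map_C, Polynomial.map_map,
      Polynomial.map_map, algL_eq, algC_eq]
    rfl
  rwa [h3] at h2

lemma FF_facts {A : K[X]} (hA : A.natDegree ≠ 0) :
    (A.map C - C A).natDegree = A.natDegree ∧
      (A.map C - C A).leadingCoeff = C A.leadingCoeff ∧ (A.map C - C A) ≠ 0 := by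
  have hA0 : A ≠ 0 := fun h => hA (by rw [h, natDegree_zero])
  have hcoeff : (A.map C - C A).coeff A.natDegree = C A.leadingCoeff := by
    rw [coeff_sub, coeff_map, coeff_C, if_neg hA, sub_zero]; rfl
  have hc0 : (A.map C - C A).coeff A.natDegree ≠ 0 := by
    rw [hcoeff]
    simpa using leadingCoeff_ne_zero.mpr hA0
  have hdeg : (A.map C - C A).natDegree = A.natDegree := by
    apply le_antisymm
    · refine le_trans (natDegree_sub_le _ _) ?_
      rw [natDegree_C]
      exact max_le natDegree_map_le (Nat.zero_le _)
    · exact le_natDegree_of_ne_zero hc0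
  exact ⟨hdeg, by rw [leadingCoeff, hdeg, hcoeff], fun h => hc0 (by rw [h, coeff_zero])⟩

/-- Gauss-lemma step: the minimal polynomial of `X` over `L` has (images of)
polynomial coefficients. -/
lemma exists_M (L : IntermediateField K (RatFunc K)) {w : K[X]}
    (hwL : algebraMap K[X] (RatFunc K) w ∈ L) (hw : w.natDegree ≠ 0) :
    ∃ M : Polynomial (Polynomial K), M.Monic ∧
      M.map (algebraMap K[X] (RatFunc K))
        = (minpoly L (algebraMap K[X] (RatFunc K) X)).map (algebraMap L (RatFunc K)) := by
  have hw0 : w ≠ 0 := fun h => hw (by rw [h, natDegree_zero])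
  obtain ⟨hFdeg, hFlead, hF0⟩ := FF_facts hw
  set Φ : Polynomial (Polynomial K) := (w.map C - C w) * C (C w.leadingCoeff⁻¹) with hΦ
  have hΦmonic : Φ.Monic := by
    have : Φ.leadingCoeff = 1 := by
      rw [hΦ, leadingCoeff_mul, hFlead, leadingCoeff_C, ← C_mul,
        mul_inv_cancel₀ (leadingCoeff_ne_zero.mpr hw0), C_1]
    exact this
  have hmonicbar : ((minpoly L (algebraMap K[X] (RatFunc K) X)).map
      (algebraMap L (RatFunc K))).Monic :=
    (minpoly.monic (isIntegral_x L hwL hw)).map _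
  have hdvd : (minpoly L (algebraMap K[X] (RatFunc K) X)).map (algebraMap L (RatFunc K))
      ∣ Φ.map (algebraMap K[X] (RatFunc K)) := by
    rw [hΦ, Polynomial.map_mul]
    exact dvd_mul_of_dvd_left (mbar_dvd L hwL) _
  obtain ⟨M, hM⟩ := IsIntegrallyClosed.eq_map_mul_C_of_dvd (RatFunc K) hΦmonic hdvd
  rw [hmonicbar.leadingCoeff, C_1, mul_one] at hM
  refine ⟨M, ?_, hM⟩
  exact monic_of_injective phi_inj (by rw [hM]; exact hmonicbar)

/-- Transfer divisibility along the injective coefficient map. -/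
lemma M_dvd (L : IntermediateField K (RatFunc K)) {M : Polynomial (Polynomial K)}
    (hMmonic : M.Monic)
    (hMmap : M.map (algebraMap K[X] (RatFunc K))
      = (minpoly L (algebraMap K[X] (RatFunc K) X)).map (algebraMap L (RatFunc K)))
    {A : K[X]} (hAL : algebraMap K[X] (RatFunc K) A ∈ L) :
    M ∣ (A.map C - C A) := by
  have h1 : (A.map C - C A).map (algebraMap K[X] (RatFunc K))
      %ₘ M.map (algebraMap K[X] (RatFunc K)) = 0 := by
    rw [modByMonic_eq_zero_iff_dvd (hMmonic.map _), hMmap]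
    exact mbar_dvd L hAL
  have h2 : ((A.map C - C A) %ₘ M).map (algebraMap K[X] (RatFunc K)) = 0 := by
    rw [map_modByMonic _ hMmonic, h1]
  have h3 : (A.map C - C A) %ₘ M = 0 :=
    Polynomial.map_injective _ phi_inj (by rw [h2, Polynomial.map_zero])
  exact (modByMonic_eq_zero_iff_dvd hMmonic).mp h3

end Stmt2Aux

end

open Stmt2Aux

theorem stmt_2 (K : Type*) [Field K] (f₁ f₂ : K[X])
    (hf₁ : f₁.natDegree ≠ 0) (hf₂ : f₂.natDegree ≠ 0)
    (hbig : K⟮algebraMap K[X] (RatFunc K) f₁⟯ ⊓ K⟮algebraMap K[X] (RatFunc K) f₂⟯ ≠ ⊥) :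
    (∃ g₁ g₂ : K[X], g₁.natDegree ≠ 0 ∧ g₂.natDegree ≠ 0 ∧ g₁.comp f₁ = g₂.comp f₂) ∧
    ∀ h : K[X],
      ((∃ g₁ g₂ : K[X], g₁.natDegree ≠ 0 ∧ g₂.natDegree ≠ 0 ∧
          g₁.comp f₁ = h ∧ g₂.comp f₂ = h) ∧
        (∀ h' : K[X], (∃ g₁ g₂ : K[X], g₁.natDegree ≠ 0 ∧ g₂.natDegree ≠ 0 ∧
          g₁.comp f₁ = h' ∧ g₂.comp f₂ = h') → h.natDegree ≤ h'.natDegree)) →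
      (K⟮algebraMap K[X] (RatFunc K) f₁⟯ ⊓ K⟮algebraMap K[X] (RatFunc K) f₂⟯
          = K⟮algebraMap K[X] (RatFunc K) h⟯ ∧
       Algebra.adjoin K {f₁} ⊓ Algebra.adjoin K {f₂} = Algebra.adjoin K {h}) := by
  classical
  have hlt : (⊥ : IntermediateField K (RatFunc K))
      < K⟮algebraMap K[X] (RatFunc K) f₁⟯ ⊓ K⟮algebraMap K[X] (RatFunc K) f₂⟯ :=
    Ne.bot_lt hbig
  obtain ⟨r, hrL, hrB⟩ := SetLike.exists_of_lt hlt
  have hr1 : r ∈ K⟮algebraMap K[X] (RatFunc K) f₁⟯ := (IntermediateField.mem_inf.mp hrL).1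
  have hr2 : r ∈ K⟮algebraMap K[X] (RatFunc K) f₂⟯ := (IntermediateField.mem_inf.mp hrL).2
  obtain ⟨g₁, g₂, hg₁, hg₂, hgc⟩ := exists_common_comp f₁ f₂ hf₁ hf₂ hr1 hr2 hrB
  refine ⟨⟨g₁, g₂, hg₁, hg₂, hgc⟩, ?_⟩
  rintro h ⟨⟨gh₁, gh₂, hgh₁, hgh₂, hhc₁, hhc₂⟩, hmin⟩
  set L := K⟮algebraMap K[X] (RatFunc K) f₁⟯ ⊓ K⟮algebraMap K[X] (RatFunc K) f₂⟯ with hLdef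
  have hw : (g₁.comp f₁).natDegree ≠ 0 := by
    rw [natDegree_comp]; exact Nat.mul_ne_zero hg₁ hf₁
  have hwL : algebraMap K[X] (RatFunc K) (g₁.comp f₁) ∈ L := by
    rw [hLdef, IntermediateField.mem_inf]
    exact ⟨comp_mem f₁ g₁, by rw [hgc]; exact comp_mem f₂ g₂⟩
  haveI hFD : FiniteDimensional L (RatFunc K) := finiteDimensional_E L hwL hw
  obtain ⟨M, hMmonic, hMmap⟩ := exists_M L hwL hw
  obtain ⟨i₀, -, hi₀max⟩ := Finset.exists_max_image (Finset.range (M.natDegree + 1))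
      (fun i => (M.coeff i).natDegree) ⟨0, by simp⟩
  set A := M.coeff i₀ with hAdef
  have hmax : ∀ i, (M.coeff i).natDegree ≤ A.natDegree := by
    intro i
    by_cases hi : i ∈ Finset.range (M.natDegree + 1)
    · exact hi₀max i hi
    · have hlt : M.natDegree < i := by
        simpa [Finset.mem_range, Nat.lt_succ_iff] using hi
      rw [coeff_eq_zero_of_natDegree_lt hlt, natDegree_zero]
      exact Nat.zero_le _
  have hphiA : algebraMap K[X] (RatFunc K) A ∈ L := by
    have h1 : algebraMap K[X] (RatFunc K) A
        = (M.map (algebraMap K[X] (RatFunc K))).coeff i₀ := by rw [coeff_map, hAdef]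
    rw [h1, hMmap, coeff_map]
    exact SetLike.coe_mem _
  have hdA : A.natDegree ≠ 0 := by
    intro h0
    have hsw0 : (sw M).natDegree = 0 :=
      Nat.le_zero.mp (natDegree_sw_le (fun i => Nat.le_zero.mpr (Nat.le_zero.mp (h0 ▸ hmax i))))
    set q₀ := (sw M).coeff 0 with hq₀def
    have hMq : M = q₀.map C := by
      rw [← sw_sw M, eq_C_of_natDegree_eq_zero hsw0, sw_C]
    have hq0 : q₀ ≠ 0 := by
      intro hq
      apply hMmonic.ne_zero
      rw [hMq, hq, Polynomial.map_zero]
    apply trans_x (K := K)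
    refine ⟨q₀, hq0, ?_⟩
    have e1 : M.map (algebraMap K[X] (RatFunc K)) = q₀.map (algebraMap K (RatFunc K)) := by
      rw [hMq, Polynomial.map_map, algC_eq]
    have e2 : Polynomial.eval (algebraMap K[X] (RatFunc K) X)
        (q₀.map (algebraMap K (RatFunc K))) = 0 := by
      rw [← e1, hMmap, eval_map]
      exact minpoly.aeval _ _
    rwa [eval_map, ← aeval_def] at e2
  have hdvd : M ∣ (A.map C - C A) := M_dvd L hMmonic hMmap hphiA
  have hMdeg : M.natDegree = A.natDegree := key_deg hMmonic hAdef.symm hmax hdA hdvd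
  have hfinL : Module.finrank L (RatFunc K) = A.natDegree := by
    rw [finrank_eq_minpoly L hwL hw, ← hMdeg]
    have e1 := natDegree_map_eq_of_injective (phi_inj (K := K)) M
    rw [hMmap] at e1
    rw [← natDegree_map_eq_of_injective (algebraMap L (RatFunc K)).injective
      (minpoly L (algebraMap K[X] (RatFunc K) X)), e1]
  obtain ⟨G₁, hG₁⟩ := comp_of_poly_mem f₁ hf₁ (IntermediateField.mem_inf.mp hphiA).1
  obtain ⟨G₂, hG₂⟩ := comp_of_poly_mem f₂ hf₂ (IntermediateField.mem_inf.mp hphiA).2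
  have hG₁d : G₁.natDegree ≠ 0 := by
    intro h0; apply hdA; rw [← hG₁, natDegree_comp, h0, zero_mul]
  have hG₂d : G₂.natDegree ≠ 0 := by
    intro h0; apply hdA; rw [← hG₂, natDegree_comp, h0, zero_mul]
  have hhA : h.natDegree ≤ A.natDegree := hmin A ⟨G₁, G₂, hG₁d, hG₂d, hG₁, hG₂⟩
  have hhd : h.natDegree ≠ 0 := by
    rw [← hhc₁, natDegree_comp]; exact Nat.mul_ne_zero hgh₁ hf₁
  have hhL : algebraMap K[X] (RatFunc K) h ∈ L := by
    rw [hLdef, IntermediateField.mem_inf]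
    exact ⟨by rw [← hhc₁]; exact comp_mem f₁ gh₁, by rw [← hhc₂]; exact comp_mem f₂ gh₂⟩
  have hle : K⟮algebraMap K[X] (RatFunc K) h⟯ ≤ L :=
    IntermediateField.adjoin_simple_le_iff.mpr hhL
  haveI : FiniteDimensional K⟮algebraMap K[X] (RatFunc K) h⟯ (RatFunc K) :=
    finiteDimensional_E _ (IntermediateField.mem_adjoin_simple_self K _) hhd
  have heqLh : K⟮algebraMap K[X] (RatFunc K) h⟯ = L := by
    apply IntermediateField.eq_of_le_of_finrank_le' hle
    calc Module.finrank K⟮algebraMap K[X] (RatFunc K) h⟯ (RatFunc K)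
        ≤ h.natDegree := finrank_le_deg _ (IntermediateField.mem_adjoin_simple_self K _) hhd
      _ ≤ A.natDegree := hhA
      _ = Module.finrank L (RatFunc K) := hfinL.symm
  refine ⟨heqLh.symm, ?_⟩
  apply le_antisymm
  · intro z hz
    obtain ⟨hza1, hza2⟩ := Algebra.mem_inf.mp hz
    rw [Algebra.adjoin_singleton_eq_range_aeval] at hza1 hza2
    obtain ⟨p₁, hp₁⟩ := hza1
    obtain ⟨p₂, hp₂⟩ := hza2
    have hz1 : algebraMap K[X] (RatFunc K) z ∈ K⟮algebraMap K[X] (RatFunc K) f₁⟯ := by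
      rw [← hp₁]
      exact comp_mem f₁ p₁
    have hz2 : algebraMap K[X] (RatFunc K) z ∈ K⟮algebraMap K[X] (RatFunc K) f₂⟯ := by
      rw [← hp₂]
      exact comp_mem f₂ p₂
    have hzL : algebraMap K[X] (RatFunc K) z ∈ K⟮algebraMap K[X] (RatFunc K) h⟯ := by
      rw [heqLh, hLdef]
      exact IntermediateField.mem_inf.mpr ⟨hz1, hz2⟩
    obtain ⟨G, hG⟩ := comp_of_poly_mem h hhd hzL
    rw [Algebra.adjoin_singleton_eq_range_aeval]
    exact ⟨G, hG⟩
  · rw [Algebra.adjoin_le_iff]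
    intro z hz
    rw [Set.mem_singleton_iff.mp hz]
    refine Algebra.mem_inf.mpr ⟨?_, ?_⟩
    · rw [Algebra.adjoin_singleton_eq_range_aeval]
      exact ⟨gh₁, hhc₁⟩
    · rw [Algebra.adjoin_singleton_eq_range_aeval]
      exact ⟨gh₂, hhc₂⟩
end

section
/- Let K be a field and f₁, f₂ ∈ K[x] nonconstant. If h ∈ K̄[x] is a minimal-degree common composite of f₁ and f₂ over the algebraic closure K̄, then there is a degree-one polynomial ℓ ∈ K̄[x] with ℓ ∘ h ∈ K[x]. In particular, if h is monic with zero constant term, then h ∈ K[x]. -/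
open Polynomial

/-- Descent of span membership along a field extension, for polynomials. -/
lemma descent_mem_span {K L : Type*} [Field K] [Field L] [Algebra K L]
    (S : Set K[X]) (v : K[X])
    (hv : v.map (algebraMap K L) ∈ Submodule.span L
      ((fun p : K[X] => p.map (algebraMap K L)) '' S)) :
    v ∈ Submodule.span K S := by
  by_contra hvs
  obtain ⟨φ, hφv, hφS⟩ :=
    (Submodule.span K S).exists_dual_map_eq_bot_of_notMem hvs inferInstance
  set u : ℕ → L := fun k => algebraMap K L (φ (X ^ k)) with hu
  let Φ : L[X] →ₗ[L] L :=
    { toFun := fun q => q.sum fun k c => c * u k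
      map_add' := fun p q => Polynomial.sum_add_index p q _ (by simp) (by intros; ring)
      map_smul' := fun r q => by
        simp only [RingHom.id_apply]
        rw [Polynomial.sum_smul_index _ _ _ (by simp), Polynomial.sum_def,
          Polynomial.sum_def, smul_eq_mul, Finset.mul_sum]
        exact Finset.sum_congr rfl (by intros; ring) }
  have hΦmap : ∀ p : K[X], Φ (p.map (algebraMap K L)) = algebraMap K L (φ p) := by
    intro p
    induction p using Polynomial.induction_on' with
    | add p q hp hq => simp only [Polynomial.map_add, map_add, hp, hq]
    | monomial k a =>
      have h1 : Φ ((monomial k a).map (algebraMap K L)) = algebraMap K L a * u k := by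
        simp only [Φ, Polynomial.map_monomial, LinearMap.coe_mk, AddHom.coe_mk]
        exact Polynomial.sum_monomial_index _ _ (by simp)
      have h2 : φ (monomial k a) = a * φ (X ^ k) := by
        rw [← C_mul_X_pow_eq_monomial, ← smul_eq_C_mul, map_smul, smul_eq_mul]
      rw [h1, h2, map_mul]
  have hker : Submodule.span L ((fun p : K[X] => p.map (algebraMap K L)) '' S) ≤
      LinearMap.ker Φ := by
    rw [Submodule.span_le]
    rintro _ ⟨s, hs, rfl⟩
    have hφs : φ s = 0 := by
      have : φ s ∈ Submodule.map φ (Submodule.span K S) :=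
        ⟨s, Submodule.subset_span hs, rfl⟩
      rw [hφS] at this
      simpa using this
    simp [LinearMap.mem_ker, hΦmap, hφs]
  have hz := hker hv
  rw [LinearMap.mem_ker, hΦmap] at hz
  exact hφv ((map_eq_zero_iff (algebraMap K L) (RingHom.injective _)).mp hz)

theorem stmt_3 (K : Type*) [Field K] (f₁ f₂ : K[X])
    (hf₁ : f₁.natDegree ≠ 0) (hf₂ : f₂.natDegree ≠ 0)
    (h : (AlgebraicClosure K)[X])
    (hcc : ∃ g₁ g₂ : (AlgebraicClosure K)[X], g₁.natDegree ≠ 0 ∧ g₂.natDegree ≠ 0 ∧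
      g₁.comp (f₁.map (algebraMap K (AlgebraicClosure K))) = h ∧
      g₂.comp (f₂.map (algebraMap K (AlgebraicClosure K))) = h)
    (hmin : ∀ h' : (AlgebraicClosure K)[X],
      (∃ g₁ g₂ : (AlgebraicClosure K)[X], g₁.natDegree ≠ 0 ∧ g₂.natDegree ≠ 0 ∧
        g₁.comp (f₁.map (algebraMap K (AlgebraicClosure K))) = h' ∧
        g₂.comp (f₂.map (algebraMap K (AlgebraicClosure K))) = h') →
      h.natDegree ≤ h'.natDegree) :
    (∃ ℓ : (AlgebraicClosure K)[X], ℓ.natDegree = 1 ∧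
      ∃ h₀ : K[X], h₀.map (algebraMap K (AlgebraicClosure K)) = ℓ.comp h) ∧
    (h.Monic → h.coeff 0 = 0 →
      ∃ h₀ : K[X], h₀.map (algebraMap K (AlgebraicClosure K)) = h) := by
  classical
  obtain ⟨g₁, g₂, hg₁, hg₂, hg₁h, hg₂h⟩ := hcc
  set L := AlgebraicClosure K with hL
  set F₁ := f₁.map (algebraMap K L) with hF₁
  set F₂ := f₂.map (algebraMap K L) with hF₂
  set n₁ := g₁.natDegree with hn₁
  set n₂ := g₂.natDegree with hn₂
  have hdF₁ : F₁.natDegree = f₁.natDegree := natDegree_map _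
  have hdF₂ : F₂.natDegree = f₂.natDegree := natDegree_map _
  have hdeg : h.natDegree = n₁ * f₁.natDegree := by
    rw [← hg₁h, natDegree_comp, hdF₁]
  have hn0 : h.natDegree ≠ 0 := by rw [hdeg]; exact mul_ne_zero hg₁ hf₁
  -- the common-value equation over L
  have hcompeq : g₁.comp F₁ = g₂.comp F₂ := by rw [hg₁h, hg₂h]
  -- span membership over L
  set S : Set K[X] := Set.range (fun i : Fin n₁ => f₁ ^ (i : ℕ)) ∪
    Set.range (fun j : Fin (n₂ + 1) => f₂ ^ (j : ℕ)) with hS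
  have hexp₁ : g₁.comp F₁ = ∑ i ∈ Finset.range (n₁ + 1), C (g₁.coeff i) * F₁ ^ i := by
    rw [comp_eq_sum_left]
    exact Polynomial.sum_over_range _ (by simp)
  have hexp₂ : g₂.comp F₂ = ∑ j ∈ Finset.range (n₂ + 1), C (g₂.coeff j) * F₂ ^ j := by
    rw [comp_eq_sum_left]
    exact Polynomial.sum_over_range _ (by simp)
  have hlc₁ : g₁.coeff n₁ ≠ 0 := by
    rw [hn₁, ← leadingCoeff]
    exact leadingCoeff_ne_zero.mpr (fun h0 => hg₁ (by rw [hn₁, h0, natDegree_zero]))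
  have hmem : (f₁ ^ n₁).map (algebraMap K L) ∈ Submodule.span L
      ((fun p : K[X] => p.map (algebraMap K L)) '' S) := by
    have key : (f₁ ^ n₁).map (algebraMap K L) =
        (g₁.coeff n₁)⁻¹ • ((∑ j ∈ Finset.range (n₂ + 1), (g₂.coeff j) •
            ((f₂ ^ j).map (algebraMap K L))) -
          ∑ i ∈ Finset.range n₁, (g₁.coeff i) • ((f₁ ^ i).map (algebraMap K L))) := by
      have e1 : ∀ i : ℕ, (f₁ ^ i).map (algebraMap K L) = F₁ ^ i := by
        intro i; rw [Polynomial.map_pow, hF₁]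
      have e2 : ∀ j : ℕ, (f₂ ^ j).map (algebraMap K L) = F₂ ^ j := by
        intro j; rw [Polynomial.map_pow, hF₂]
      simp only [e1, e2, smul_eq_C_mul]
      have hsum : C (g₁.coeff n₁) * F₁ ^ n₁ =
          (∑ j ∈ Finset.range (n₂ + 1), C (g₂.coeff j) * F₂ ^ j) -
            ∑ i ∈ Finset.range n₁, C (g₁.coeff i) * F₁ ^ i := by
        have := hcompeq
        rw [hexp₁, hexp₂, Finset.sum_range_succ] at this
        rw [← this]; ring
      rw [← hsum, ← mul_assoc, ← C_mul, inv_mul_cancel₀ hlc₁, C_1, one_mul]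
    rw [key]
    refine Submodule.smul_mem _ _ (Submodule.sub_mem _ ?_ ?_)
    · refine Submodule.sum_mem _ (fun j hj => Submodule.smul_mem _ _ ?_)
      refine Submodule.subset_span ⟨f₂ ^ j, Or.inr ⟨⟨j, Finset.mem_range.mp hj⟩, rfl⟩, rfl⟩
    · refine Submodule.sum_mem _ (fun i hi => Submodule.smul_mem _ _ ?_)
      refine Submodule.subset_span ⟨f₁ ^ i, Or.inl ⟨⟨i, Finset.mem_range.mp hi⟩, rfl⟩, rfl⟩
  -- descend to K
  have hKmem : f₁ ^ n₁ ∈ Submodule.span K S := descent_mem_span S _ hmem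
  rw [hS, Submodule.span_union, Submodule.mem_sup] at hKmem
  obtain ⟨p, hp, q, hq, hpq⟩ := hKmem
  obtain ⟨a, ha⟩ := (Submodule.mem_span_range_iff_exists_fun K).mp hp
  obtain ⟨b, hb⟩ := (Submodule.mem_span_range_iff_exists_fun K).mp hq
  set P₁ : K[X] := X ^ n₁ - ∑ i : Fin n₁, C (a i) * X ^ (i : ℕ) with hP₁
  set P₂ : K[X] := ∑ j : Fin (n₂ + 1), C (b j) * X ^ (j : ℕ) with hP₂
  set h₀ : K[X] := P₁.comp f₁ with hh₀
  have hP₁comp : h₀ = q := by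
    rw [hh₀, hP₁, sub_comp, pow_comp, X_comp, sum_comp]
    have : ∑ i : Fin n₁, (C (a i) * X ^ (i : ℕ)).comp f₁ = p := by
      rw [← ha]
      exact Finset.sum_congr rfl fun i _ => by
        rw [mul_comp, C_comp, pow_comp, X_comp, smul_eq_C_mul]
    rw [this, ← hpq]; ring
  have hP₂comp : P₂.comp f₂ = q := by
    rw [hP₂, sum_comp, ← hb]
    exact Finset.sum_congr rfl fun j _ => by
      rw [mul_comp, C_comp, pow_comp, X_comp, smul_eq_C_mul]
  have hP₁deg : P₁.natDegree = n₁ := by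
    have hle : P₁.natDegree ≤ n₁ := by
      refine le_trans (natDegree_sub_le _ _) (max_le (by simp) ?_)
      refine le_trans (natDegree_sum_le _ _) ?_
      refine (Finset.fold_max_le _).mpr ⟨Nat.zero_le _, fun i _ => ?_⟩
      exact le_trans (natDegree_C_mul_le _ _) (by simp [Nat.le_of_lt_succ (Nat.lt_succ_of_lt i.isLt)])
    refine le_antisymm hle (le_natDegree_of_ne_zero ?_)
    have : P₁.coeff n₁ = 1 := by
      rw [hP₁, coeff_sub, coeff_X_pow, if_pos rfl, finset_sum_coeff]
      have : ∀ i : Fin n₁, (C (a i) * X ^ (i : ℕ)).coeff n₁ = 0 := by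
        intro i
        rw [coeff_C_mul, coeff_X_pow, if_neg (Nat.ne_of_lt i.isLt).symm, mul_zero]
      rw [Finset.sum_congr rfl fun i _ => this i]
      simp
    rw [this]; exact one_ne_zero
  have hP₁ne : P₁.natDegree ≠ 0 := by rw [hP₁deg]; exact hg₁
  have hcomp2 : h₀ = P₂.comp f₂ := hP₁comp.trans hP₂comp.symm
  have hh₀deg : h₀.natDegree = h.natDegree := by
    rw [hh₀, natDegree_comp, hP₁deg, hdeg]
  have hP₂ne : P₂.natDegree ≠ 0 := by
    intro h0
    have : h₀.natDegree = 0 := by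
      rw [hcomp2, natDegree_comp, h0, zero_mul]
    rw [hh₀deg] at this; exact hn0 this
  -- back over L
  set H : L[X] := h₀.map (algebraMap K L) with hH
  have hHdeg : H.natDegree = h.natDegree := by rw [hH, natDegree_map, hh₀deg]
  have hH₁ : (P₁.map (algebraMap K L)).comp F₁ = H := by
    rw [hH, hh₀, Polynomial.map_comp]
  have hH₂ : (P₂.map (algebraMap K L)).comp F₂ = H := by
    rw [hH, hcomp2, Polynomial.map_comp]
  have hhne : h ≠ 0 := fun h0 => hn0 (by rw [h0, natDegree_zero])
  have hHne : H ≠ 0 := fun h0 => hn0 (by rw [← hHdeg, h0, natDegree_zero])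
  set c : L := H.leadingCoeff * h.leadingCoeff⁻¹ with hc
  have hcne : c ≠ 0 := mul_ne_zero (leadingCoeff_ne_zero.mpr hHne)
    (inv_ne_zero (leadingCoeff_ne_zero.mpr hhne))
  set Q₁ : L[X] := P₁.map (algebraMap K L) - C c * g₁ with hQ₁
  set Q₂ : L[X] := P₂.map (algebraMap K L) - C c * g₂ with hQ₂
  set D : L[X] := H - C c * h with hD
  have hD₁ : Q₁.comp F₁ = D := by
    rw [hQ₁, sub_comp, mul_comp, C_comp, hH₁, hg₁h, hD]
  have hD₂ : Q₂.comp F₂ = D := by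
    rw [hQ₂, sub_comp, mul_comp, C_comp, hH₂, hg₂h, hD]
  have hQ₁deg : Q₁.natDegree = 0 := by
    by_contra hq1ne
    have hDdeg : D.natDegree = Q₁.natDegree * F₁.natDegree := by
      rw [← hD₁, natDegree_comp]
    have hDne0 : D.natDegree ≠ 0 := by
      rw [hDdeg]; exact mul_ne_zero hq1ne (by rw [hdF₁]; exact hf₁)
    have hDne : D ≠ 0 := fun h0 => hDne0 (by rw [h0, natDegree_zero])
    have hQ₂ne : Q₂.natDegree ≠ 0 := by
      intro h0
      have : D.natDegree = 0 := by rw [← hD₂, natDegree_comp, h0, zero_mul]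
      exact hDne0 this
    have hminD := hmin D ⟨Q₁, Q₂, hq1ne, hQ₂ne, hD₁, hD₂⟩
    have hdlt : D.degree < H.degree := by
      rw [hD]
      refine degree_sub_lt ?_ hHne ?_
      · rw [degree_C_mul hcne, degree_eq_natDegree hhne, degree_eq_natDegree hHne, hHdeg]
      · rw [leadingCoeff_mul, leadingCoeff_C, hc, mul_assoc,
          inv_mul_cancel₀ (leadingCoeff_ne_zero.mpr hhne), mul_one]
    have : D.natDegree < H.natDegree := natDegree_lt_natDegree hDne hdlt
    rw [hHdeg] at this
    omega
  obtain hQC := eq_C_of_natDegree_eq_zero hQ₁deg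
  set d' : L := Q₁.coeff 0 with hd'
  have hDC : D = C d' := by rw [← hD₁, hQC, C_comp]
  have hfinal : h₀.map (algebraMap K L) = C c * h + C d' := by
    rw [← hH]
    have : H - C c * h = C d' := by rw [← hD, hDC]
    linear_combination this
  refine ⟨⟨C c * X + C d', natDegree_linear hcne, h₀, ?_⟩, ?_⟩
  · rw [add_comp, mul_comp, C_comp, X_comp, C_comp, hfinal]
  · intro hmonic hcoeff0
    have hceq : c = algebraMap K L h₀.leadingCoeff := by
      rw [hc, hmonic.leadingCoeff, inv_one, mul_one, hH, Polynomial.leadingCoeff_map]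
    have hd'eq : d' = algebraMap K L (h₀.coeff 0) := by
      have h1 : (h₀.map (algebraMap K L)).coeff 0 = algebraMap K L (h₀.coeff 0) :=
        coeff_map _ _
      rw [hfinal] at h1
      simpa [hcoeff0] using h1
    have hh₀ne : h₀ ≠ 0 := fun h0 => hn0 (by rw [← hh₀deg, h0, natDegree_zero])
    have hlcne : h₀.leadingCoeff ≠ 0 := leadingCoeff_ne_zero.mpr hh₀ne
    refine ⟨C h₀.leadingCoeff⁻¹ * (h₀ - C (h₀.coeff 0)), ?_⟩
    rw [Polynomial.map_mul, Polynomial.map_sub, Polynomial.map_C, Polynomial.map_C,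
      hfinal, map_inv₀, ← hceq, ← hd'eq]
    rw [add_sub_cancel_right, ← mul_assoc, ← C_mul, inv_mul_cancel₀ hcne, C_1, one_mul]
end

section
/- Let K be a field of characteristic p ≥ 0 and f₁, f₂ ∈ K[x] nonconstant. If f₁ and f₂ have a common composite, then they have a common composite of degree lcm(deg f₁, deg f₂) · p^s for some integer s ≥ 0 (with the convention 0^0 = 1 when p = 0). -/
open Polynomial Finset

section ApproxRoot

variable {K : Type*} [Field K]

/-- Geometric sum of two monic polynomials of degree `r`: degree bound and top coefficient. -/
private lemma geomS_spec {m r : ℕ} {u v : K[X]} (hu : u.Monic) (hud : u.natDegree = r)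
    (hv : v.Monic) (hvd : v.natDegree = r) :
    (∑ i ∈ range m, u ^ i * v ^ (m - 1 - i)).natDegree ≤ r * (m - 1) ∧
    (∑ i ∈ range m, u ^ i * v ^ (m - 1 - i)).coeff (r * (m - 1)) = (m : K) := by
  have hterm : ∀ i ∈ range m, (u ^ i * v ^ (m - 1 - i)).Monic ∧
      (u ^ i * v ^ (m - 1 - i)).natDegree = r * (m - 1) := by
    intro i hi
    simp only [mem_range] at hi
    refine ⟨(hu.pow i).mul (hv.pow _), ?_⟩
    rw [((hu.pow i)).natDegree_mul (hv.pow _), natDegree_pow, natDegree_pow, hud, hvd]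
    have : i + (m - 1 - i) = m - 1 := by omega
    calc i * r + (m - 1 - i) * r = (i + (m - 1 - i)) * r := by ring
    _ = (m - 1) * r := by rw [this]
    _ = r * (m - 1) := by ring
  constructor
  · exact natDegree_sum_le_of_forall_le _ _ (fun i hi => le_of_eq (hterm i hi).2)
  · rw [finset_sum_coeff]
    have : ∀ i ∈ range m, (u ^ i * v ^ (m - 1 - i)).coeff (r * (m - 1)) = 1 := by
      intro i hi
      have h := hterm i hi
      have := h.1.coeff_natDegree
      rwa [h.2] at this
    rw [Finset.sum_congr rfl this]
    simp

/-- Uniqueness of approximate `m`-th roots. -/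
private lemma approx_unique {m r : ℕ} (hm : (m : K) ≠ 0) {P w w' : K[X]}
    (hw : w.Monic) (hwd : w.natDegree = r) (hw' : w'.Monic) (hwd' : w'.natDegree = r)
    (h1 : (P - w ^ m).degree < ((r * m - r : ℕ) : WithBot ℕ))
    (h2 : (P - w' ^ m).degree < ((r * m - r : ℕ) : WithBot ℕ)) : w = w' := by
  by_contra hne
  have hsub : w ^ m - w' ^ m = (P - w' ^ m) - (P - w ^ m) := by ring
  have hdlt : (w ^ m - w' ^ m).degree < ((r * m - r : ℕ) : WithBot ℕ) :=
    hsub ▸ lt_of_le_of_lt (degree_sub_le _ _) (max_lt h2 h1)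
  set S := ∑ i ∈ range m, w ^ i * w' ^ (m - 1 - i) with hS
  have hgs := geomS_spec hw hwd hw' hwd' (m := m)
  have hSd : S.degree = ((r * (m - 1) : ℕ) : WithBot ℕ) := by
    apply le_antisymm
    · exact le_trans (degree_le_natDegree) (by exact_mod_cast hgs.1)
    · exact le_degree_of_ne_zero (by rw [hgs.2]; exact hm)
  have hid : S * (w - w') = w ^ m - w' ^ m := geom_sum₂_mul w w' m
  have hww : w - w' ≠ 0 := sub_ne_zero.2 hne
  have hd0 : (0 : WithBot ℕ) ≤ (w - w').degree := by rwa [zero_le_degree_iff]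
  have hge : ((r * (m - 1) : ℕ) : WithBot ℕ) ≤ (w ^ m - w' ^ m).degree := by
    rw [← hid, degree_mul, hSd]
    calc ((r * (m - 1) : ℕ) : WithBot ℕ) = (r * (m - 1) : ℕ) + 0 := by simp
    _ ≤ (r * (m - 1) : ℕ) + (w - w').degree := by exact add_le_add le_rfl hd0
  have hm1 : 1 ≤ m := by
    by_contra h; push_neg at h; interval_cases m; simp at hm
  have hrr : r * (m - 1) = r * m - r := by
    obtain ⟨b, rfl⟩ : ∃ b, m = b + 1 := ⟨m - 1, by omega⟩
    simp [Nat.mul_succ]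
  rw [hrr] at hge
  exact absurd (lt_of_le_of_lt hge hdlt) (lt_irrefl _)

/-- Existence of approximate `m`-th roots of a monic polynomial. -/
private lemma approx_exists {m : ℕ} (hm : (m : K) ≠ 0) (r : ℕ) {P : K[X]}
    (hP : P.Monic) (hPd : P.natDegree = r * m) :
    ∃ w : K[X], w.Monic ∧ w.natDegree = r ∧
      (P - w ^ m).degree < ((r * m - r : ℕ) : WithBot ℕ) := by
  have hm0 : m ≠ 0 := by rintro rfl; simp at hm
  obtain ⟨b, rfl⟩ : ∃ b, m = b + 1 := ⟨m - 1, by omega⟩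
  suffices H : ∀ j, j ≤ r → ∃ w : K[X], w.Monic ∧ w.natDegree = r ∧
      (P - w ^ (b+1)).degree < ((r * (b+1) - j : ℕ) : WithBot ℕ) from H r le_rfl
  intro j hjr
  induction j with
  | zero =>
    refine ⟨X ^ r, monic_X_pow r, natDegree_X_pow r, ?_⟩
    rw [← pow_mul, Nat.sub_zero]
    have hd : P.degree = ((X : K[X]) ^ (r * (b+1))).degree := by
      rw [degree_X_pow, degree_eq_natDegree hP.ne_zero, hPd]
    have := degree_sub_lt hd hP.ne_zero
      (by rw [hP.leadingCoeff, (monic_X_pow _).leadingCoeff])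
    rwa [degree_eq_natDegree hP.ne_zero, hPd] at this
  | succ j ih =>
    obtain ⟨w, hwm, hwd, hlt⟩ := ih (le_of_lt (Nat.lt_of_lt_of_le (Nat.lt_succ_self j) hjr))
    set t := r - j - 1 with htdef
    have ht : t + (j + 1) = r := by omega
    set D := t + r * b with hDdef
    have hrm : r * (b + 1) = D + (j + 1) := by
      have : r * (b+1) = r * b + r := by ring
      omega
    set c := (P - w ^ (b+1)).coeff D with hc
    set ε := C (c * ((b+1 : ℕ) : K)⁻¹) * X ^ t with hε
    have hεd : ε.degree < w.degree := by
      apply lt_of_le_of_lt (degree_C_mul_X_pow_le t _)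
      rw [degree_eq_natDegree hwm.ne_zero, hwd]
      exact_mod_cast (by omega : t < r)
    have hwm' : (w + ε).Monic := hwm.add_of_left hεd
    have hwd' : (w + ε).natDegree = r := by
      rw [natDegree_eq_of_degree_eq (degree_add_eq_left_of_degree_lt hεd), hwd]
    refine ⟨w + ε, hwm', hwd', ?_⟩
    set S := ∑ i ∈ range (b+1), (w + ε) ^ i * w ^ ((b+1) - 1 - i) with hS
    have hgs := geomS_spec hwm' hwd' hwm hwd (m := b+1)
    have hgs1 : S.natDegree ≤ r * b := by simpa [hS] using hgs.1
    have hgs2 : S.coeff (r * b) = ((b+1 : ℕ) : K) := by simpa [hS] using hgs.2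
    have hid : (w + ε) ^ (b+1) - w ^ (b+1) = S * ε := by
      have := geom_sum₂_mul (w + ε) w (b+1)
      rw [add_sub_cancel_left] at this
      rw [← this]
    have hkey : P - (w + ε) ^ (b+1) = (P - w ^ (b+1)) - S * ε := by
      rw [← hid]; ring
    rw [degree_lt_iff_coeff_zero]
    intro N hN
    have hDN : D ≤ N := by
      have : r * (b+1) - (j+1) = D := by omega
      rw [this] at hN
      exact_mod_cast hN
    have hSεD : (S * ε).coeff D = c := by
      have h1 : S * ε = C (c * ((b+1 : ℕ) : K)⁻¹) * (X ^ t * S) := by rw [hε]; ring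
      rw [h1, coeff_C_mul]
      have h2 : (X ^ t * S).coeff D = S.coeff (r * b) := by
        have hD2 : D = r * b + t := by omega
        rw [hD2, coeff_X_pow_mul]
      rw [h2, hgs2]
      have hb : ((b : K) + 1) ≠ 0 := by push_cast at hm; exact hm
      push_cast
      rw [mul_assoc, inv_mul_cancel₀ hb, mul_one]
    have hSεhigh : ∀ M, D < M → (S * ε).coeff M = 0 := by
      intro M hM
      apply coeff_eq_zero_of_natDegree_lt
      apply lt_of_le_of_lt _ hM
      apply le_trans (natDegree_mul_le)
      have h1 : S.natDegree ≤ r * b := hgs1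
      have h2 : ε.natDegree ≤ t := natDegree_C_mul_X_pow_le _ _
      omega
    have hPwhigh : ∀ M, D < M → (P - w ^ (b+1)).coeff M = 0 := by
      intro M hM
      apply coeff_eq_zero_of_degree_lt
      apply lt_of_lt_of_le hlt
      have h3 : r * (b+1) - j = D + 1 := by omega
      rw [h3]
      exact_mod_cast (by omega : D + 1 ≤ M)
    rcases eq_or_lt_of_le hDN with hND | hND
    · rw [hkey, coeff_sub, ← hND, hSεD, ← hc, sub_self]
    · rw [hkey, coeff_sub, hPwhigh N hND, hSεhigh N hND, sub_self]

/-- One-sided approximate root compatible with composition. -/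
private lemma side {m' : ℕ} (hm' : ((m' : ℕ) : K) ≠ 0) {f G : K[X]} (hf : f.natDegree ≠ 0)
    (hmon : (G.comp f).Monic) (hdvd : m' ∣ G.natDegree) :
    ∃ G' : K[X], G'.natDegree = G.natDegree / m' ∧ (G'.comp f).Monic ∧
      (G'.comp f).natDegree = (G.comp f).natDegree / m' ∧
      ((G.comp f) - (G'.comp f) ^ m').degree <
        ((((G.comp f).natDegree / m') * m' - (G.comp f).natDegree / m' : ℕ) : WithBot ℕ) := by
  have hm'0 : m' ≠ 0 := by rintro rfl; simp at hm'
  have hf0 : f ≠ 0 := fun h => hf (by simp [h])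
  set lam := f.leadingCoeff with hlam
  have hlam0 : lam ≠ 0 := leadingCoeff_ne_zero.2 hf0
  set fh : K[X] := C lam⁻¹ * f with hfh
  have hfhm : fh.Monic := by
    rw [Monic, hfh, leadingCoeff_mul, leadingCoeff_C, inv_mul_cancel₀ hlam0]
  have hfhd : fh.natDegree = f.natDegree := natDegree_C_mul (inv_ne_zero hlam0)
  set Gh : K[X] := G.comp (C lam * X) with hGh
  have hGhd : Gh.natDegree = G.natDegree := by
    rw [hGh, natDegree_comp, natDegree_C_mul_X lam hlam0, mul_one]
  have hcomp : Gh.comp fh = G.comp f := by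
    rw [hGh, comp_assoc]
    congr 1
    rw [mul_comp, C_comp, X_comp, hfh, ← mul_assoc, ← C_mul, mul_inv_cancel₀ hlam0, map_one,
      one_mul]
  have hGhm : Gh.Monic := by
    have h1 : (Gh.comp fh).leadingCoeff = Gh.leadingCoeff * fh.leadingCoeff ^ Gh.natDegree :=
      leadingCoeff_comp (by rw [hfhd]; exact hf)
    have h2 : (Gh.comp fh).leadingCoeff = 1 := by rw [hcomp]; exact hmon
    rw [Monic]
    rw [h2, hfhm.leadingCoeff, one_pow, mul_one] at h1
    exact h1.symm
  obtain ⟨k, hk⟩ := hdvd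
  have hek : G.natDegree / m' = k := by rw [hk, Nat.mul_div_cancel_left k hm'0.bot_lt]
  obtain ⟨a, ham, had, hlt⟩ := approx_exists hm' (G.natDegree / m') hGhm
    (by rw [hGhd, Nat.div_mul_cancel ⟨k, hk⟩])
  set G' : K[X] := a.comp (C lam⁻¹ * X) with hG'
  have hG'f : G'.comp f = a.comp fh := by
    rw [hG', comp_assoc]
    congr 1
    rw [mul_comp, C_comp, X_comp, hfh]
  have hG'd : G'.natDegree = G.natDegree / m' := by
    rw [hG', natDegree_comp, natDegree_C_mul_X _ (inv_ne_zero hlam0), mul_one, had]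
  have hwm : (G'.comp f).Monic := by
    rw [hG'f]; exact ham.comp hfhm (by rw [hfhd]; exact hf)
  have hn : (G.comp f).natDegree = G.natDegree * f.natDegree := natDegree_comp
  have hnd : (G.comp f).natDegree / m' = (G.natDegree / m') * f.natDegree := by
    rw [hn, hek, hk, Nat.mul_assoc, Nat.mul_div_cancel_left _ (Nat.pos_of_ne_zero hm'0)]
  refine ⟨G', hG'd, hwm, ?_, ?_⟩
  · rw [hG'f, natDegree_comp, had, hfhd, hnd]
  · have hkey : (G.comp f) - (G'.comp f) ^ m' = (Gh - a ^ m').comp fh := by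
      rw [sub_comp, hcomp, pow_comp, hG'f]
    rw [hkey]
    rcases eq_or_ne (Gh - a ^ m') 0 with h0 | h0
    · rw [h0, zero_comp, degree_zero]
      exact WithBot.bot_lt_coe _
    · have hcne : (Gh - a ^ m').comp fh ≠ 0 := by
        intro hzz
        have := leadingCoeff_comp (p := Gh - a ^ m') (q := fh) (by rw [hfhd]; exact hf)
        rw [hzz, leadingCoeff_zero] at this
        exact (mul_ne_zero (leadingCoeff_ne_zero.2 h0)
          (pow_ne_zero _ (leadingCoeff_ne_zero.2 hfhm.ne_zero))) this.symm
      rw [degree_eq_natDegree hcne, natDegree_comp, hfhd]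
      have hqlt : (Gh - a ^ m').natDegree < (G.natDegree / m') * m' - G.natDegree / m' :=
        (natDegree_lt_iff_degree_lt h0).2 hlt
      have hmul : (Gh - a ^ m').natDegree * f.natDegree
          < ((G.natDegree / m') * m' - G.natDegree / m') * f.natDegree :=
        Nat.mul_lt_mul_of_lt_of_le hqlt le_rfl (Nat.pos_of_ne_zero hf)
      have harith : ((G.natDegree / m') * m' - G.natDegree / m') * f.natDegree
          = ((G.comp f).natDegree / m') * m' - (G.comp f).natDegree / m' := by
        rw [hnd, hek, Nat.sub_mul]
        congr 1
        ring
      rw [harith] at hmul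
      exact_mod_cast hmul

end ApproxRoot

theorem stmt_4 (K : Type*) [Field K] (f₁ f₂ : K[X])
    (hf₁ : f₁.natDegree ≠ 0) (hf₂ : f₂.natDegree ≠ 0)
    (h : ∃ g₁ g₂ : K[X], g₁.natDegree ≠ 0 ∧ g₂.natDegree ≠ 0 ∧ g₁.comp f₁ = g₂.comp f₂) :
    ∃ (s : ℕ) (g₁ g₂ : K[X]), g₁.natDegree ≠ 0 ∧ g₂.natDegree ≠ 0 ∧
      g₁.comp f₁ = g₂.comp f₂ ∧
      (g₁.comp f₁).natDegree = Nat.lcm f₁.natDegree f₂.natDegree * (ringChar K) ^ s := by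
  obtain ⟨g₁, g₂, hg₁, hg₂, hgh⟩ := h
  -- normalize to a monic common composite
  have hc1 : (g₁.comp f₁).natDegree = g₁.natDegree * f₁.natDegree := natDegree_comp
  have hcne : g₁.comp f₁ ≠ 0 := by
    intro h0
    rw [h0, natDegree_zero] at hc1
    rcases Nat.mul_eq_zero.1 hc1.symm with h' | h'
    exacts [hg₁ h', hf₁ h']
  set u := (g₁.comp f₁).leadingCoeff with hu
  have hu0 : u ≠ 0 := leadingCoeff_ne_zero.2 hcne
  set G₁ : K[X] := C u⁻¹ * g₁ with hG₁
  set G₂ : K[X] := C u⁻¹ * g₂ with hG₂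
  have hGcomp : G₁.comp f₁ = G₂.comp f₂ := by
    rw [hG₁, hG₂, mul_comp, mul_comp, C_comp, C_comp, hgh]
  have hmon : (G₁.comp f₁).Monic := by
    rw [Monic, hG₁, mul_comp, C_comp, leadingCoeff_mul, leadingCoeff_C, ← hu,
      inv_mul_cancel₀ hu0]
  have he₁ : G₁.natDegree = g₁.natDegree := natDegree_C_mul (inv_ne_zero hu0)
  have he₂ : G₂.natDegree = g₂.natDegree := natDegree_C_mul (inv_ne_zero hu0)
  have he₁0 : G₁.natDegree ≠ 0 := by rw [he₁]; exact hg₁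
  have he₂0 : G₂.natDegree ≠ 0 := by rw [he₂]; exact hg₂
  set n := (G₁.comp f₁).natDegree with hn
  have hn1 : n = G₁.natDegree * f₁.natDegree := natDegree_comp
  have hn2 : n = G₂.natDegree * f₂.natDegree := by rw [hn, hGcomp]; exact natDegree_comp
  have hn0 : n ≠ 0 := by rw [hn1]; exact Nat.mul_ne_zero he₁0 hf₁
  set L := Nat.lcm f₁.natDegree f₂.natDegree with hL
  have hLn : L ∣ n := Nat.lcm_dvd ⟨G₁.natDegree, by rw [hn1]; ring⟩
    ⟨G₂.natDegree, by rw [hn2]; ring⟩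
  set m := n / L with hmdef
  have hnm : n = L * m := (Nat.mul_div_cancel' hLn).symm
  have hm0 : m ≠ 0 := fun h0 => hn0 (by rw [hnm, h0, Nat.mul_zero])
  set p := ringChar K with hp
  haveI : CharP K p := ringChar.charP K
  obtain ⟨s, m', hsm, hm'K, hm'm⟩ :
      ∃ (s m' : ℕ), p ^ s * m' = m ∧ ((m' : ℕ) : K) ≠ 0 ∧ m' ∣ m := by
    rcases CharP.char_is_prime_or_zero K p with hpr | hp0
    · refine ⟨m.factorization p, m / p ^ m.factorization p,
        Nat.ordProj_mul_ordCompl_eq_self m p, ?_, Nat.ordCompl_dvd m p⟩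
      rw [Ne, CharP.cast_eq_zero_iff K p]
      exact Nat.not_dvd_ordCompl hpr hm0
    · refine ⟨0, m, by rw [pow_zero, one_mul], ?_, dvd_rfl⟩
      rw [Ne, CharP.cast_eq_zero_iff K p, hp0]
      simpa using hm0
  have hm'0 : m' ≠ 0 := by rintro rfl; simp at hm'K
  have hdvd : ∀ (d e : ℕ), d ≠ 0 → d ∣ L → e * d = n → m' ∣ e := by
    intro d e hd hdL hed
    obtain ⟨t, ht⟩ := hdL
    have heq : e * d = (t * m) * d := by rw [hed, hnm, ht]; ring
    have he : e = t * m := Nat.eq_of_mul_eq_mul_right (Nat.pos_of_ne_zero hd) heq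
    rw [he]
    exact Dvd.dvd.mul_left hm'm t
  have hdvd₁ : m' ∣ G₁.natDegree := hdvd f₁.natDegree G₁.natDegree hf₁
    (Nat.dvd_lcm_left _ _) hn1.symm
  have hdvd₂ : m' ∣ G₂.natDegree := hdvd f₂.natDegree G₂.natDegree hf₂
    (Nat.dvd_lcm_right _ _) hn2.symm
  obtain ⟨G₁', hG₁'d, hw₁m, hw₁d, hw₁lt⟩ := side hm'K hf₁ hmon hdvd₁
  have hmon₂ : (G₂.comp f₂).Monic := hGcomp ▸ hmon
  obtain ⟨G₂', hG₂'d, hw₂m, hw₂d, hw₂lt⟩ := side hm'K hf₂ hmon₂ hdvd₂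
  rw [← hGcomp] at hw₂d hw₂lt
  have weq : G₁'.comp f₁ = G₂'.comp f₂ :=
    approx_unique (r := n / m') hm'K hw₁m hw₁d hw₂m hw₂d hw₁lt hw₂lt
  refine ⟨s, G₁', G₂', ?_, ?_, weq, ?_⟩
  · rw [hG₁'d]
    intro h0
    exact he₁0 (by rw [← Nat.div_mul_cancel hdvd₁, h0, Nat.zero_mul])
  · rw [hG₂'d]
    intro h0
    exact he₂0 (by rw [← Nat.div_mul_cancel hdvd₂, h0, Nat.zero_mul])
  · rw [hw₁d]
    have hfin : n = (L * p ^ s) * m' := by rw [hnm, ← hsm]; ring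
    show n / m' = L * p ^ s
    rw [hfin, Nat.mul_div_cancel _ (Nat.pos_of_ne_zero hm'0)]
end

section
/- Let K be a field of characteristic zero and f₁, f₂ ∈ K[x] nonconstant. If f₁ and f₂ have a common composite, then they have a common composite of degree exactly lcm(deg f₁, deg f₂). -/
open Polynomial

lemma nsmul_coe_withbot (k s : ℕ) : k • (s : WithBot ℕ) = ((k * s : ℕ) : WithBot ℕ) := by
  induction k with
  | zero => simp
  | succ n ihk => rw [succ_nsmul, ihk]; push_cast; ring

lemma bin_rem {K : Type*} [Field K] (s r : ℕ) (hrs : r ≤ s) :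
    ∀ (m : ℕ) (P a : K[X]), P.degree ≤ (s : WithBot ℕ) → a.degree ≤ (r : WithBot ℕ) →
    ∃ Q : K[X], (P + a) ^ m = P ^ m + (m : K[X]) * a * P ^ (m - 1) + a ^ 2 * Q ∧
      (m ≤ 1 → Q = 0) ∧ Q.degree ≤ (((m - 2) * s : ℕ) : WithBot ℕ) := by
  intro m
  induction m with
  | zero => intro P a _ _; exact ⟨0, by simp, fun _ => rfl, by simp⟩
  | succ m ih =>
    intro P a hP ha
    rcases Nat.eq_zero_or_pos m with rfl | hm
    · exact ⟨0, by simp, fun _ => rfl, by simp⟩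
    rcases eq_or_lt_of_le (show 1 ≤ m by omega) with rfl | hm2
    · -- m = 1, proving for exponent 2
      refine ⟨1, by push_cast; ring, by omega, by simp⟩
    -- now m ≥ 2
    obtain ⟨Q, hQ, -, hQd⟩ := ih P a hP ha
    have h1 : P ^ (m - 1) * P = P ^ m := by rw [← pow_succ]; congr 1; omega
    refine ⟨Q * P + (m : K[X]) * P ^ (m - 1) + a * Q, ?_, by omega, ?_⟩
    · have h2 : (P + a) ^ (m + 1) = (P + a) ^ m * (P + a) := pow_succ _ _
      rw [h2, hQ]
      simp only [Nat.add_sub_cancel]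
      push_cast
      linear_combination ((m : K[X]) * a) * h1
    · have hcast : ∀ k : ℕ, (P ^ k).degree ≤ ((k * s : ℕ) : WithBot ℕ) := fun k =>
        (degree_pow_le P k).trans (by rw [← nsmul_coe_withbot]; exact nsmul_le_nsmul_right hP _)
      have hs1 : ((m : ℕ) : K[X]).degree ≤ (0 : WithBot ℕ) := by
        rw [← Polynomial.C_eq_natCast]; exact degree_C_le
      have e1 : (m - 2) * s + s = (m - 1) * s := by
        have : m - 2 + 1 = m - 1 := by omega
        calc (m-2)*s + s = (m-2+1)*s := by ring
          _ = (m-1)*s := by rw [this]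
      have e2 : m + 1 - 2 = m - 1 := by omega
      rw [e2]
      have d1 : (Q * P).degree ≤ (((m - 1) * s : ℕ) : WithBot ℕ) := by
        refine (degree_mul_le _ _).trans (le_trans (add_le_add hQd hP) ?_)
        rw [← Nat.cast_add, Nat.cast_le, e1]
      have d2 : ((m : K[X]) * P ^ (m - 1)).degree ≤ (((m - 1) * s : ℕ) : WithBot ℕ) := by
        refine (degree_mul_le _ _).trans (le_trans (add_le_add hs1 (hcast (m-1))) ?_)
        rw [zero_add]
      have d3 : (a * Q).degree ≤ (((m - 1) * s : ℕ) : WithBot ℕ) := by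
        refine (degree_mul_le _ _).trans (le_trans (add_le_add ha hQd) ?_)
        rw [← Nat.cast_add, Nat.cast_le, ← e1]
        omega
      exact (degree_add_le _ _).trans (max_le ((degree_add_le _ _).trans (max_le d1 d2)) d3)

lemma descent {K : Type*} [Field K] [CharZero K] (m s : ℕ) (hm : 1 ≤ m) (g : K[X]) :
    ∀ e : ℕ, ∀ P : K[X], P.Monic → P.natDegree = s → (g - P ^ m).degree ≤ (e : WithBot ℕ) →
    e < m * s →
    ∃ P' : K[X], P'.Monic ∧ P'.natDegree = s ∧
      (g - P' ^ m).degree < (((m - 1) * s : ℕ) : WithBot ℕ) := by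
  intro e
  induction e using Nat.strong_induction_on with
  | _ e IH =>
  intro P hP hPd hdeg hems
  by_cases hlt : (g - P ^ m).degree < (((m - 1) * s : ℕ) : WithBot ℕ)
  · exact ⟨P, hP, hPd, hlt⟩
  have hge : (((m - 1) * s : ℕ) : WithBot ℕ) ≤ (e : WithBot ℕ) := le_trans (not_lt.mp hlt) hdeg
  have hgeN : (m - 1) * s ≤ e := by exact_mod_cast hge
  set r := e - (m - 1) * s with hr
  have hre : r + (m - 1) * s = e := by omega
  have hrs : r < s := by
    have h1 : s + (m-1)*s = m * s := by
      have : 1 + (m-1) = m := by omega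
      calc s + (m-1)*s = (1 + (m-1))*s := by ring
        _ = m * s := by rw [this]
    omega
  have hmK : (m : K) ≠ 0 := Nat.cast_ne_zero.mpr (by omega)
  set t : K := (g - P ^ m).coeff e / m with ht
  set a : K[X] := C t * X ^ r with ha
  have hadeg : a.degree ≤ (r : WithBot ℕ) := by
    rw [ha]
    refine (degree_mul_le _ _).trans ?_
    refine le_trans (add_le_add degree_C_le (degree_X_pow_le r)) ?_
    simp
  have hPdeg : P.degree ≤ (s : WithBot ℕ) := degree_le_natDegree.trans (by rw [hPd])
  obtain ⟨Q, hQ, hQ0, hQd⟩ := bin_rem s r (le_of_lt hrs) m P a hPdeg hadeg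
  have hPne : P ≠ 0 := hP.ne_zero
  have hPdeg' : P.degree = (s : WithBot ℕ) := by
    rw [degree_eq_natDegree hPne, hPd]
  have haltP : a.degree < P.degree := by
    rw [hPdeg']; exact lt_of_le_of_lt hadeg (by exact_mod_cast hrs)
  have hP' : (P + a).Monic := hP.add_of_left haltP
  have hP'd : (P + a).natDegree = s := by
    rw [natDegree_eq_of_degree_eq (degree_add_eq_left_of_degree_lt haltP), hPd]
  -- the new error polynomial
  have hE' : g - (P + a) ^ m = (g - P ^ m) - C ((m : K) * t) * (P ^ (m - 1) * X ^ r) - a ^ 2 * Q := by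
    rw [hQ, ha, C_mul, Polynomial.C_eq_natCast]
    -- push_cast not needed here
    ring
  have hTdeg : (m - 1) * s = e - r := by omega
  have hPm1 : (P ^ (m - 1)).natDegree = (m - 1) * s := by rw [natDegree_pow, hPd]
  have key : (g - (P + a) ^ m).degree < (e : WithBot ℕ) := by
    rw [degree_lt_iff_coeff_zero]
    intro j hj
    rw [hE']
    have c1 : (C ((m : K) * t) * (P ^ (m - 1) * X ^ r)).coeff j
        = (m : K) * t * (if r ≤ j then (P ^ (m - 1)).coeff (j - r) else 0) := by
      rw [coeff_C_mul, coeff_mul_X_pow']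
    have c2 : (a ^ 2 * Q).coeff j = 0 := by
      rcases eq_or_lt_of_le hm with rfl | hm2
      · rw [hQ0 (le_refl 1)]; simp
      · have hdeg2 : (a ^ 2 * Q).degree < (j : WithBot ℕ) := by
          refine lt_of_le_of_lt (degree_mul_le _ _) ?_
          have h2a : (a ^ 2).degree ≤ ((2 * r : ℕ) : WithBot ℕ) := by
            refine (degree_pow_le a 2).trans ?_
            rw [← nsmul_coe_withbot]
            exact nsmul_le_nsmul_right hadeg 2
          refine lt_of_le_of_lt (add_le_add h2a hQd) ?_
          rw [← Nat.cast_add, Nat.cast_lt]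
          have hmm : (m - 2) + 1 = m - 1 := by omega
          have : r + (m - 2) * s < s + (m - 2) * s := by omega
          have h3 : s + (m - 2) * s = (m - 1) * s := by
            calc s + (m-2)*s = ((m-2)+1)*s := by ring
              _ = (m-1)*s := by rw [hmm]
          omega
        exact coeff_eq_zero_of_degree_lt hdeg2
    rcases eq_or_lt_of_le hj with rfl | hjgt
    · -- j = e : cancellation
      rw [coeff_sub, coeff_sub, c2, c1, if_pos (by omega : r ≤ e)]
      have hjr : e - r = (m - 1) * s := by omega
      rw [hjr, ← hPm1, (hP.pow (m - 1)).coeff_natDegree, ht]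
      field_simp
      simp
    · -- j > e
      have z1 : (g - P ^ m).coeff j = 0 :=
        coeff_eq_zero_of_degree_lt (lt_of_le_of_lt hdeg (by exact_mod_cast hjgt))
      have z2 : (C ((m : K) * t) * (P ^ (m - 1) * X ^ r)).coeff j = 0 := by
        rw [c1]
        rcases le_or_gt r j with hrle | hrlt
        · rw [if_pos hrle, coeff_eq_zero_of_natDegree_lt (by omega : (P ^ (m-1)).natDegree < j - r)]
          ring
        · rw [if_neg (by omega)]; ring
      rw [coeff_sub, coeff_sub, z1, z2, c2]; ring
  -- now recurse or finish
  rcases Nat.eq_zero_or_pos e with rfl | he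
  · refine ⟨P + a, hP', hP'd, ?_⟩
    have : (g - (P + a) ^ m).degree < (0 : WithBot ℕ) := by exact_mod_cast key
    rw [Nat.WithBot.lt_zero_iff] at this
    rw [this]
    exact WithBot.bot_lt_coe _
  · have hle : (g - (P + a) ^ m).degree ≤ ((e - 1 : ℕ) : WithBot ℕ) := by
      rw [degree_le_iff_coeff_zero]
      intro j hj
      have : e ≤ j := by
        rw [Nat.cast_lt] at hj; omega
      exact (degree_lt_iff_coeff_zero _ _).mp key j this
    exact IH (e - 1) (by omega) (P + a) hP' hP'd hle (by omega)

lemma exists_approx_root {K : Type*} [Field K] [CharZero K] (m s : ℕ) (hm : 1 ≤ m) (hs : 1 ≤ s)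
    (g : K[X]) (hg : g.Monic) (hdeg : g.natDegree = m * s) :
    ∃ P : K[X], P.Monic ∧ P.natDegree = s ∧
      (g - P ^ m).degree < (((m - 1) * s : ℕ) : WithBot ℕ) := by
  have hX : (X : K[X]) ^ s |>.Monic := monic_X_pow s
  have hXd : ((X : K[X]) ^ s).natDegree = s := natDegree_X_pow s
  have hms : 1 ≤ m * s := Nat.one_le_iff_ne_zero.mpr (by positivity)
  have hlt : (g - ((X : K[X]) ^ s) ^ m).degree < ((m * s : ℕ) : WithBot ℕ) := by
    have h1 : (((X : K[X]) ^ s) ^ m).degree = g.degree := by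
      rw [degree_eq_natDegree (hX.pow m).ne_zero, degree_eq_natDegree hg.ne_zero, hdeg,
        natDegree_pow, hXd, mul_comm]
    have h2 : g.degree = ((m * s : ℕ) : WithBot ℕ) := by
      rw [degree_eq_natDegree hg.ne_zero, hdeg]
    rw [← h2]
    exact degree_sub_lt h1.symm hg.ne_zero (by rw [hg.leadingCoeff, (hX.pow m).leadingCoeff])
  have hle : (g - ((X : K[X]) ^ s) ^ m).degree ≤ ((m * s - 1 : ℕ) : WithBot ℕ) := by
    rw [degree_le_iff_coeff_zero]
    intro j hj
    have : m * s ≤ j := by rw [Nat.cast_lt] at hj; omega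
    exact (degree_lt_iff_coeff_zero _ _).mp hlt j this
  exact descent m s hm g (m * s - 1) (X ^ s) hX hXd hle (by omega)

lemma approx_uniq {K : Type*} [Field K] [CharZero K] (m s : ℕ) (hm : 1 ≤ m)
    (g P Q : K[X]) (hP : P.Monic) (hQ : Q.Monic) (hPd : P.natDegree = s) (hQd : Q.natDegree = s)
    (h1 : (g - P ^ m).degree < (((m - 1) * s : ℕ) : WithBot ℕ))
    (h2 : (g - Q ^ m).degree < (((m - 1) * s : ℕ) : WithBot ℕ)) : P = Q := by
  by_contra hne
  have hD : P - Q ≠ 0 := sub_ne_zero.mpr hne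
  set S : K[X] := ∑ i ∈ Finset.range m, P ^ i * Q ^ (m - 1 - i) with hS
  have hgeom : S * (P - Q) = P ^ m - Q ^ m := geom_sum₂_mul P Q m
  -- each summand is monic of natDegree (m-1)*s
  have hterm : ∀ i ∈ Finset.range m, (P ^ i * Q ^ (m - 1 - i)).natDegree = (m - 1) * s ∧
      (P ^ i * Q ^ (m - 1 - i)).Monic := by
    intro i hi
    rw [Finset.mem_range] at hi
    have hmon : (P ^ i * Q ^ (m - 1 - i)).Monic := (hP.pow i).mul (hQ.pow _)
    refine ⟨?_, hmon⟩
    rw [natDegree_mul (hP.pow i).ne_zero (hQ.pow _).ne_zero, natDegree_pow, natDegree_pow,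
      hPd, hQd, ← Nat.add_mul]
    congr 1
    omega
  have hcoeff : S.coeff ((m - 1) * s) = (m : K) := by
    rw [hS, finset_sum_coeff]
    have : ∀ i ∈ Finset.range m, (P ^ i * Q ^ (m - 1 - i)).coeff ((m - 1) * s) = 1 := by
      intro i hi
      obtain ⟨hd, hmon⟩ := hterm i hi
      rw [← hd]
      exact hmon.coeff_natDegree
    rw [Finset.sum_congr rfl this]
    simp
  have hSne : S ≠ 0 := fun h0 => by
    have : S.coeff ((m - 1) * s) = 0 := by rw [h0]; simp
    rw [hcoeff] at this
    exact Nat.cast_ne_zero.mpr (by omega) this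
  have hSdeg : (((m - 1) * s : ℕ) : WithBot ℕ) ≤ S.degree := by
    apply le_degree_of_ne_zero
    rw [hcoeff]
    exact Nat.cast_ne_zero.mpr (by omega)
  have hlow : (P ^ m - Q ^ m).degree < (((m - 1) * s : ℕ) : WithBot ℕ) := by
    have : P ^ m - Q ^ m = (g - Q ^ m) - (g - P ^ m) := by ring
    rw [this]
    exact lt_of_le_of_lt (degree_sub_le _ _) (max_lt h2 h1)
  rw [← hgeom, degree_mul] at hlow
  have hDdeg : (0 : WithBot ℕ) ≤ (P - Q).degree := zero_le_degree_iff.mpr hD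
  have : (((m - 1) * s : ℕ) : WithBot ℕ) ≤ S.degree + (P - Q).degree := by
    calc (((m - 1) * s : ℕ) : WithBot ℕ) = ((m - 1) * s : ℕ) + 0 := by simp
      _ ≤ S.degree + (P - Q).degree := add_le_add hSdeg hDdeg
  exact absurd hlow (not_lt.mpr this)

lemma side_s5 {K : Type*} [Field K] [CharZero K] (m s d : ℕ) (hm : 1 ≤ m) (hs : 1 ≤ s) (hd : d ≠ 0)
    (F G : K[X]) (hF : F.Monic) (hFd : F.natDegree = d) (hG : G.Monic)
    (hGd : G.natDegree = m * s) :
    ∃ P : K[X], P.Monic ∧ P.natDegree = s ∧ (P.comp F).Monic ∧ (P.comp F).natDegree = s * d ∧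
      (G.comp F - (P.comp F) ^ m).degree < (((m - 1) * (s * d) : ℕ) : WithBot ℕ) := by
  obtain ⟨P, hP, hPd, hPlt⟩ := exists_approx_root m s hm hs G hG hGd
  have hFd0 : F.natDegree ≠ 0 := by rw [hFd]; exact hd
  have hcm : (P.comp F).Monic := hP.comp hF hFd0
  have hcd : (P.comp F).natDegree = s * d := by rw [natDegree_comp, hPd, hFd]
  refine ⟨P, hP, hPd, hcm, hcd, ?_⟩
  have hEcomp : G.comp F - (P.comp F) ^ m = (G - P ^ m).comp F := by
    rw [sub_comp, pow_comp]
  rw [hEcomp]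
  rcases eq_or_ne (G - P ^ m) 0 with hE0 | hEne
  · rw [hE0, zero_comp, degree_zero]
    exact WithBot.bot_lt_coe _
  · have hlcne : ((G - P ^ m).comp F).leadingCoeff ≠ 0 := by
      rw [leadingCoeff_comp hFd0, hF.leadingCoeff, one_pow, mul_one]
      exact mt leadingCoeff_eq_zero.mp hEne
    have hcompne : (G - P ^ m).comp F ≠ 0 := fun h0 => hlcne (by rw [h0]; simp)
    rw [degree_eq_natDegree hcompne, Nat.cast_lt, natDegree_comp, hFd]
    have hnd : (G - P ^ m).natDegree < (m - 1) * s := by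
      rw [natDegree_lt_iff_degree_lt hEne]
      exact hPlt
    calc (G - P ^ m).natDegree * d < ((m - 1) * s) * d :=
          (Nat.mul_lt_mul_right (Nat.pos_of_ne_zero hd)).mpr hnd
      _ = (m - 1) * (s * d) := by ring

theorem stmt_5 (K : Type*) [Field K] [CharZero K] (f₁ f₂ : K[X])
    (hf₁ : f₁.natDegree ≠ 0) (hf₂ : f₂.natDegree ≠ 0)
    (h : ∃ g₁ g₂ : K[X], g₁.natDegree ≠ 0 ∧ g₂.natDegree ≠ 0 ∧ g₁.comp f₁ = g₂.comp f₂) :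
    ∃ g₁ g₂ : K[X], g₁.natDegree ≠ 0 ∧ g₂.natDegree ≠ 0 ∧ g₁.comp f₁ = g₂.comp f₂ ∧
      (g₁.comp f₁).natDegree = Nat.lcm f₁.natDegree f₂.natDegree := by
  obtain ⟨g₁, g₂, hg₁, hg₂, hcomp⟩ := h
  set d₁ := f₁.natDegree with hd₁
  set d₂ := f₂.natDegree with hd₂
  set L := Nat.lcm d₁ d₂ with hL
  set N := (g₁.comp f₁).natDegree with hN
  have hN1 : N = g₁.natDegree * d₁ := by rw [hN, natDegree_comp]
  have hN2 : N = g₂.natDegree * d₂ := by rw [hN, hcomp, natDegree_comp]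
  have hNne : N ≠ 0 := by
    rw [hN1]; exact Nat.mul_ne_zero hg₁ hf₁
  have hLne : L ≠ 0 := Nat.lcm_ne_zero hf₁ hf₂
  have hLdvd : L ∣ N := Nat.lcm_dvd ⟨g₁.natDegree, by rw [hN1, mul_comm]⟩
    ⟨g₂.natDegree, by rw [hN2, mul_comm]⟩
  obtain ⟨m, hmN⟩ := hLdvd
  have hm : 1 ≤ m := Nat.one_le_iff_ne_zero.mpr (fun h0 => hNne (by rw [hmN, h0, mul_zero]))
  obtain ⟨s₁, hs₁⟩ : d₁ ∣ L := Nat.dvd_lcm_left d₁ d₂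
  obtain ⟨s₂, hs₂⟩ : d₂ ∣ L := Nat.dvd_lcm_right d₁ d₂
  have hs₁0 : 1 ≤ s₁ := Nat.one_le_iff_ne_zero.mpr
    (fun h0 => hLne (by rw [hs₁, h0, mul_zero]))
  have hs₂0 : 1 ≤ s₂ := Nat.one_le_iff_ne_zero.mpr
    (fun h0 => hLne (by rw [hs₂, h0, mul_zero]))
  have hn₁ : g₁.natDegree = m * s₁ := by
    have : g₁.natDegree * d₁ = (m * s₁) * d₁ := by
      rw [← hN1, hmN, hs₁]; ring
    exact Nat.eq_of_mul_eq_mul_right (Nat.pos_of_ne_zero hf₁) this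
  have hn₂ : g₂.natDegree = m * s₂ := by
    have : g₂.natDegree * d₂ = (m * s₂) * d₂ := by
      rw [← hN2, hmN, hs₂]; ring
    exact Nat.eq_of_mul_eq_mul_right (Nat.pos_of_ne_zero hf₂) this
  -- normalization to monic
  have hf₁ne : f₁ ≠ 0 := fun h0 => hf₁ (by rw [hd₁, h0, natDegree_zero])
  have hf₂ne : f₂ ≠ 0 := fun h0 => hf₂ (by rw [hd₂, h0, natDegree_zero])
  set c₁ := f₁.leadingCoeff with hc₁
  set c₂ := f₂.leadingCoeff with hc₂
  have hc₁ne : c₁ ≠ 0 := mt leadingCoeff_eq_zero.mp hf₁ne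
  have hc₂ne : c₂ ≠ 0 := mt leadingCoeff_eq_zero.mp hf₂ne
  have hh0ne : g₁.comp f₁ ≠ 0 := fun h0 => hNne (by rw [hN, h0, natDegree_zero])
  set e : K := (g₁.comp f₁).leadingCoeff with he
  have hene : e ≠ 0 := mt leadingCoeff_eq_zero.mp hh0ne
  set F₁ : K[X] := C c₁⁻¹ * f₁ with hF₁
  set F₂ : K[X] := C c₂⁻¹ * f₂ with hF₂
  have hF₁m : F₁.Monic := by
    rw [Monic, hF₁, leadingCoeff_mul, leadingCoeff_C, ← hc₁, inv_mul_cancel₀ hc₁ne]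
  have hF₂m : F₂.Monic := by
    rw [Monic, hF₂, leadingCoeff_mul, leadingCoeff_C, ← hc₂, inv_mul_cancel₀ hc₂ne]
  have hF₁d : F₁.natDegree = d₁ := by rw [hF₁, natDegree_C_mul (inv_ne_zero hc₁ne)]
  have hF₂d : F₂.natDegree = d₂ := by rw [hF₂, natDegree_C_mul (inv_ne_zero hc₂ne)]
  set G₁ : K[X] := C e⁻¹ * (g₁.comp (C c₁ * X)) with hG₁
  set G₂ : K[X] := C e⁻¹ * (g₂.comp (C c₂ * X)) with hG₂
  have hcf₁ : (C c₁ * X).comp F₁ = f₁ := by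
    rw [mul_comp, C_comp, X_comp, hF₁, ← mul_assoc, ← C_mul, mul_inv_cancel₀ hc₁ne, C_1, one_mul]
  have hcf₂ : (C c₂ * X).comp F₂ = f₂ := by
    rw [mul_comp, C_comp, X_comp, hF₂, ← mul_assoc, ← C_mul, mul_inv_cancel₀ hc₂ne, C_1, one_mul]
  have hG₁comp : G₁.comp F₁ = C e⁻¹ * (g₁.comp f₁) := by
    rw [hG₁, mul_comp, C_comp, comp_assoc, hcf₁]
  have hG₂comp : G₂.comp F₂ = C e⁻¹ * (g₁.comp f₁) := by
    rw [hG₂, mul_comp, C_comp, comp_assoc, hcf₂, hcomp]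
  set H : K[X] := C e⁻¹ * (g₁.comp f₁) with hH
  have hHm : H.Monic := by
    rw [Monic, hH, leadingCoeff_mul, leadingCoeff_C, ← he, inv_mul_cancel₀ hene]
  have hHd : H.natDegree = N := by rw [hH, natDegree_C_mul (inv_ne_zero hene), hN]
  have hG₁d : G₁.natDegree = m * s₁ := by
    rw [hG₁, natDegree_C_mul (inv_ne_zero hene), natDegree_comp, natDegree_C_mul_X _ hc₁ne,
      mul_one, hn₁]
  have hG₂d : G₂.natDegree = m * s₂ := by
    rw [hG₂, natDegree_C_mul (inv_ne_zero hene), natDegree_comp, natDegree_C_mul_X _ hc₂ne,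
      mul_one, hn₂]
  have hG₁m : G₁.Monic := by
    have h1 : (G₁.comp F₁).leadingCoeff = G₁.leadingCoeff * F₁.leadingCoeff ^ G₁.natDegree :=
      leadingCoeff_comp (by rw [hF₁d]; exact hf₁)
    rw [hG₁comp] at h1
    rw [Monic] at hHm ⊢
    rw [hHm, hF₁m.leadingCoeff, one_pow, mul_one] at h1
    exact h1.symm
  have hG₂m : G₂.Monic := by
    have h1 : (G₂.comp F₂).leadingCoeff = G₂.leadingCoeff * F₂.leadingCoeff ^ G₂.natDegree :=
      leadingCoeff_comp (by rw [hF₂d]; exact hf₂)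
    rw [hG₂comp] at h1
    rw [Monic] at hHm ⊢
    rw [hHm, hF₂m.leadingCoeff, one_pow, mul_one] at h1
    exact h1.symm
  -- apply the approximate-root machinery on both sides
  obtain ⟨P₁, hP₁m, hP₁d, hH₁m, hH₁d, hH₁lt⟩ :=
    side_s5 m s₁ d₁ hm hs₁0 hf₁ F₁ G₁ hF₁m hF₁d hG₁m hG₁d
  obtain ⟨P₂, hP₂m, hP₂d, hH₂m, hH₂d, hH₂lt⟩ :=
    side_s5 m s₂ d₂ hm hs₂0 hf₂ F₂ G₂ hF₂m hF₂d hG₂m hG₂d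
  rw [hG₁comp] at hH₁lt
  rw [hG₂comp] at hH₂lt
  have hsd₁ : s₁ * d₁ = L := by rw [hs₁, mul_comm]
  have hsd₂ : s₂ * d₂ = L := by rw [hs₂, mul_comm]
  have huniq : P₁.comp F₁ = P₂.comp F₂ := by
    refine approx_uniq m L hm H _ _ hH₁m hH₂m (by rw [hH₁d, hsd₁]) (by rw [hH₂d, hsd₂]) ?_ ?_
    · rw [← hsd₁]; exact hH₁lt
    · rw [← hsd₂]; exact hH₂lt
  -- final answers
  refine ⟨P₁.comp (C c₁⁻¹ * X), P₂.comp (C c₂⁻¹ * X), ?_, ?_, ?_, ?_⟩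
  · rw [natDegree_comp, natDegree_C_mul_X _ (inv_ne_zero hc₁ne), mul_one, hP₁d]; omega
  · rw [natDegree_comp, natDegree_C_mul_X _ (inv_ne_zero hc₂ne), mul_one, hP₂d]; omega
  · rw [comp_assoc, comp_assoc, mul_comp, C_comp, X_comp, mul_comp, C_comp, X_comp,
      ← hF₁, ← hF₂]
    exact huniq
  · rw [comp_assoc, mul_comp, C_comp, X_comp, ← hF₁, natDegree_comp, hP₁d, hF₁d, hsd₁]
end

section
/- Let K be a field of characteristic p > 0 and let n be a positive integer not divisible by p. Let d be the multiplicative order of p^r modulo n. Then (x^{p^{rd}} − x)^n is a common composite of x^n and x^{p^r} − x over K, and no common composite has smaller degree. -/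
open Polynomial

-- dvd lemma
lemma aux_dvd (p n r d : ℕ) (hp : 0 < p) (hn : 0 < n)
    (hd : d = orderOf ((p : ZMod n) ^ r)) : n ∣ p ^ (r * d) - 1 := by
  have h1 : ((p : ZMod n) ^ r) ^ d = 1 := hd ▸ pow_orderOf_eq_one _
  have h2 : ((p ^ (r * d) : ℕ) : ZMod n) = ((1 : ℕ) : ZMod n) := by
    push_cast
    rw [pow_mul]
    exact h1
  rw [ZMod.natCast_eq_natCast_iff] at h2
  exact (Nat.modEq_iff_dvd' (Nat.one_le_pow _ _ hp)).mp h2.symm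

-- iterate fixed points
lemma aux_iter {L : Type*} [Monoid L] {c : L} {p r : ℕ} (hc : c ^ p ^ r = c) (k : ℕ) :
    c ^ p ^ (r * k) = c := by
  induction k with
  | zero => simp
  | succ k ih => rw [Nat.mul_succ, pow_add, pow_mul, ih, hc]

-- telescoping composition
lemma aux_telescope (R : Type*) [CommRing R] (p : ℕ) [hp : Fact p.Prime] [CharP R p]
    (r : ℕ) (d : ℕ) :
    ((Finset.range (d + 1)).sum fun i => (X : R[X]) ^ (p ^ (r * i))).comp (X ^ (p ^ r) - X)
      = X ^ (p ^ (r * (d + 1))) - X := by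
  induction d with
  | zero => simp
  | succ k ih =>
    rw [Finset.sum_range_succ, add_comp, ih, pow_comp, X_comp,
      sub_pow_char_pow, ← pow_mul]
    have h : p ^ r * p ^ (r * (k + 1)) = p ^ (r * (k + 1 + 1)) := by
      rw [← pow_add]; congr 1; ring
    rw [h]
    ring

/-- The subfield of fixed points of `x ↦ x ^ p ^ m`. -/
def fixedSubfield (L : Type*) [Field L] (p : ℕ) [hp : Fact p.Prime] [CharP L p] (m : ℕ) :
    Subfield L where
  carrier := {x | x ^ p ^ m = x}
  mul_mem' := by
    intro a b (ha : _ = _) (hb : _ = _)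
    show (a * b) ^ p ^ m = a * b
    rw [mul_pow, ha, hb]
  one_mem' := one_pow _
  add_mem' := by
    intro a b (ha : _ = _) (hb : _ = _)
    show (a + b) ^ p ^ m = a + b
    rw [add_pow_char_pow, ha, hb]
  zero_mem' := zero_pow (pow_ne_zero _ hp.out.ne_zero)
  neg_mem' := by
    intro a (ha : _ = _)
    show (-a) ^ p ^ m = -a
    rw [neg_eq_neg_one_mul, mul_pow, neg_one_pow_char_pow, ha, ← neg_eq_neg_one_mul]
  inv_mem' := by
    intro a (ha : _ = _)
    show a⁻¹ ^ p ^ m = a⁻¹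
    rw [inv_pow, ha]

lemma mem_fixedSubfield {L : Type*} [Field L] {p : ℕ} [hp : Fact p.Prime] [CharP L p] {m : ℕ}
    {x : L} : x ∈ fixedSubfield L p m ↔ x ^ p ^ m = x := Iff.rfl

lemma aux_natDegree {L : Type*} [Field L] (m : ℕ) (hm : 2 ≤ m) :
    ((X : L[X]) ^ m - X).natDegree = m := by
  rw [natDegree_sub_eq_left_of_natDegree_lt, natDegree_X_pow]
  rw [natDegree_X, natDegree_X_pow]
  omega

lemma aux_ne_zero {L : Type*} [Field L] (m : ℕ) (hm : 2 ≤ m) :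
    ((X : L[X]) ^ m - X) ≠ 0 := by
  intro h0
  have := aux_natDegree (L := L) m hm
  rw [h0, natDegree_zero] at this
  omega


lemma aux_lower (L : Type*) [Field L] [IsAlgClosed L] (p : ℕ) (hp : Fact p.Prime) [CharP L p]
    (n r d : ℕ) (hn : 0 < n) (hpn : ¬ p ∣ n) (hr : 0 < r) (hdpos : 0 < d)
    (hd : d = orderOf ((p : ZMod n) ^ r))
    (H G₁ G₂ : L[X]) (h₁ : G₁.natDegree ≠ 0)
    (e₁ : G₁.comp (X ^ n) = H) (e₂ : G₂.comp (X ^ (p ^ r) - X) = H) :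
    n * p ^ (r * d) ≤ H.natDegree := by
  classical
  have hp2 : 2 ≤ p := hp.out.two_le
  have hq2 : 2 ≤ p ^ r := by
    calc 2 = 2 ^ 1 := rfl
    _ ≤ p ^ r := Nat.pow_le_pow_left hp2 1 |>.trans (Nat.pow_le_pow_right (by omega) hr)
  -- primitive root of unity
  haveI : NeZero (n : L) := ⟨fun h => hpn ((CharP.cast_eq_zero_iff L p n).mp h)⟩
  obtain ⟨ζ, hζ⟩ := HasEnoughRootsOfUnity.exists_primitiveRoot L n
  have hζn : ζ ^ n = 1 := hζ.pow_eq_one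
  -- invariance properties of H
  have hscale : ∀ z : L, z ^ n = 1 → H.comp (C z * X) = H := by
    intro z hz
    conv_lhs => rw [← e₁, comp_assoc]
    rw [← e₁]
    congr 1
    rw [pow_comp, X_comp, mul_pow, ← C_pow, hz, map_one, one_mul]
  have htrans : ∀ c : L, c ^ p ^ r = c → H.comp (X + C c) = H := by
    intro c hc
    conv_lhs => rw [← e₂, comp_assoc]
    rw [← e₂]
    congr 1
    rw [sub_comp, pow_comp, X_comp, add_pow_char_pow, ← C_pow, hc]
    ring
  have hmulz : ∀ (z a : L), z ^ n = 1 → H.comp (X + C a) = H → H.comp (X + C (z * a)) = H := by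
    intro z a hz ha
    have hz0 : z ≠ 0 := by
      rintro rfl
      rw [zero_pow hn.ne'] at hz
      exact zero_ne_one hz
    have hz' : z⁻¹ ^ n = 1 := by rw [inv_pow, hz, inv_one]
    have key : (X + C (z * a) : L[X]) = ((C z * X).comp (X + C a)).comp (C z⁻¹ * X) := by
      simp only [mul_comp, add_comp, C_comp, X_comp]
      rw [mul_add, ← mul_assoc, ← C_mul, mul_inv_cancel₀ hz0, map_one, one_mul, ← C_mul]
    rw [key, ← comp_assoc, ← comp_assoc, hscale z hz, ha, hscale z⁻¹ hz']
  -- the subgroup generated by ζ-power multiples of fixed points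
  set S : Set L := {x | ∃ (i : ℕ) (c : L), c ^ p ^ r = c ∧ x = ζ ^ i * c} with hS
  set T : AddSubgroup L := AddSubgroup.closure S with hT
  have hζfix : ζ ^ p ^ (r * d) = ζ := by
    obtain ⟨k, hk⟩ := aux_dvd p n r d (by omega) hn hd
    have h1 : p ^ (r * d) = n * k + 1 := by
      have := Nat.one_le_pow (r * d) p (by omega)
      omega
    rw [h1, pow_add, pow_mul, hζn, one_pow, pow_one, one_mul]
  have hTfix : ∀ x ∈ T, x ^ p ^ (r * d) = x := by
    intro x hx
    have hle : T ≤ (fixedSubfield L p (r * d)).toAddSubgroup := by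
      rw [hT]
      refine (AddSubgroup.closure_le _).mpr ?_
      rintro x ⟨i, c, hc, rfl⟩
      show (ζ ^ i * c) ^ p ^ (r * d) = ζ ^ i * c
      rw [mul_pow, ← pow_mul, mul_comm i _, pow_mul, hζfix, aux_iter hc]
    exact hle hx
  have hTmul : ∀ x ∈ T, ∀ y ∈ T, x * y ∈ T := by
    intro x hx
    refine AddSubgroup.closure_induction (p := fun x _ => ∀ y ∈ T, x * y ∈ T) ?_ ?_ ?_ ?_ hx
    · rintro x ⟨i, c, hc, rfl⟩ y hy
      refine AddSubgroup.closure_induction (p := fun y _ => ζ ^ i * c * y ∈ T) ?_ ?_ ?_ ?_ hy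
      · rintro y ⟨j, c', hc', rfl⟩
        have heq : ζ ^ i * c * (ζ ^ j * c') = ζ ^ (i + j) * (c * c') := by
          rw [pow_add]; ring
        rw [heq]
        exact AddSubgroup.subset_closure ⟨i + j, c * c', by rw [mul_pow, hc, hc'], rfl⟩
      · show ζ ^ i * c * 0 ∈ T
        rw [mul_zero]; exact T.zero_mem
      · intro u v _ _ hu hv
        show ζ ^ i * c * (u + v) ∈ T
        rw [mul_add]; exact T.add_mem hu hv
      · intro u _ hu
        show ζ ^ i * c * (-u) ∈ T
        rw [mul_neg]; exact T.neg_mem hu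
    · intro y hy; rw [zero_mul]; exact T.zero_mem
    · intro u v _ _ hu hv y hy
      show (u + v) * y ∈ T
      rw [add_mul]; exact T.add_mem (hu y hy) (hv y hy)
    · intro u _ hu y hy
      show (-u) * y ∈ T
      rw [neg_mul]; exact T.neg_mem (hu y hy)
  have hT1 : (1 : L) ∈ T :=
    AddSubgroup.subset_closure ⟨0, 1, one_pow _, by rw [pow_zero, one_mul]⟩
  have hTpow : ∀ x ∈ T, ∀ k : ℕ, x ^ k ∈ T := by
    intro x hx k
    induction k with
    | zero => simpa using hT1
    | succ k ih => rw [pow_succ]; exact hTmul _ ih _ hx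
  have hqrd2 : 2 ≤ p ^ (r * d) := by
    calc 2 = 2 ^ 1 := rfl
    _ ≤ p ^ (r * d) :=
      (Nat.pow_le_pow_left hp2 1).trans (Nat.pow_le_pow_right (by omega) (Nat.mul_pos hr hdpos))
  set E : Subfield L :=
    { carrier := T
      mul_mem' := fun ha hb => hTmul _ ha _ hb
      one_mem' := hT1
      add_mem' := fun ha hb => T.add_mem ha hb
      zero_mem' := T.zero_mem
      neg_mem' := fun ha => T.neg_mem ha
      inv_mem' := by
        intro x hx
        rcases eq_or_ne x 0 with rfl | hx0
        · rw [inv_zero]; exact T.zero_mem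
        · have h2 : x ^ p ^ (r * d) = x := hTfix x hx
          have h1 : x ^ (p ^ (r * d) - 1) = 1 := by
            have h3 : x ^ (p ^ (r * d) - 1) * x = 1 * x := by
              rw [← pow_succ, Nat.sub_add_cancel (by omega), h2, one_mul]
            exact mul_right_cancel₀ hx0 h3
          have h4 : x⁻¹ = x ^ (p ^ (r * d) - 2) := by
            apply inv_eq_of_mul_eq_one_right
            rw [← pow_succ']
            rw [show p ^ (r * d) - 2 + 1 = p ^ (r * d) - 1 by omega]
            exact h1
          rw [h4]
          exact hTpow x hx _ } with hE
  have hFE : ∀ c : L, c ^ p ^ r = c → c ∈ E := fun c hc =>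
    AddSubgroup.subset_closure ⟨0, c, hc, by rw [pow_zero, one_mul]⟩
  have hζE : ζ ∈ E :=
    AddSubgroup.subset_closure ⟨1, 1, one_pow _, by rw [pow_one, mul_one]⟩
  have hEA : ∀ a : L, a ∈ E → H.comp (X + C a) = H := by
    intro a ha
    refine AddSubgroup.closure_induction (p := fun a _ => H.comp (X + C a) = H) ?_ ?_ ?_ ?_ ha
    · rintro x ⟨i, c, hc, rfl⟩
      show H.comp (X + C (ζ ^ i * c)) = H
      induction i with
      | zero => rw [pow_zero, one_mul]; exact htrans c hc
      | succ i ih => rw [pow_succ, mul_comm (ζ ^ i) ζ, mul_assoc]; exact hmulz ζ _ hζn ih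
    · show H.comp (X + C 0) = H
      rw [map_zero, add_zero, comp_X]
    · intro u v _ _ hu hv
      show H.comp (X + C (u + v)) = H
      have heq : (X + C (u + v) : L[X]) = (X + C u).comp (X + C v) := by
        simp only [add_comp, X_comp, C_comp, map_add]
        ring
      rw [heq, ← comp_assoc, hu, hv]
    · intro u _ hu
      show H.comp (X + C (-u)) = H
      have h2 : H.comp (X + C (-u)) = (H.comp (X + C u)).comp (X + C (-u)) := by rw [hu]
      rw [h2, comp_assoc]
      have heq : (X + C u : L[X]).comp (X + C (-u)) = X := by
        simp only [add_comp, X_comp, C_comp, map_neg]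
        ring
      rw [heq, comp_X]
  -- E is finite
  have hEfin : (E : Set L).Finite := by
    apply Set.Finite.subset (Polynomial.rootSet_finite (X ^ p ^ (r * d) - X : L[X]) L)
    intro x hx
    rw [Polynomial.mem_rootSet]
    refine ⟨aux_ne_zero _ hqrd2, ?_⟩
    have := hTfix x hx
    simp only [map_sub, map_pow, aeval_X]
    rw [this, sub_self]
  haveI : Finite (↥E) := hEfin.to_subtype
  letI : Fintype (↥E) := Fintype.ofFinite _
  set F := fixedSubfield L p r with hF
  have hFfin : (F : Set L).Finite := by
    apply Set.Finite.subset (Polynomial.rootSet_finite (X ^ p ^ r - X : L[X]) L)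
    intro x hx
    rw [Polynomial.mem_rootSet]
    refine ⟨aux_ne_zero _ hq2, ?_⟩
    have : x ^ p ^ r = x := hx
    simp only [map_sub, map_pow, aeval_X]
    rw [this, sub_self]
  haveI : Finite (↥F) := hFfin.to_subtype
  letI : Fintype (↥F) := Fintype.ofFinite _
  have hFle : F ≤ E := fun c hc => hFE c hc
  letI : Algebra ↥F ↥E := (Subfield.inclusion hFle).toAlgebra
  have hcardF : Fintype.card ↥F = p ^ r := by
    have hder : derivative ((X : L[X]) ^ p ^ r - X) = -1 := by
      rw [derivative_sub, derivative_X_pow, derivative_X]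
      have hc0 : ((p ^ r : ℕ) : L) = 0 :=
        (CharP.cast_eq_zero_iff L p _).mpr (dvd_pow_self p hr.ne')
      rw [hc0, map_zero, zero_mul, zero_sub]
    have hsep : ((X : L[X]) ^ p ^ r - X).Separable := by
      show IsCoprime _ _
      rw [hder]
      exact (isCoprime_one_right).neg_right
    have h1 : Fintype.card (((X : L[X]) ^ p ^ r - X).rootSet L) = p ^ r := by
      rw [card_rootSet_eq_natDegree hsep (IsAlgClosed.splits _), aux_natDegree _ hq2]
    have hsetEq : (((X : L[X]) ^ p ^ r - X).rootSet L) = (F : Set L) := by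
      ext x
      rw [Polynomial.mem_rootSet]
      simp only [map_sub, map_pow, aeval_X, sub_eq_zero]
      constructor
      · exact fun h => h.2
      · exact fun h => ⟨aux_ne_zero _ hq2, h⟩
    rw [← h1]
    exact Fintype.card_congr (Equiv.setCongr hsetEq.symm)
  have hcardE : Fintype.card ↥E = (p ^ r) ^ (Module.finrank ↥F ↥E) := by
    rw [← hcardF]
    exact Module.card_eq_pow_finrank
  set e := Module.finrank ↥F ↥E with he
  have hne : n ∣ (p ^ r) ^ e - 1 := by
    have hζE' : (⟨ζ, hζE⟩ : ↥E) ≠ 0 := by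
      intro h0
      exact hζ.ne_zero hn.ne' (congrArg Subtype.val h0)
    have h1 : (⟨ζ, hζE⟩ : ↥E) ^ (Fintype.card ↥E - 1) = 1 :=
      FiniteField.pow_card_sub_one_eq_one _ hζE'
    have h2 : ζ ^ (Fintype.card ↥E - 1) = 1 := by
      have h3 := congrArg Subtype.val h1
      rwa [SubmonoidClass.coe_pow] at h3
    have h3 : n ∣ Fintype.card ↥E - 1 := (hζ.pow_eq_one_iff_dvd _).mp h2
    rwa [hcardE] at h3
  have hdvd_e : d ∣ e := by
    rw [hd]
    apply orderOf_dvd_of_pow_eq_one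
    have h5 : (1 : ℕ) ≡ (p ^ r) ^ e [MOD n] :=
      (Nat.modEq_iff_dvd' (Nat.one_le_pow _ _ (by positivity))).mpr hne
    have h6 : (((p ^ r) ^ e : ℕ) : ZMod n) = ((1 : ℕ) : ZMod n) :=
      ((ZMod.natCast_eq_natCast_iff _ _ _).mpr h5).symm
    push_cast at h6
    exact h6
  have hepos : 0 < e := by
    rcases Nat.eq_zero_or_pos e with h0 | h
    · exfalso
      have h2 : (1 : ℕ) < Fintype.card ↥E := Fintype.one_lt_card
      rw [hcardE, h0, pow_zero] at h2
      omega
    · exact h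
  have hcard_ge : p ^ (r * d) ≤ Fintype.card ↥E := by
    rw [hcardE, pow_mul]
    exact Nat.pow_le_pow_right (by positivity) (Nat.le_of_dvd hepos hdvd_e)
  -- choose b outside E
  obtain ⟨b, hbE⟩ := (hEfin.infinite_compl).nonempty
  -- H is nonconstant
  have hHdeg : H.natDegree ≠ 0 := by
    rw [← e₁, natDegree_comp, natDegree_X_pow]
    exact Nat.mul_ne_zero h₁ hn.ne'
  set P : L[X] := H - C (H.eval b) with hP
  have hP0 : P ≠ 0 := by
    intro h0
    apply hHdeg
    rw [sub_eq_zero] at h0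
    rw [h0, natDegree_C]
  have hProots : ∀ (i : ℕ) (a : L), a ∈ E → IsRoot P (ζ ^ i * b + a) := by
    intro i a ha
    have c1 : H.comp (X + C a) = H := hEA a ha
    have c2 : H.comp (C (ζ ^ i) * X) = H := by
      apply hscale
      rw [← pow_mul, mul_comm, pow_mul, hζn, one_pow]
    have h1 : H.eval (ζ ^ i * b + a) = H.eval b := by
      calc H.eval (ζ ^ i * b + a) = (H.comp (X + C a)).eval (ζ ^ i * b) := by
            rw [eval_comp]; simp
        _ = H.eval (ζ ^ i * b) := by rw [c1]
        _ = (H.comp (C (ζ ^ i) * X)).eval b := by rw [eval_comp]; simp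
        _ = H.eval b := by rw [c2]
    show P.eval _ = 0
    rw [hP, eval_sub, eval_C, h1, sub_self]
  haveI : NeZero n := ⟨hn.ne'⟩
  set f : ZMod n × ↥E → L := fun w => ζ ^ (w.1.val) * b + ↑w.2 with hf
  have hfinj : Function.Injective f := by
    rintro ⟨i, a⟩ ⟨j, a'⟩ hw
    simp only [hf] at hw
    by_cases hij : ζ ^ i.val = ζ ^ j.val
    · have hi : i = j := ZMod.val_injective n (hζ.pow_inj (ZMod.val_lt i) (ZMod.val_lt j) hij)
      subst hi
      have ha : (a : L) = a' := by
        rw [hij] at hw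
        exact add_left_cancel hw
      exact Prod.ext rfl (Subtype.ext ha)
    · exfalso
      apply hbE
      have h1 : (ζ ^ i.val - ζ ^ j.val) * b = (a' : L) - a := by linear_combination hw
      have h2 : b = (ζ ^ i.val - ζ ^ j.val)⁻¹ * ((a' : L) - a) := by
        rw [← h1, ← mul_assoc, inv_mul_cancel₀ (sub_ne_zero.mpr hij), one_mul]
      rw [h2]
      exact E.mul_mem (E.inv_mem (E.sub_mem (E.pow_mem hζE _) (E.pow_mem hζE _)))
        (E.sub_mem a'.2 a.2)
  calc n * p ^ (r * d) ≤ n * Fintype.card ↥E := Nat.mul_le_mul_left n hcard_ge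
    _ = Fintype.card (ZMod n × ↥E) := by rw [Fintype.card_prod, ZMod.card]
    _ = (Finset.image f Finset.univ).card := by
        rw [Finset.card_image_of_injective _ hfinj, Finset.card_univ]
    _ ≤ P.roots.toFinset.card := by
        apply Finset.card_le_card
        intro x hx
        rw [Finset.mem_image] at hx
        obtain ⟨⟨i, a⟩, _, rfl⟩ := hx
        rw [Multiset.mem_toFinset, mem_roots hP0]
        exact hProots i.val a a.2
    _ ≤ Multiset.card P.roots := P.roots.toFinset_card_le
    _ ≤ P.natDegree := P.card_roots'
    _ = H.natDegree := by rw [hP, natDegree_sub_C]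




theorem stmt_6 (K : Type*) [Field K] (p : ℕ) (hp : p.Prime) [CharP K p]
    (n r : ℕ) (hn : 0 < n) (hpn : ¬ p ∣ n) (hr : 0 < r)
    (d : ℕ) (hd : d = orderOf ((p : ZMod n) ^ r)) :
    (∃ g₁ g₂ : K[X], g₁.natDegree ≠ 0 ∧ g₂.natDegree ≠ 0 ∧
      g₁.comp (X ^ n) = (X ^ (p ^ (r * d)) - X) ^ n ∧
      g₂.comp (X ^ (p ^ r) - X) = (X ^ (p ^ (r * d)) - X) ^ n) ∧
    ∀ h : K[X], (∃ g₁ g₂ : K[X], g₁.natDegree ≠ 0 ∧ g₂.natDegree ≠ 0 ∧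
        g₁.comp (X ^ n) = h ∧ g₂.comp (X ^ (p ^ r) - X) = h) →
      ((X ^ (p ^ (r * d)) - X) ^ n : K[X]).natDegree ≤ h.natDegree := by
  haveI : Fact p.Prime := ⟨hp⟩
  haveI : NeZero n := ⟨hn.ne'⟩
  have hdpos : 0 < d := by
    rw [hd]
    have hu : IsUnit ((p : ZMod n) ^ r) := (ZMod.isUnit_prime_of_not_dvd hp hpn).pow r
    rw [← hu.unit_spec, orderOf_units]
    exact orderOf_pos _
  have hq1 : 1 ≤ p ^ (r * d) := Nat.one_le_pow _ _ hp.pos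
  have hq2 : 2 ≤ p ^ (r * d) :=
    le_trans hp.two_le (Nat.le_self_pow (Nat.mul_pos hr hdpos).ne' p)
  have hqr2 : 2 ≤ p ^ r := le_trans hp.two_le (Nat.le_self_pow hr.ne' p)
  have hdvd : n ∣ p ^ (r * d) - 1 := aux_dvd p n r d hp.pos hn hd
  have hdegRHS : ((X ^ p ^ (r * d) - X : K[X]) ^ n).natDegree = n * p ^ (r * d) := by
    rw [natDegree_pow, aux_natDegree _ hq2]
  have hpos : 0 < n * p ^ (r * d) := by positivity
  constructor
  · obtain ⟨m, hm⟩ := hdvd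
    have hc1 : (X * ((X : K[X]) ^ m - 1) ^ n).comp (X ^ n) = (X ^ p ^ (r * d) - X) ^ n := by
      rw [mul_comp, X_comp, pow_comp, sub_comp, pow_comp, X_comp, one_comp]
      rw [← mul_pow]
      congr 1
      rw [← pow_mul, mul_sub, mul_one, ← pow_succ']
      rw [show n * m + 1 = p ^ (r * d) by omega]
    have hc2 : ((∑ i ∈ Finset.range d, (X : K[X]) ^ p ^ (r * i)) ^ n).comp (X ^ p ^ r - X)
        = (X ^ p ^ (r * d) - X) ^ n := by
      rw [pow_comp]
      congr 1
      obtain ⟨d', rfl⟩ : ∃ d', d = d' + 1 := ⟨d - 1, by omega⟩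
      exact aux_telescope K p r d'
    have hdeg1 : (X * ((X : K[X]) ^ m - 1) ^ n).natDegree ≠ 0 := by
      intro h0
      have h1 : ((X * ((X : K[X]) ^ m - 1) ^ n).comp (X ^ n)).natDegree = n * p ^ (r * d) := by
        rw [hc1, hdegRHS]
      rw [natDegree_comp, natDegree_X_pow, h0, zero_mul] at h1
      omega
    have hdeg2 : ((∑ i ∈ Finset.range d, (X : K[X]) ^ p ^ (r * i)) ^ n).natDegree ≠ 0 := by
      intro h0
      have h1 : (((∑ i ∈ Finset.range d, (X : K[X]) ^ p ^ (r * i)) ^ n).comp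
          (X ^ p ^ r - X)).natDegree = n * p ^ (r * d) := by
        rw [hc2, hdegRHS]
      rw [natDegree_comp, aux_natDegree (L := K) _ hqr2, h0, zero_mul] at h1
      omega
    exact ⟨_, _, hdeg1, hdeg2, hc1, hc2⟩
  · rintro h ⟨g₁', g₂', h1, h2, e1, e2⟩
    rw [hdegRHS]
    set L := AlgebraicClosure K
    letI : CharP L p := charP_of_injective_algebraMap (algebraMap K L).injective p
    have e1' : ((g₁'.map (algebraMap K L)).comp (X ^ n)) = h.map (algebraMap K L) := by
      rw [← e1, Polynomial.map_comp, Polynomial.map_pow, map_X]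
    have e2' : ((g₂'.map (algebraMap K L)).comp (X ^ p ^ r - X)) = h.map (algebraMap K L) := by
      rw [← e2, Polynomial.map_comp, Polynomial.map_sub, Polynomial.map_pow, map_X]
    have h1' : (g₁'.map (algebraMap K L)).natDegree ≠ 0 := by
      rw [natDegree_map]; exact h1
    have hfin := aux_lower L p ⟨hp⟩ n r d hn hpn hr hdpos hd (h.map (algebraMap K L)) _ _
      h1' e1' e2'
    rwa [natDegree_map] at hfin
end

section
/- Let K be a field of characteristic p > 0 with p not dividing nm, where n, m > 1. Let d be the multiplicative order of p modulo lcm(m, n). Then (x^{p^d} − x)^{lcm(m,n)} is a common composite of x^n and (x−1)^m over K, and no common composite has smaller degree. -/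
open Polynomial

section Helpers

/-- If a finitely supported counting function on an additive group is invariant under
translation by a finite subgroup, the total count is divisible by the subgroup order. -/
lemma card_dvd_sum' {A : Type*} [AddCommGroup A] (V : AddSubgroup A) [Fintype ↥V]
    (s : Finset A) (c : A → ℕ) (hs : ∀ a, a ∈ s ↔ c a ≠ 0)
    (hinv : ∀ v ∈ V, ∀ a, c (a + v) = c a) :
    Fintype.card ↥V ∣ ∑ a ∈ s, c a := by
  classical
  rw [← Finset.sum_fiberwise_of_maps_to (t := s.image (QuotientAddGroup.mk (s := V)))
      (fun x hx => Finset.mem_image_of_mem _ hx) c]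
  apply Finset.dvd_sum
  intro b hb
  obtain ⟨a₀, ha₀s, ha₀⟩ := Finset.mem_image.mp hb
  have hfib : Finset.filter (fun i => (QuotientAddGroup.mk i : A ⧸ V) = b) s
      = Finset.image (fun v : ↥V => a₀ + ↑v) Finset.univ := by
    ext x
    simp only [Finset.mem_filter, Finset.mem_image, Finset.mem_univ, true_and]
    constructor
    · rintro ⟨hxs, hxb⟩
      have : -a₀ + x ∈ V := by
        rw [← QuotientAddGroup.eq]
        rw [ha₀.symm] at hxb; exact hxb.symm
      exact ⟨⟨-a₀ + x, this⟩, by simp⟩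
    · rintro ⟨v, rfl⟩
      constructor
      · rw [hs, hinv v v.2 a₀, ← hs]; exact ha₀s
      · rw [← ha₀]
        symm
        rw [QuotientAddGroup.eq]
        simpa using v.2
  rw [hfib, Finset.sum_image (by intro x _ y _ hxy; exact Subtype.ext (by simpa using hxy))]
  have : ∀ v : ↥V, c (a₀ + ↑v) = c a₀ := fun v => hinv v v.2 a₀
  rw [Finset.sum_congr rfl (fun v _ => this v), Finset.sum_const, smul_eq_mul]
  exact Dvd.intro _ rfl

lemma comp_linear' {A : Type*} [CommRing A] (u s u' s' : A) :
    (C u * X + C s).comp (C u' * X + C s') = C (u*u') * X + C (u*s' + s) := by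
  simp [mul_comp, add_comp, C_comp, X_comp, map_mul, map_add]; ring

lemma inv_stab' {A : Type*} [CommRing A] {H σ σ' : A[X]} (h1 : H.comp σ = H)
    (h2 : σ.comp σ' = X) : H.comp σ' = H := by
  calc H.comp σ' = (H.comp σ).comp σ' := by rw [h1]
    _ = H.comp (σ.comp σ') := comp_assoc _ _ _
    _ = H := by rw [h2, comp_X]

lemma compP' {A : Type*} [CommRing A] {H : A[X]} {u s u' s' : A}
    (h1 : H.comp (C u * X + C s) = H) (h2 : H.comp (C u' * X + C s') = H) :
    H.comp (C (u*u') * X + C (u*s' + s)) = H := by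
  rw [← comp_linear', ← comp_assoc, h1, h2]

lemma inv_linear' {A : Type*} [Field A] {H : A[X]} {u c : A} (hu : u ≠ 0)
    (hσ : H.comp (C u * X + C c) = H) :
    H.comp (C u⁻¹ * X + C (-(c/u))) = H := by
  apply inv_stab' hσ
  rw [comp_linear', mul_inv_cancel₀ hu]
  have : u * -(c / u) + c = 0 := by field_simp; ring
  rw [this, map_zero, add_zero, map_one, one_mul]

/-- conjugation: if `H` is invariant under `x ↦ u x + c` and under `x ↦ x + t`,
then it is invariant under `x ↦ x + u t`. -/
lemma conj_mem' {A : Type*} [Field A] {H : A[X]} {u c : A} (hu : u ≠ 0)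
    (hσ : H.comp (C u * X + C c) = H) {t : A} (ht : H.comp (X + C t) = H) :
    H.comp (X + C (u * t)) = H := by
  have ht' : H.comp (C 1 * X + C t) = H := by rwa [map_one, one_mul]
  have e1 : H.comp (C (u * 1) * X + C (u * t + c)) = H := compP' hσ ht'
  have e2 := compP' e1 (inv_linear' hu hσ)
  rw [mul_one] at e2
  rw [mul_inv_cancel₀ hu, map_one, one_mul] at e2
  have : u * -(c / u) + (u * t + c) = u * t := by field_simp; ring
  rwa [this] at e2

lemma rm_le_shift' {A : Type*} [Field A] {H : A[X]} (w b : A)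
    (hne : H.comp (X + C w) ≠ 0) :
    rootMultiplicity b H ≤ rootMultiplicity (b - w) (H.comp (X + C w)) := by
  rw [le_rootMultiplicity_iff hne]
  obtain ⟨R, hR⟩ := pow_rootMultiplicity_dvd H b
  refine ⟨R.comp (X + C w), ?_⟩
  conv_lhs => rw [hR]
  rw [mul_comp, pow_comp, sub_comp, X_comp, C_comp, map_sub]
  ring

lemma rm_shift' {A : Type*} [Field A] {H : A[X]} (hH : H ≠ 0) (v a : A)
    (hv : H.comp (X + C v) = H) : rootMultiplicity (a + v) H = rootMultiplicity a H := by
  have hvneg : H.comp (X + C (-v)) = H := by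
    apply inv_stab' hv
    rw [add_comp, X_comp, C_comp]
    simp [← C_add]
  apply le_antisymm
  · have := rm_le_shift' v (a + v) (by rwa [hv])
    rwa [add_sub_cancel_right, hv] at this
  · have := rm_le_shift' (-v) a (by rwa [hvneg])
    rwa [sub_neg_eq_add, hvneg] at this

end Helpers

theorem stmt_7 (K : Type*) [Field K] (p : ℕ) (hp : p.Prime) [CharP K p]
    (n m : ℕ) (hn : 1 < n) (hm : 1 < m) (hpnm : ¬ p ∣ n * m)
    (d : ℕ) (hd : d = orderOf (p : ZMod (Nat.lcm m n))) :
    (∃ g₁ g₂ : K[X], g₁.natDegree ≠ 0 ∧ g₂.natDegree ≠ 0 ∧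
      g₁.comp (X ^ n) = (X ^ (p ^ d) - X) ^ (Nat.lcm m n) ∧
      g₂.comp ((X - 1) ^ m) = (X ^ (p ^ d) - X) ^ (Nat.lcm m n)) ∧
    ∀ h : K[X], (∃ g₁ g₂ : K[X], g₁.natDegree ≠ 0 ∧ g₂.natDegree ≠ 0 ∧
        g₁.comp (X ^ n) = h ∧ g₂.comp ((X - 1) ^ m) = h) →
      ((X ^ (p ^ d) - X) ^ (Nat.lcm m n) : K[X]).natDegree ≤ h.natDegree := by
  classical
  haveI := Fact.mk hp
  set L := Nat.lcm m n with hL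
  set q := p ^ d with hq
  have hL0 : 0 < L := Nat.pos_of_ne_zero (Nat.lcm_ne_zero (by omega) (by omega))
  have hmL : m ∣ L := Nat.dvd_lcm_left _ _
  have hnL : n ∣ L := Nat.dvd_lcm_right _ _
  have hL1 : 1 < L := lt_of_lt_of_le hm (Nat.le_of_dvd hL0 hmL)
  haveI : NeZero L := ⟨by omega⟩
  have hpn : ¬ p ∣ n := fun h => hpnm (h.mul_right m)
  have hpm : ¬ p ∣ m := fun h => hpnm (h.mul_left n)
  have hpL : ¬ p ∣ L := by
    intro h
    rcases (Nat.Prime.dvd_mul hp).mp (h.trans (Nat.lcm_dvd (Dvd.intro_left n rfl) (Dvd.intro m rfl))) with h'|h'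
    exacts [hpn h', hpm h']
  have hcop : Nat.Coprime p L := (Nat.Prime.coprime_iff_not_dvd hp).mpr hpL
  have hdpos : 0 < d := by
    rw [hd, ← ZMod.coe_unitOfCoprime p hcop, orderOf_units]
    exact orderOf_pos _
  have hq1 : ((q : ℕ) : ZMod L) = 1 := by
    rw [hq, hd, Nat.cast_pow, pow_orderOf_eq_one]
  have hq2 : 2 ≤ q := hp.two_le.trans (Nat.le_self_pow (by omega) p)
  have hLq : L ∣ q - 1 := by
    have : ((q - 1 : ℕ) : ZMod L) = 0 := by
      push_cast [Nat.one_le_iff_ne_zero.mpr (by omega : q ≠ 0)]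
      rw [hq1]; ring
    exact (ZMod.natCast_eq_zero_iff _ _).mp this
  have hnq : n ∣ q - 1 := hnL.trans hLq
  have hmq : m ∣ q - 1 := hmL.trans hLq
  have hLq1 : L ≤ q - 1 := Nat.le_of_dvd (by omega) hLq
  have hq1L : 1 < q := by omega
  have hXq : ((X : K[X]) ^ q - X) = X * (X ^ (q-1) - 1) := by
    have hq' : q - 1 + 1 = q := by omega
    rw [mul_sub, mul_one, ← pow_succ', hq']
  have key : ∀ k : ℕ, k ∣ L → k ∣ q - 1 → 0 < k →
      (X ^ (L / k) * (X ^ ((q-1) / k) - 1) ^ L : K[X]).comp (X ^ k)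
        = X ^ L * (X ^ (q-1) - 1) ^ L := by
    intro k hkL hkq hk0
    rw [mul_comp, pow_comp, pow_comp, sub_comp, pow_comp, X_comp, one_comp,
        ← pow_mul, ← pow_mul, Nat.mul_div_cancel' hkL,
        Nat.mul_div_cancel' hkq]
  have hfact : ((X : K[X]) ^ q - X) ^ L = X ^ L * (X ^ (q-1) - 1) ^ L := by
    rw [hXq, mul_pow]
  have hdegXqX : ((X : K[X]) ^ q - X).natDegree = q := by
    rw [natDegree_sub_eq_left_of_natDegree_lt, natDegree_X_pow]
    rw [natDegree_X, natDegree_X_pow]; omega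
  have hdegT : (((X : K[X]) ^ q - X) ^ L).natDegree = q * L := by
    rw [natDegree_pow, hdegXqX, mul_comm]
  have hws : q * L ≠ 0 := by positivity
  have hcomp2 : ∀ g : K[X], g.comp (X ^ m) = X ^ L * (X ^ (q-1) - 1) ^ L →
      g.comp ((X - 1) ^ m) = (X ^ q - X) ^ L := by
    intro g hg
    have h1 : ((X : K[X]) ^ m).comp (X - 1) = (X - 1) ^ m := by
      rw [pow_comp, X_comp]
    rw [← h1, ← comp_assoc, hg]
    rw [mul_comp, pow_comp, pow_comp, sub_comp, pow_comp, X_comp, one_comp]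
    have hfrob : ((X : K[X]) - 1) ^ q = X ^ q - 1 := by
      rw [hq, sub_pow_char_pow, one_pow]
    have hstep : ((X : K[X]) - 1) * ((X - 1) ^ (q-1) - 1) = X ^ q - X := by
      have hq' : q - 1 + 1 = q := by omega
      rw [mul_sub, mul_one, ← pow_succ', hq', hfrob]
      ring
    rw [← mul_pow, hstep]
  constructor
  · refine ⟨X ^ (L / n) * (X ^ ((q-1) / n) - 1) ^ L, X ^ (L / m) * (X ^ ((q-1) / m) - 1) ^ L,
      ?_, ?_, ?_, ?_⟩
    rotate_left 2
    · rw [key n hnL hnq (by omega), hfact]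
    · exact hcomp2 _ (key m hmL hmq (by omega))
    · intro hdeg0
      have h2 := natDegree_comp (p := (X ^ (L / n) * (X ^ ((q-1) / n) - 1) ^ L : K[X])) (q := X ^ n)
      rw [key n hnL hnq (by omega), ← hfact, hdegT, hdeg0, zero_mul] at h2
      exact hws h2
    · intro hdeg0
      have h2 := natDegree_comp (p := (X ^ (L / m) * (X ^ ((q-1) / m) - 1) ^ L : K[X])) (q := (X - 1) ^ m)
      rw [hcomp2 _ (key m hmL hmq (by omega)), hdegT, hdeg0, zero_mul] at h2
      exact hws h2
  -- minimality
  rintro h ⟨g₁, g₂, hg₁, hg₂, hc₁, hc₂⟩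
  rw [hdegT]
  set D := h.natDegree with hD
  have hdeg1 : D = g₁.natDegree * n := by
    rw [hD, ← hc₁, natDegree_comp, natDegree_X_pow]
  have hdegXm : (((X : K[X]) - 1) ^ m).natDegree = m := by
    rw [natDegree_pow]
    have : ((X : K[X]) - 1) = X - C 1 := by rw [map_one]
    rw [this, natDegree_X_sub_C, mul_one]
  have hdeg2 : D = g₂.natDegree * m := by
    rw [hD, ← hc₂, natDegree_comp, hdegXm]
  have hDpos : 0 < D := by
    rw [hdeg1]
    exact Nat.pos_of_ne_zero (by simp [hg₁]; omega)
  have hnD : n ∣ D := Dvd.intro_left _ hdeg1.symm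
  have hmD : m ∣ D := Dvd.intro_left _ hdeg2.symm
  have hLD : L ∣ D := Nat.lcm_dvd hmD hnD
  -- pass to the algebraic closure
  set A := AlgebraicClosure K with hA
  set φ : K →+* A := algebraMap K A with hφ
  haveI : CharP A p := charP_of_injective_algebraMap (algebraMap K A).injective p
  set H : A[X] := h.map φ with hHdef
  have hHdeg : H.natDegree = D := natDegree_map φ
  have hHne : H ≠ 0 := by
    intro h0
    have : h = 0 := map_injective φ φ.injective (by rw [Polynomial.map_zero]; exact h0)
    rw [hD, this, natDegree_zero] at hDpos
    omega
  have hH1 : H = (g₁.map φ).comp (X ^ n) := by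
    rw [hHdef, ← hc₁, Polynomial.map_comp, Polynomial.map_pow, map_X]
  have hH2 : H = (g₂.map φ).comp ((X - 1) ^ m) := by
    rw [hHdef, ← hc₂, Polynomial.map_comp, Polynomial.map_pow, Polynomial.map_sub, map_X,
      Polynomial.map_one]
  -- primitive roots of unity
  have hprim : ∀ k : ℕ, 1 < k → ¬ p ∣ k → ∃ z : A, IsPrimitiveRoot z k := by
    intro k hk hpk
    set k' : ℕ+ := ⟨k, by omega⟩ with hk'
    have hnz : NeZero (((k' : ℕ+) : ℕ) : A) := by
      refine ⟨?_⟩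
      simpa [hk', CharP.cast_eq_zero_iff A p] using hpk
    haveI : NeZero (k : A) := hnz
    obtain ⟨r, hr⟩ := IsAlgClosed.exists_root (cyclotomic k A)
      (degree_cyclotomic_pos k A (by omega)).ne.symm
    exact ⟨r, isRoot_cyclotomic_iff.mp hr⟩
  obtain ⟨a, haprim⟩ := hprim n hn hpn
  obtain ⟨b, hbprim⟩ := hprim m hm hpm
  have han : a ^ n = 1 := haprim.pow_eq_one
  have hbm : b ^ m = 1 := hbprim.pow_eq_one
  have ha0 : a ≠ 0 := haprim.ne_zero (by omega)
  have hb0 : b ≠ 0 := hbprim.ne_zero (by omega)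
  have ha1 : a ≠ 1 := haprim.ne_one hn
  have hb1 : b ≠ 1 := hbprim.ne_one hm
  -- invariances
  have Hα : H.comp (C a * X + C 0) = H := by
    rw [map_zero, add_zero, hH1, comp_assoc]
    congr 1
    rw [pow_comp, X_comp, mul_pow, ← map_pow, han, map_one, one_mul]
  have Hβ : H.comp (C b * X + C (1 - b)) = H := by
    rw [hH2, comp_assoc]
    congr 1
    have : ((X : A[X]) - 1).comp (C b * X + C (1 - b)) = C b * (X - 1) := by
      rw [sub_comp, X_comp, one_comp, map_sub, map_one]
      ring
    rw [pow_comp, this, mul_pow, ← map_pow, hbm, map_one, one_mul]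
  -- the translation stabilizer subgroup
  set T : AddSubgroup A :=
    { carrier := {t : A | H.comp (X + C t) = H}
      zero_mem' := by simp
      add_mem' := by
        intro x y hx hy
        simp only [Set.mem_setOf_eq] at hx hy ⊢
        have e1 : H.comp (C 1 * X + C x) = H := by rwa [map_one, one_mul]
        have e2 : H.comp (C 1 * X + C y) = H := by rwa [map_one, one_mul]
        have := compP' e1 e2
        rw [mul_one, map_one, one_mul, one_mul] at this
        rwa [add_comm y x] at this
      neg_mem' := by
        intro x hx
        simp only [Set.mem_setOf_eq] at hx ⊢
        apply inv_stab' hx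
        rw [add_comp, X_comp, C_comp]
        simp [← C_add] } with hT
  have hmemT : ∀ t : A, t ∈ T ↔ H.comp (X + C t) = H := fun t => Iff.rfl
  have haT : ∀ t ∈ T, a * t ∈ T := by
    intro t ht
    exact conj_mem' ha0 Hα ht
  have hbT : ∀ t ∈ T, b * t ∈ T := by
    intro t ht
    exact conj_mem' hb0 Hβ ht
  -- the basic translation t₀
  set t₀ : A := (1 - b) * (a - 1) with ht₀
  have ht₀ne : t₀ ≠ 0 := mul_ne_zero (sub_ne_zero.mpr (Ne.symm hb1)) (sub_ne_zero.mpr ha1)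
  have ht₀T : t₀ ∈ T := by
    have e1 : H.comp (C (a * b) * X + C (a * (1 - b) + 0)) = H := compP' Hα Hβ
    have e2 : H.comp (C (b * a) * X + C (b * 0 + (1 - b))) = H := compP' Hβ Hα
    rw [mul_comm b a, mul_zero, zero_add] at e2
    have e3 := compP' e1 (inv_linear' (mul_ne_zero ha0 hb0) e2)
    rw [mul_inv_cancel₀ (mul_ne_zero ha0 hb0), map_one, one_mul] at e3
    have : a * b * -((1 - b) / (a * b)) + (a * (1 - b) + 0) = t₀ := by
      rw [ht₀, mul_neg, mul_div_cancel₀ _ (mul_ne_zero ha0 hb0)]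
      ring
    rwa [this] at e3
  -- the finite subring generated by a and b
  letI : Algebra (ZMod p) A := ZMod.algebra A p
  set M : Set A := Set.range (fun ij : Fin n × Fin m => a ^ (ij.1 : ℕ) * b ^ (ij.2 : ℕ)) with hM
  have hMfin : M.Finite := Set.finite_range _
  set S : Submodule (ZMod p) A := Submodule.span (ZMod p) M with hS
  have hmemM : ∀ i j : ℕ, a ^ i * b ^ j ∈ S := by
    intro i j
    apply Submodule.subset_span
    refine ⟨(⟨i % n, Nat.mod_lt _ (by omega)⟩, ⟨j % m, Nat.mod_lt _ (by omega)⟩), ?_⟩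
    simp only
    rw [← pow_eq_pow_mod i han, ← pow_eq_pow_mod j hbm]
  have h1S : (1:A) ∈ S := by simpa using hmemM 0 0
  have haS : a ∈ S := by simpa using hmemM 1 0
  have hbS : b ∈ S := by simpa using hmemM 0 1
  have hSS : S * S ≤ S := by
    rw [hS, Submodule.span_mul_span]
    apply Submodule.span_le.mpr
    rintro _ ⟨_, ⟨⟨i, j⟩, rfl⟩, _, ⟨⟨k, l⟩, rfl⟩, rfl⟩
    show a ^ (i:ℕ) * b ^ (j:ℕ) * (a ^ (k:ℕ) * b ^ (l:ℕ)) ∈ (Submodule.span (ZMod p) M : Set A)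
    have heq : a ^ (i:ℕ) * b ^ (j:ℕ) * (a ^ (k:ℕ) * b ^ (l:ℕ))
        = a ^ ((i:ℕ) + (k:ℕ)) * b ^ ((j:ℕ) + (l:ℕ)) := by
      rw [pow_add, pow_add]; ring
    rw [heq]
    exact hS ▸ hmemM _ _
  set Sring : Subring A :=
    { carrier := (S : Set A)
      one_mem' := h1S
      mul_mem' := fun hx hy => hSS (Submodule.mul_mem_mul hx hy)
      zero_mem' := S.zero_mem
      add_mem' := fun hx hy => S.add_mem hx hy
      neg_mem' := fun hx => S.neg_mem hx } with hSring
  haveI : Module.Finite (ZMod p) ↥S := Module.Finite.span_of_finite _ hMfin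
  haveI hSfin : Finite ↥S := Module.finite_of_finite (ZMod p)
  haveI : Finite ↥Sring := hSfin
  haveI : Fintype ↥Sring := Fintype.ofFinite _
  haveI : Nonempty ↥Sring := ⟨1⟩
  letI : Field ↥Sring := Fintype.fieldOfDomain _
  haveI : CharP ↥Sring p := CharP.subring A p Sring
  obtain ⟨e, -, hcarde⟩ := FiniteField.card ↥Sring p
  have hane : (⟨a, haS⟩ : ↥Sring) ≠ 0 := fun hh => ha0 (by simpa [Subtype.ext_iff] using hh)
  have hbne : (⟨b, hbS⟩ : ↥Sring) ≠ 0 := fun hh => hb0 (by simpa [Subtype.ext_iff] using hh)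
  have haxx : a ^ (Fintype.card ↥Sring - 1) = 1 := by
    have := FiniteField.pow_card_sub_one_eq_one _ hane
    have := congrArg Subtype.val this
    simpa using this
  have hbxx : b ^ (Fintype.card ↥Sring - 1) = 1 := by
    have := FiniteField.pow_card_sub_one_eq_one _ hbne
    have := congrArg Subtype.val this
    simpa using this
  have hncard : n ∣ Fintype.card ↥Sring - 1 := haprim.dvd_of_pow_eq_one _ haxx
  have hmcard : m ∣ Fintype.card ↥Sring - 1 := hbprim.dvd_of_pow_eq_one _ hbxx
  have hLcard : L ∣ p ^ (e:ℕ) - 1 := hcarde ▸ Nat.lcm_dvd hmcard hncard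
  have hpe1 : 1 ≤ p ^ (e:ℕ) := Nat.one_le_pow _ _ hp.pos
  have hpeL : ((p : ZMod L)) ^ (e:ℕ) = 1 := by
    have h0 : ((p ^ (e:ℕ) - 1 : ℕ) : ZMod L) = 0 :=
      (ZMod.natCast_eq_zero_iff _ _).mpr hLcard
    have h1 : ((p ^ (e:ℕ) : ℕ) : ZMod L) = 1 := by
      have he : p ^ (e:ℕ) = (p ^ (e:ℕ) - 1) + 1 := by omega
      rw [he, Nat.cast_add, h0, Nat.cast_one, zero_add]
    simpa [Nat.cast_pow] using h1
  have hde : d ∣ (e:ℕ) := hd ▸ orderOf_dvd_of_pow_eq_one hpeL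
  have hqcard : q ∣ Fintype.card ↥Sring := hcarde ▸ (hq ▸ pow_dvd_pow p (Nat.le_of_dvd e.pos hde))
  -- the translation subgroup V
  set V : AddSubgroup A := AddSubgroup.map (AddMonoidHom.mulLeft t₀) Sring.toAddSubgroup with hV
  have hVset : (V : Set A) = (fun x => t₀ * x) '' (S : Set A) := by
    rw [hV, AddSubgroup.coe_map]
    rfl
  have hVfinset : (V : Set A).Finite := by
    rw [hVset]
    exact Set.Finite.image _ ((S : Set A).toFinite)
  haveI : Fintype ↥V := hVfinset.fintype
  have hcardV : Fintype.card ↥V = Fintype.card ↥Sring := by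
    rw [← Nat.card_eq_fintype_card, ← Nat.card_eq_fintype_card]
    have e1 : Nat.card ↥V = (V : Set A).ncard := Nat.card_coe_set_eq _
    have e2 : Nat.card ↥Sring = (S : Set A).ncard := Nat.card_coe_set_eq _
    rw [e1, e2, hVset, Set.ncard_image_of_injective _ (mul_right_injective₀ ht₀ne)]
  -- V is contained in the translation stabilizer
  have haTpow : ∀ t ∈ T, ∀ i : ℕ, a ^ i * t ∈ T := by
    intro t ht i
    induction i with
    | zero => simpa using ht
    | succ k ih =>
      have := haT _ ih
      rwa [← mul_assoc, ← pow_succ'] at this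
  have hbTpow : ∀ t ∈ T, ∀ i : ℕ, b ^ i * t ∈ T := by
    intro t ht i
    induction i with
    | zero => simpa using ht
    | succ k ih =>
      have := hbT _ ih
      rwa [← mul_assoc, ← pow_succ'] at this
  have hVT : ∀ v ∈ V, v ∈ T := by
    intro v hv
    obtain ⟨x, hx, rfl⟩ := AddSubgroup.mem_map.mp hv
    have hx' : x ∈ S := hx
    show t₀ * x ∈ T
    clear hv hx
    induction hx' using Submodule.span_induction with
    | mem y hy =>
      obtain ⟨⟨i, j⟩, rfl⟩ := hy
      have : t₀ * (a ^ (i:ℕ) * b ^ (j:ℕ)) = a ^ (i:ℕ) * (b ^ (j:ℕ) * t₀) := by ring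
      rw [this]
      exact haTpow _ (hbTpow _ ht₀T _) _
    | zero => simpa using T.zero_mem
    | add y z _ _ hy hz =>
      rw [mul_add]
      exact T.add_mem hy hz
    | smul c y _ hy =>
      have hc : c • y = (c.val : ℕ) • y := by
        rw [← Nat.cast_smul_eq_nsmul (ZMod p) (c.val) y, ZMod.natCast_val, ZMod.cast_id]
      rw [hc, mul_smul_comm]
      exact T.nsmul_mem hy _
  -- counting roots
  have hsum : ∑ x ∈ H.roots.toFinset, H.roots.count x = D := by
    rw [Multiset.toFinset_sum_count_eq]
    rw [splits_iff_card_roots.mp (IsAlgClosed.splits H), hHdeg]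
  have hdvdD := card_dvd_sum' V H.roots.toFinset (fun x => H.roots.count x)
    (fun x => by
        constructor
        · intro hx
          exact Multiset.count_ne_zero.mpr (Multiset.mem_toFinset.mp hx)
        · intro hx
          exact Multiset.mem_toFinset.mpr (Multiset.count_ne_zero.mp hx))
    (fun v hv x => by
      show H.roots.count (x + v) = H.roots.count x
      rw [count_roots, count_roots]
      exact rm_shift' hHne v x (hVT v hv))
  rw [hsum, hcardV] at hdvdD
  have hqD : q ∣ D := hqcard.trans hdvdD
  have hcopqL : Nat.Coprime q L := hq ▸ Nat.Coprime.pow_left _ hcop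
  exact Nat.le_of_dvd hDpos (Nat.Coprime.mul_dvd_of_dvd_of_dvd hcopqL hqD hLD)
end

section
/- Let K be a field of characteristic p > 0. Any two polynomials f₁, f₂ ∈ K[x] of degree 2 have a common composite of degree 2p. -/
open Polynomial

private lemma deg2_eq {K : Type*} [Field K] (f : K[X]) (hf : f.natDegree = 2) :
    f = C (f.coeff 2) * X ^ 2 + C (f.coeff 1) * X + C (f.coeff 0) := by
  ext n
  rcases n with _ | _ | _ | n
  · simp
  · simp [coeff_C]
  · simp [coeff_C, coeff_X_pow]
  · rw [coeff_eq_zero_of_natDegree_lt (by omega)]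
    simp [coeff_C, coeff_X_pow, coeff_X]

private lemma comp_lin {K : Type*} [Field K] (f : K[X]) (hf : f.natDegree = 2)
    (ha : f.coeff 2 ≠ 0) (h2 : (2 : K) ≠ 0) :
    (C (f.coeff 2)⁻¹ * X +
      C ((f.coeff 1 / (2 * f.coeff 2)) ^ 2 - f.coeff 0 / f.coeff 2)).comp f =
    (X + C (f.coeff 1 / (2 * f.coeff 2))) ^ 2 := by
  set a := f.coeff 2 with hadef
  set b := f.coeff 1 with hbdef
  set c := f.coeff 0 with hcdef
  rw [show f = C a * X ^ 2 + C b * X + C c from deg2_eq f hf]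
  simp only [add_comp, mul_comp, C_comp, X_comp]
  have E1 : C a⁻¹ * C a = 1 := by rw [← C_mul, inv_mul_cancel₀ ha, C_1]
  have E2 : C a⁻¹ * C b = 2 * C (b / (2 * a)) := by
    rw [← C_mul]
    rw [show (2 : K[X]) = C 2 from (map_ofNat C 2).symm]
    rw [← C_mul]
    congr 1
    field_simp
  have E3 : C a⁻¹ * C c + C ((b / (2 * a)) ^ 2 - c / a) = C ((b / (2 * a)) ^ 2) := by
    rw [← C_mul, ← C_add]
    congr 1
    field_simp
    ring
  have E4 : (C (b / (2 * a))) ^ 2 = C ((b / (2 * a)) ^ 2) := by rw [← C_pow]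
  linear_combination X ^ 2 * E1 + X * E2 + E3 - E4


private lemma psi_comp_sq {K : Type*} [Field K] (p : ℕ) (hodd : p % 2 = 1) (hp2 : 2 ≤ p)
    (u : K) :
    ((X : K[X]) ^ p - C (2 * u) * X ^ ((p + 1) / 2) + C (u * u) * X).comp (X ^ 2) =
      ((X : K[X]) ^ p - C u * X) ^ 2 := by
  simp only [add_comp, sub_comp, mul_comp, C_comp, X_comp, pow_comp]
  have h1 : ((X : K[X]) ^ 2) ^ p = (X ^ p) ^ 2 := by
    rw [← pow_mul, ← pow_mul, mul_comm]
  have h2 : ((X : K[X]) ^ 2) ^ ((p + 1) / 2) = X ^ p * X := by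
    rw [← pow_mul, show 2 * ((p + 1) / 2) = p + 1 by omega, pow_succ]
  rw [h1, h2, map_mul, map_mul, map_ofNat]
  ring

private lemma phi_comp_add {K : Type*} [Field K] (p : ℕ) [Fact p.Prime] [CharP K p]
    (r s : K) :
    ((X : K[X]) ^ p - C s * X).comp (X + C r) =
      ((X : K[X]) ^ p - C s * X) + C (r ^ p - s * r) := by
  simp only [sub_comp, add_comp, mul_comp, pow_comp, C_comp, X_comp]
  rw [add_pow_char, ← C_pow, map_sub, map_mul]
  ring

theorem stmt_8 (K : Type*) [Field K] (p : ℕ) (hp : p.Prime) [CharP K p]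
    (f₁ f₂ : K[X]) (hf₁ : f₁.natDegree = 2) (hf₂ : f₂.natDegree = 2) :
    ∃ g₁ g₂ : K[X], g₁.natDegree ≠ 0 ∧ g₂.natDegree ≠ 0 ∧
      g₁.comp f₁ = g₂.comp f₂ ∧ (g₁.comp f₁).natDegree = 2 * p := by
  haveI : Fact p.Prime := ⟨hp⟩
  have hne1 : f₁ ≠ 0 := fun h => by simp [h] at hf₁
  have hne2 : f₂ ≠ 0 := fun h => by simp [h] at hf₂
  have ha1 : f₁.coeff 2 ≠ 0 := by
    rw [← hf₁]; exact mt leadingCoeff_eq_zero.mp hne1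
  have ha2 : f₂.coeff 2 ≠ 0 := by
    rw [← hf₂]; exact mt leadingCoeff_eq_zero.mp hne2
  set a₁ := f₁.coeff 2 with ha1def
  set b₁ := f₁.coeff 1 with hb1def
  set c₁ := f₁.coeff 0 with hc1def
  set a₂ := f₂.coeff 2 with ha2def
  set b₂ := f₂.coeff 1 with hb2def
  set c₂ := f₂.coeff 0 with hc2def
  by_cases hp2 : p = 2
  · -- characteristic 2 case
    subst hp2
    have h2 : (2 : K[X]) = 0 := by
      have := CharP.cast_eq_zero K[X] 2
      exact_mod_cast this
    set u := a₁ * b₂ + a₂ * b₁ with hudef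
    set w := (a₂ ^ 2 * c₁ ^ 2 + b₂ * u * c₁) - (a₁ ^ 2 * c₂ ^ 2 + b₁ * u * c₂) with hwdef
    refine ⟨C (a₂ ^ 2) * X ^ 2 + C (b₂ * u) * X + C 0,
            C (a₁ ^ 2) * X ^ 2 + C (b₁ * u) * X + C w, ?_, ?_, ?_, ?_⟩
    · rw [natDegree_quadratic (pow_ne_zero 2 ha2)]; norm_num
    · rw [natDegree_quadratic (pow_ne_zero 2 ha1)]; norm_num
    · rw [show f₁ = C a₁ * X ^ 2 + C b₁ * X + C c₁ from deg2_eq f₁ hf₁,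
          show f₂ = C a₂ * X ^ 2 + C b₂ * X + C c₂ from deg2_eq f₂ hf₂]
      simp only [add_comp, sub_comp, mul_comp, C_comp, X_comp, pow_comp, zero_comp, hudef, hwdef,
        map_add, map_mul, map_sub, map_pow, map_zero]
      linear_combination (C a₂ ^ 2 * (C b₁ * C c₁ * X + C a₁ * C c₁ * X ^ 2 + C a₁ * C b₁ * X ^ 3)
        - C a₁ ^ 2 * (C b₂ * C c₂ * X + C a₂ * C c₂ * X ^ 2 + C a₂ * C b₂ * X ^ 3)) * h2
    · rw [natDegree_comp, natDegree_quadratic (pow_ne_zero 2 ha2), hf₁]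
  · -- odd characteristic case
    have hodd : p % 2 = 1 := Nat.odd_iff.mp (hp.odd_of_ne_two hp2)
    have hp3 : 3 ≤ p := by have := hp.two_le; omega
    have h2K : (2 : K) ≠ 0 := by
      intro h
      have hd : (p : ℕ) ∣ 2 := (CharP.cast_eq_zero_iff K p 2).mp (by exact_mod_cast h)
      have := Nat.le_of_dvd (by norm_num) hd
      have := hp.two_le
      omega
    have hfermat : (2 : K) ^ (p - 1) = 1 := by
      have h2p : (2 : K) ^ p = 2 := by
        have := add_pow_char (1 : K) 1 p
        norm_num at this
        exact this
      have hmul : (2 : K) ^ (p - 1) * 2 = 1 * 2 := by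
        rw [← pow_succ, show p - 1 + 1 = p by omega, h2p, one_mul]
      exact mul_right_cancel₀ h2K hmul
    set d₁ := b₁ / (2 * a₁) with hd1def
    set d₂ := b₂ / (2 * a₂) with hd2def
    set e := d₁ - d₂ with hedef
    set u := (2 * e) ^ (p - 1) with hudef
    set φ : K[X] := X ^ p - C u * X with hφdef
    set ψ : K[X] := X ^ p - C (2 * u) * X ^ ((p + 1) / 2) + C (u * u) * X with hψdef
    have hψφ : ψ.comp (X ^ 2) = φ ^ 2 := psi_comp_sq p hodd hp.two_le u
    have hue : u * e = e ^ p := by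
      rw [hudef, mul_pow, hfermat, one_mul, ← pow_succ, show p - 1 + 1 = p by omega]
    have hφe : φ.comp (X + C e) = φ := by
      rw [hφdef, phi_comp_add, show e ^ p - u * e = 0 by rw [hue]; ring, map_zero, add_zero]
    have base : ψ.comp ((X + C e) ^ 2) = ψ.comp (X ^ 2) := by
      calc ψ.comp ((X + C e) ^ 2)
          = (ψ.comp (X ^ 2)).comp (X + C e) := by
            rw [comp_assoc]
            congr 1
            simp [pow_comp]
        _ = (φ.comp (X + C e)) ^ 2 := by rw [hψφ, pow_comp]
        _ = φ ^ 2 := by rw [hφe]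
        _ = ψ.comp (X ^ 2) := hψφ.symm
    have c1 : ((X + C e) ^ 2).comp (X + C d₂) = ((X : K[X]) + C d₁) ^ 2 := by
      simp only [pow_comp, add_comp, X_comp, C_comp]
      rw [add_assoc, ← C_add, show d₂ + e = d₁ by rw [hedef]; ring]
    have c2 : ((X : K[X]) ^ 2).comp (X + C d₂) = ((X : K[X]) + C d₂) ^ 2 := by
      simp [pow_comp]
    have key : ψ.comp (((X : K[X]) + C d₁) ^ 2) = ψ.comp (((X : K[X]) + C d₂) ^ 2) := by
      calc ψ.comp (((X : K[X]) + C d₁) ^ 2)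
          = (ψ.comp ((X + C e) ^ 2)).comp (X + C d₂) := by rw [comp_assoc, c1]
        _ = (ψ.comp (X ^ 2)).comp (X + C d₂) := by rw [base]
        _ = ψ.comp (((X : K[X]) + C d₂) ^ 2) := by rw [comp_assoc, c2]
    set lam₁ : K[X] := C a₁⁻¹ * X + C (d₁ ^ 2 - c₁ / a₁) with hl1def
    set lam₂ : K[X] := C a₂⁻¹ * X + C (d₂ ^ 2 - c₂ / a₂) with hl2def
    have hl1 : lam₁.comp f₁ = ((X : K[X]) + C d₁) ^ 2 := comp_lin f₁ hf₁ ha1 h2K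
    have hl2 : lam₂.comp f₂ = ((X : K[X]) + C d₂) ^ 2 := comp_lin f₂ hf₂ ha2 h2K
    have hψdeg : ψ.natDegree = p := by
      apply le_antisymm
      · apply le_trans (natDegree_add_le _ _)
        rw [max_le_iff]
        constructor
        · apply le_trans (natDegree_sub_le _ _)
          rw [max_le_iff]
          refine ⟨by simp, ?_⟩
          exact le_trans (natDegree_C_mul_le _ _) (by rw [natDegree_X_pow]; omega)
        · exact le_trans (natDegree_C_mul_le _ _) (by rw [natDegree_X]; omega)
      · apply le_natDegree_of_ne_zero
        have e1 : ¬(p = (p + 1) / 2) := by omega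
        have e2 : ¬((1 : ℕ) = p) := by omega
        simp only [hψdef, coeff_add, coeff_sub, coeff_C_mul, coeff_X_pow, coeff_X]
        simp [e1, e2]
    have hldeg1 : lam₁.natDegree = 1 := natDegree_linear (inv_ne_zero ha1)
    have hldeg2 : lam₂.natDegree = 1 := natDegree_linear (inv_ne_zero ha2)
    refine ⟨ψ.comp lam₁, ψ.comp lam₂, ?_, ?_, ?_, ?_⟩
    · rw [natDegree_comp, hψdeg, hldeg1]
      have := hp.two_le; omega
    · rw [natDegree_comp, hψdeg, hldeg2]
      have := hp.two_le; omega
    · rw [comp_assoc, hl1, comp_assoc, hl2]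
      exact key
    · rw [comp_assoc, hl1, natDegree_comp, hψdeg, natDegree_pow, natDegree_X_add_C]
      ring
end

section
/- Let K be a field of characteristic p and a ≠ b elements of K. Then f₁ = x² + ax and f₂ = x² + bx have a common composite of degree 2p over K, and no common composite of degree less than 2p. (Equivalently: 1, f₁, f₂, f₁², f₂², …, f₁ⁿ, f₂ⁿ are linearly dependent over K if and only if n ≥ p.) -/
open Polynomial

section AuxStmt9

variable {K : Type*} [Field K]

private lemma quad_comp_stmt9 (a : K) :
    ((X:K[X])^2 + C a * X).comp (-X - C a) = X^2 + C a * X := by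
  simp only [add_comp, pow_comp, mul_comp, C_comp, X_comp]; ring

private lemma inv_small_stmt9 (h2 : (2:K) ≠ 0) (a : K) (H : K[X]) (hd : H.natDegree ≤ 1)
    (hinv : H.comp (-X - C a) = H) : H = C (H.coeff 0) := by
  have hE := eq_X_add_C_of_natDegree_le_one hd
  have h1 : H.coeff 1 = 0 := by
    have hc := congrArg (fun q => Polynomial.coeff q 1) hinv
    rw [hE] at hc
    simp only [add_comp, mul_comp, C_comp, X_comp] at hc
    simp only [coeff_add, coeff_C, mul_sub, mul_neg, coeff_sub, coeff_neg, coeff_C_mul,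
      coeff_X] at hc
    norm_num at hc
    have h3 : H.coeff 1 * 2 = 0 := by linear_combination -hc
    rcases mul_eq_zero.1 h3 with h | h
    · exact h
    · exact absurd h h2
  rw [hE, h1]; simp

private lemma quad_monic_stmt9 (a : K) : ((X:K[X])^2 + C a * X).Monic :=
  monic_X_pow_add (lt_of_le_of_lt (degree_C_mul_X_le a) (by norm_num))

private lemma quad_natDegree_stmt9 (a : K) : ((X:K[X])^2 + C a * X).natDegree = 2 := by
  compute_degree!

private lemma exists_comp_aux_stmt9 (h2 : (2:K) ≠ 0) (a : K) :
    ∀ n : ℕ, ∀ H : K[X], H.natDegree ≤ n → H.comp (-X - C a) = H →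
    ∃ g : K[X], g.comp (X^2 + C a * X) = H := by
  intro n
  induction n using Nat.strong_induction_on with
  | _ n ih =>
  intro H hn hinv
  by_cases hd : H.natDegree ≤ 1
  · exact ⟨C (H.coeff 0), by rw [C_comp, ← inv_small_stmt9 h2 a H hd hinv]⟩
  push_neg at hd
  set f : K[X] := X^2 + C a * X with hf
  have hmf : f.Monic := quad_monic_stmt9 a
  have hdf : f.natDegree = 2 := quad_natDegree_stmt9 a
  have hdf' : f.degree = 2 := by
    rw [degree_eq_natDegree hmf.ne_zero, hdf]; rfl
  set Q := H /ₘ f with hQ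
  set R := H %ₘ f with hR
  have hdiv : R + f * Q = H := modByMonic_add_div H f
  have hRd : R.degree < f.degree := degree_modByMonic_lt H hmf
  have hfinv : f.comp (-X - C a) = f := quad_comp_stmt9 a
  have hcomp : R.comp (-X - C a) + f * Q.comp (-X - C a) = H := by
    conv_lhs => rw [← hfinv]
    rw [← mul_comp, ← add_comp, hdiv, hinv]
  have hlin : (-X - C a : K[X]).natDegree = 1 := by compute_degree!
  have hRcd : (R.comp (-X - C a)).degree < f.degree := by
    rcases eq_or_ne (R.comp (-X - C a)) 0 with h | h
    · rw [h, degree_zero, hdf']; exact bot_lt_iff_ne_bot.2 (by simp)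
    · have hR0 : R ≠ 0 := by intro h0; rw [h0] at h; simp at h
      rw [degree_eq_natDegree h, natDegree_comp, hlin, mul_one, ← degree_eq_natDegree hR0]
      exact hRd
  have huniq := div_modByMonic_unique (Q.comp (-X - C a)) (R.comp (-X - C a)) hmf ⟨hcomp, hRcd⟩
  have hQinv : Q.comp (-X - C a) = Q := huniq.1.symm
  have hRinv : R.comp (-X - C a) = R := huniq.2.symm
  have hQd : Q.natDegree < n := by
    have h1 : Q.natDegree = H.natDegree - 2 := by rw [hQ, natDegree_divByMonic H hmf, hdf]
    omega
  obtain ⟨gQ, hgQ⟩ := ih Q.natDegree hQd Q le_rfl hQinv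
  have hRsmall : R.natDegree ≤ 1 := by
    by_cases h : R = 0
    · simp [h]
    · have := (degree_eq_natDegree h) ▸ hRd
      rw [hdf'] at this
      exact_mod_cast Nat.lt_succ_iff.1 (by exact_mod_cast this)
  have hRC : R = C (R.coeff 0) := inv_small_stmt9 h2 a R hRsmall hRinv
  refine ⟨X * gQ + C (R.coeff 0), ?_⟩
  rw [add_comp, mul_comp, X_comp, C_comp, hgQ, ← hRC, ← hdiv]
  ring

private lemma L_comp_neg_stmt9 (p : ℕ) (hp : p.Prime) [CharP K p] (hodd : Odd p) (c e : K) :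
    ((X:K[X])^p - C (c^(p-1)) * X).comp (-X - C e)
      = -(X^p - C (c^(p-1)) * X) - C (e^p - c^(p-1)*e) := by
  haveI : Fact p.Prime := ⟨hp⟩
  haveI : CharP K[X] p := Polynomial.instCharP p
  simp only [sub_comp, pow_comp, mul_comp, C_comp, X_comp]
  have h1 : (-X - C e : K[X]) = -(X + C e) := by ring
  rw [h1, hodd.neg_pow, add_pow_char, ← C_pow, map_sub, map_mul, map_pow]
  ring

private lemma dvd_of_translate_stmt9 (p : ℕ) [CharP K p] (c : K) (hc : c ≠ 0) (h : K[X])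
    (hne : h.natDegree ≠ 0) (hinv : h.comp (X + C c) = h) : p ∣ h.natDegree := by
  obtain ⟨m, hm⟩ : ∃ m, h.natDegree = m + 1 := ⟨h.natDegree - 1, by omega⟩
  have hh0 : h ≠ 0 := fun h0 => hne (by simp [h0])
  have hD : hasseDeriv m h = C (h.coeff m) + C ((m+1 : ℕ) * h.coeff (m+1)) * X := by
    ext j
    rw [hasseDeriv_coeff]
    match j with
    | 0 => simp
    | 1 =>
      have h1 : (1 + m).choose m = m + 1 := by
        rw [Nat.add_comm, Nat.choose_succ_self_right]
      simp [h1, Nat.add_comm 1 m]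
    | (j+2) =>
      have : h.coeff (j + 2 + m) = 0 := coeff_eq_zero_of_natDegree_lt (by omega)
      simp [this, coeff_one]
  have heval : (hasseDeriv m h).eval c = h.coeff m := by
    rw [← taylor_coeff, taylor_apply, hinv]
  rw [hD] at heval
  simp only [eval_add, eval_mul, eval_C, eval_X] at heval
  have hz : ((m+1 : ℕ) : K) * h.coeff (m+1) * c = 0 := by linear_combination heval
  have hlc : h.coeff (m+1) ≠ 0 := by
    rw [← hm]; exact mt leadingCoeff_eq_zero.1 hh0
  have hcast : ((m+1 : ℕ) : K) = 0 := by
    rcases mul_eq_zero.1 hz with h' | h'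
    · rcases mul_eq_zero.1 h' with h'' | h''
      · exact h''
      · exact absurd h'' hlc
    · exact absurd h' hc
  rw [hm]
  exact (CharP.cast_eq_zero_iff K p _).1 hcast

private lemma negb_comp_nega_stmt9 (a b : K) :
    ((-X - C b : K[X])).comp (-X - C a) = X + C (a - b) := by
  simp only [sub_comp, neg_comp, X_comp, C_comp, map_sub]; ring

end AuxStmt9

theorem stmt_9 (K : Type*) [Field K] (p : ℕ) (hp : p.Prime) [CharP K p]
    (a b : K) (hab : a ≠ b) :
    (∃ g₁ g₂ : K[X], g₁.natDegree ≠ 0 ∧ g₂.natDegree ≠ 0 ∧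
      g₁.comp (X ^ 2 + C a * X) = g₂.comp (X ^ 2 + C b * X) ∧
      (g₁.comp (X ^ 2 + C a * X)).natDegree = 2 * p) ∧
    (∀ g₁ g₂ : K[X], g₁.natDegree ≠ 0 → g₂.natDegree ≠ 0 →
      g₁.comp (X ^ 2 + C a * X) = g₂.comp (X ^ 2 + C b * X) →
      2 * p ≤ (g₁.comp (X ^ 2 + C a * X)).natDegree) := by
  have hc0 : a - b ≠ 0 := sub_ne_zero.2 hab
  have hfa : ((X:K[X])^2 + C a * X).natDegree = 2 := quad_natDegree_stmt9 a
  have hfb : ((X:K[X])^2 + C b * X).natDegree = 2 := quad_natDegree_stmt9 b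
  constructor
  · -- existence
    rcases eq_or_ne p 2 with hp2 | hp2
    · -- p = 2 : explicit quadratics
      subst hp2
      haveI : CharP K[X] 2 := Polynomial.instCharP 2
      refine ⟨X^2 + C (b*(a+b)) * X, X^2 + C (a*(a+b)) * X, ?_, ?_, ?_, ?_⟩
      · rw [quad_natDegree_stmt9]; norm_num
      · rw [quad_natDegree_stmt9]; norm_num
      · have htwo : (2 : K[X]) = 0 := by
          have := CharP.cast_eq_zero K[X] 2
          exact_mod_cast this
        simp only [add_comp, pow_comp, mul_comp, C_comp, X_comp, map_mul, map_add]
        linear_combination ((C a - C b) * X^3) * htwo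
      · rw [natDegree_comp, quad_natDegree_stmt9, hfa]
    · -- p odd
      have hodd : Odd p := hp.odd_of_ne_two hp2
      have hppos : 0 < p := hp.pos
      have h2K : (2:K) ≠ 0 := by
        intro h2
        have hdv : (p:ℕ) ∣ 2 := by
          apply (CharP.cast_eq_zero_iff K p 2).1
          exact_mod_cast h2
        exact hp2 ((Nat.prime_dvd_prime_iff_eq hp Nat.prime_two).1 hdv)
      set c : K := a - b with hcdef
      set L : K[X] := X^p - C (c^(p-1)) * X with hLdef
      set lam : K := a^p - c^(p-1)*a with hlamdef
      have hlamb : b^p - c^(p-1)*b = lam := by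
        haveI : Fact p.Prime := ⟨hp⟩
        have hcp : c^p = a^p - b^p := by rw [hcdef]; exact sub_pow_char a b
        have hpow : c^(p-1) * c = c^p := by
          have hppos : 0 < p := hp.pos
          rw [← pow_succ]; congr 1; omega
        rw [hlamdef]
        linear_combination hcp + hpow
      have hLa : L.comp (-X - C a) = -L - C lam := L_comp_neg_stmt9 p hp hodd c a
      have hLb : L.comp (-X - C b) = -L - C lam := by
        rw [hLdef, L_comp_neg_stmt9 p hp hodd c b, hlamb]
      set H : K[X] := L^2 + C lam * L with hHdef
      have hHa : H.comp (-X - C a) = H := by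
        rw [hHdef, add_comp, pow_comp, mul_comp, C_comp, hLa]; ring
      have hHb : H.comp (-X - C b) = H := by
        rw [hHdef, add_comp, pow_comp, mul_comp, C_comp, hLb]; ring
      have hLm : L.Monic := by
        rw [hLdef, sub_eq_add_neg]
        exact monic_X_pow_add (by
          rw [degree_neg]
          exact lt_of_le_of_lt (degree_C_mul_X_le _) (by exact_mod_cast hp.one_lt))
      have hCXlt : (-(C (c^(p-1)) * X) : K[X]).natDegree < (X^p : K[X]).natDegree := by
        rw [natDegree_neg, natDegree_X_pow]
        exact lt_of_le_of_lt (le_trans (natDegree_C_mul_le _ _) (by simp [natDegree_X])) hp.one_lt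
      have hLd : L.natDegree = p := by
        rw [hLdef, sub_eq_add_neg, natDegree_add_eq_left_of_natDegree_lt hCXlt, natDegree_X_pow]
      have hHdeg : H.natDegree = 2 * p := by
        have hlt : (C lam * L).natDegree < (L^2).natDegree := by
          rw [natDegree_pow, hLd]
          exact lt_of_le_of_lt (natDegree_C_mul_le lam L) (by rw [hLd]; omega)
        rw [hHdef, natDegree_add_eq_left_of_natDegree_lt hlt, natDegree_pow, hLd]
      obtain ⟨g₁, hg₁⟩ := exists_comp_aux_stmt9 h2K a H.natDegree H le_rfl hHa
      obtain ⟨g₂, hg₂⟩ := exists_comp_aux_stmt9 h2K b H.natDegree H le_rfl hHb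
      have hd₁ : (g₁.comp (X^2 + C a * X)).natDegree = 2 * p := by rw [hg₁, hHdeg]
      refine ⟨g₁, g₂, ?_, ?_, by rw [hg₁, hg₂], ?_⟩
      · intro h0
        rw [natDegree_comp, h0, hfa] at hd₁
        omega
      · intro h0
        have hd₂ : (g₂.comp (X^2 + C b * X)).natDegree = 2 * p := by rw [hg₂, hHdeg]
        rw [natDegree_comp, h0, hfb] at hd₂
        omega
      · exact hd₁
  · -- lower bound
    intro g₁ g₂ hg₁ hg₂ heq
    have hppos : 0 < p := hp.pos
    have hinva : (g₁.comp (X^2 + C a * X)).comp (-X - C a) = g₁.comp (X^2 + C a * X) := by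
      rw [Polynomial.comp_assoc, quad_comp_stmt9]
    have hinvb : (g₁.comp (X^2 + C a * X)).comp (-X - C b) = g₁.comp (X^2 + C a * X) := by
      rw [heq, Polynomial.comp_assoc, quad_comp_stmt9]
    have htrans : (g₁.comp (X^2 + C a * X)).comp (X + C (a - b)) = g₁.comp (X^2 + C a * X) := by
      conv_lhs => rw [← negb_comp_nega_stmt9 a b, ← Polynomial.comp_assoc, hinvb]
      exact hinva
    have hn : (g₁.comp (X^2 + C a * X)).natDegree = g₁.natDegree * 2 := by
      rw [natDegree_comp, hfa]
    have hn' : (g₁.comp (X^2 + C a * X)).natDegree = g₂.natDegree * 2 := by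
      rw [heq, natDegree_comp, hfb]
    have hnne : (g₁.comp (X^2 + C a * X)).natDegree ≠ 0 := by
      rw [hn]; exact Nat.mul_ne_zero hg₁ (by norm_num)
    have hdvd : p ∣ (g₁.comp (X^2 + C a * X)).natDegree :=
      dvd_of_translate_stmt9 p (a-b) hc0 _ hnne htrans
    rcases eq_or_ne p 2 with hp2 | hp2
    · subst hp2
      rw [hn]
      have hm1 : g₁.natDegree ≠ 1 := by
        intro hm
        have hm2 : g₂.natDegree = 1 := by omega
        have e1 := eq_X_add_C_of_natDegree_le_one (le_of_eq hm)
        have e2 := eq_X_add_C_of_natDegree_le_one (le_of_eq hm2)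
        rw [e1, e2] at heq
        have h2c := congrArg (fun q => Polynomial.coeff q 2) heq
        have h1c := congrArg (fun q => Polynomial.coeff q 1) heq
        simp [coeff_add, coeff_C_mul, mul_add, coeff_X_pow, coeff_X, coeff_C] at h2c h1c
        have hα : g₁.coeff 1 ≠ 0 := by
          intro h0
          have hg0 : g₁.leadingCoeff = 0 := by rw [leadingCoeff, hm]; exact h0
          rw [leadingCoeff_eq_zero] at hg0
          rw [hg0] at hm
          simp at hm
        apply hab
        have hba : g₁.coeff 1 * a = g₁.coeff 1 * b := by
          linear_combination h1c - b * h2c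
        exact mul_left_cancel₀ hα hba
      omega
    · have hodd : Odd p := hp.odd_of_ne_two hp2
      have hdvd' : p ∣ g₁.natDegree := by
        rw [hn] at hdvd
        exact (Nat.Coprime.dvd_of_dvd_mul_right (Nat.coprime_two_right.2 hodd) hdvd)
      have hle := Nat.le_of_dvd (Nat.pos_of_ne_zero hg₁) hdvd'
      omega
end

section
/- Let f₁ = x² − x and f₂ = x³ − x² over a field K. Then f₁ and f₂ have no common composite, i.e., there are no nonconstant u, v ∈ K[x] with u ∘ f₁ = v ∘ f₂. -/
open Polynomial

private lemma rm_pow {K : Type*} [Field K] (q : K[X]) (hq : q ≠ 0) (a : K) (k : ℕ) :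
    (q ^ k).rootMultiplicity a = k * q.rootMultiplicity a := by
  induction k with
  | zero => simp
  | succ n ih =>
      rw [pow_succ, Polynomial.rootMultiplicity_mul (mul_ne_zero (pow_ne_zero n hq) hq), ih]
      ring

private lemma rm_comp {K : Type*} [Field K] (p q : K[X]) (a : K) (hp : p ≠ 0) (hq : q ≠ 0)
    (hqa : q.eval a = 0) :
    (p.comp q).rootMultiplicity a = p.rootMultiplicity 0 * q.rootMultiplicity a := by
  obtain ⟨s, hs, hnd⟩ := p.exists_eq_pow_rootMultiplicity_mul_and_not_dvd hp 0
  have hs0 : s.eval 0 ≠ 0 := fun h => hnd (Polynomial.dvd_iff_isRoot.2 (by simpa using h))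
  have hscomp : ¬ (s.comp q).IsRoot a := by
    simp only [Polynomial.IsRoot, Polynomial.eval_comp, hqa]
    exact hs0
  have hsq : s.comp q ≠ 0 := fun h => hscomp (by simp [h, Polynomial.IsRoot])
  have hcomp : p.comp q = q ^ p.rootMultiplicity 0 * s.comp q := by
    conv_lhs => rw [hs]
    simp [Polynomial.mul_comp, Polynomial.pow_comp, Polynomial.sub_comp]
  rw [hcomp,
    Polynomial.rootMultiplicity_mul (mul_ne_zero (pow_ne_zero _ hq) hsq),
    rm_pow q hq a, Polynomial.rootMultiplicity_eq_zero hscomp, add_zero]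

theorem stmt_13 (K : Type*) [Field K] :
    ¬ ∃ u v : K[X], u.natDegree ≠ 0 ∧ v.natDegree ≠ 0 ∧
      u.comp (X ^ 2 - X) = v.comp (X ^ 3 - X ^ 2) := by
  rintro ⟨u, v, hu, hv, h⟩
  set f₁ : K[X] := X ^ 2 - X with hf₁
  set f₂ : K[X] := X ^ 3 - X ^ 2 with hf₂
  have hX0 : (X : K[X]) ≠ 0 := Polynomial.X_ne_zero
  have hXC1 : (X - C (1:K)) ≠ 0 := Polynomial.X_sub_C_ne_zero 1
  have hfact₁ : f₁ = X * (X - C 1) := by rw [hf₁, map_one]; ring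
  have hfact₂ : f₂ = X ^ 2 * (X - C 1) := by rw [hf₂, map_one]; ring
  have hf₁0 : f₁ ≠ 0 := by rw [hfact₁]; exact mul_ne_zero hX0 hXC1
  have hf₂0 : f₂ ≠ 0 := by rw [hfact₂]; exact mul_ne_zero (pow_ne_zero 2 hX0) hXC1
  -- common value at 0
  have hval : u.eval 0 = v.eval 0 := by
    have := congrArg (Polynomial.eval (0 : K)) h
    simpa [Polynomial.eval_comp, hf₁, hf₂] using this
  set c : K := u.eval 0 with hc
  set w₁ : K[X] := u - C c with hw₁
  set w₂ : K[X] := v - C c with hw₂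
  have hw₁0 : w₁ ≠ 0 := by
    intro h0
    apply hu
    have : u = C c := by rwa [hw₁, sub_eq_zero] at h0
    rw [this]; simp
  have hw₂0 : w₂ ≠ 0 := by
    intro h0
    apply hv
    have : v = C c := by rwa [hw₂, sub_eq_zero] at h0
    rw [this]; simp
  have hcomp : w₁.comp f₁ = w₂.comp f₂ := by
    rw [hw₁, hw₂, Polynomial.sub_comp, Polynomial.sub_comp, Polynomial.C_comp,
      Polynomial.C_comp, h]
  -- root multiplicities of f₁, f₂ at 0 and 1
  have hf₁e0 : f₁.eval 0 = 0 := by simp [hf₁]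
  have hf₁e1 : f₁.eval 1 = 0 := by simp [hf₁]
  have hf₂e0 : f₂.eval 0 = 0 := by simp [hf₂]
  have hf₂e1 : f₂.eval 1 = 0 := by simp [hf₂]
  have rmX0 : (X : K[X]).rootMultiplicity 0 = 1 := by
    simpa using Polynomial.rootMultiplicity_X_sub_C_self (x := (0:K))
  have rmX1 : (X : K[X]).rootMultiplicity 1 = 0 :=
    Polynomial.rootMultiplicity_eq_zero (by simp [Polynomial.IsRoot])
  have rmXC0 : (X - C (1:K)).rootMultiplicity 0 = 0 :=
    Polynomial.rootMultiplicity_eq_zero (by simp [Polynomial.IsRoot])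
  have rmXC1 : (X - C (1:K)).rootMultiplicity 1 = 1 := Polynomial.rootMultiplicity_X_sub_C_self
  have rm₁0 : f₁.rootMultiplicity 0 = 1 := by
    rw [hfact₁, Polynomial.rootMultiplicity_mul (mul_ne_zero hX0 hXC1), rmX0, rmXC0]
  have rm₁1 : f₁.rootMultiplicity 1 = 1 := by
    rw [hfact₁, Polynomial.rootMultiplicity_mul (mul_ne_zero hX0 hXC1), rmX1, rmXC1]
  have rm₂0 : f₂.rootMultiplicity 0 = 2 := by
    rw [hfact₂, Polynomial.rootMultiplicity_mul (mul_ne_zero (pow_ne_zero 2 hX0) hXC1),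
      rmXC0, rm_pow _ hX0, rmX0]
  have rm₂1 : f₂.rootMultiplicity 1 = 1 := by
    rw [hfact₂, Polynomial.rootMultiplicity_mul (mul_ne_zero (pow_ne_zero 2 hX0) hXC1),
      rmXC1, rm_pow _ hX0, rmX1]
  -- now compare multiplicities
  have e0 : w₁.rootMultiplicity 0 * f₁.rootMultiplicity 0
      = w₂.rootMultiplicity 0 * f₂.rootMultiplicity 0 := by
    rw [← rm_comp w₁ f₁ 0 hw₁0 hf₁0 hf₁e0, ← rm_comp w₂ f₂ 0 hw₂0 hf₂0 hf₂e0, hcomp]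
  have e1 : w₁.rootMultiplicity 0 * f₁.rootMultiplicity 1
      = w₂.rootMultiplicity 0 * f₂.rootMultiplicity 1 := by
    rw [← rm_comp w₁ f₁ 1 hw₁0 hf₁0 hf₁e1, ← rm_comp w₂ f₂ 1 hw₂0 hf₂0 hf₂e1, hcomp]
  rw [rm₁0, rm₂0] at e0
  rw [rm₁1, rm₂1] at e1
  have hlpos : 0 < w₂.rootMultiplicity 0 :=
    (Polynomial.rootMultiplicity_pos hw₂0).2 (by simp [hw₂, Polynomial.IsRoot, ← hval, hc])
  omega
end

section
/- Over K = F₂, the polynomials f₁ = x² + x and f₂ = x³ + x² have no common composite. -/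
open Polynomial

private lemma h2 : (2:(ZMod 2)[X]) = 0 := by
  exact_mod_cast CharP.cast_eq_zero ((ZMod 2)[X]) 2

private lemma key_lemma : ∀ (n : ℕ) (v : (ZMod 2)[X]), v.natDegree = n →
    v.comp (X ^ 3 + X ^ 2) = v.comp (X ^ 3 + X) → n = 0 := by
  intro n
  induction n using Nat.strong_induction_on with
  | _ n ih =>
    intro v hdeg hcomp
    by_contra hn
    -- derivative of v is 0
    have hder : derivative v = 0 := by
      by_contra hd
      set d := derivative v with hd'
      have hC2 : (C (2:ZMod 2)) = (0:(ZMod 2)[X]) := by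
        rw [show (2:ZMod 2) = 0 by decide, map_zero]
      have hC3 : (C (3:ZMod 2)) = (1:(ZMod 2)[X]) := by
        rw [show (3:ZMod 2) = 1 by decide, map_one]
      have h3p : (3:(ZMod 2)[X]) = 1 := by linear_combination h2
      have heq := congrArg derivative hcomp
      rw [derivative_comp, derivative_comp] at heq
      have e1 : derivative ((X:(ZMod 2)[X]) ^ 3 + X ^ 2) = X ^ 2 := by
        simp [derivative_pow]
        linear_combination X^2 * hC3 + X * hC2
      have e2 : derivative ((X:(ZMod 2)[X]) ^ 3 + X) = X ^ 2 + 1 := by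
        simp [derivative_pow]
        linear_combination hC3
      rw [e1, e2, ← hd'] at heq
      -- heq : X^2 * d.comp (X^3+X^2) = (X^2+1) * d.comp (X^3+X)
      have hdvd : ∀ k, (X:(ZMod 2)[X]) ^ k ∣ d := by
        intro k
        induction k with
        | zero => simp
        | succ k ihk =>
          obtain ⟨d₁, hd₁⟩ := ihk
          have hA : ((X:(ZMod 2)[X]) ^ k * d₁).comp (X ^ 3 + X ^ 2)
              = (X ^ 3 + X ^ 2) ^ k * d₁.comp (X ^ 3 + X ^ 2) := by
            simp [mul_comp, pow_comp]
          have hB : ((X:(ZMod 2)[X]) ^ k * d₁).comp (X ^ 3 + X)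
              = (X ^ 3 + X) ^ k * d₁.comp (X ^ 3 + X) := by
            simp [mul_comp, pow_comp]
          have hAfac : ((X:(ZMod 2)[X]) ^ 3 + X ^ 2) = X ^ 2 * (X + 1) := by ring
          have hBfac : ((X:(ZMod 2)[X]) ^ 3 + X) = X * (X + 1) ^ 2 := by
            linear_combination -X^2 * h2
          have hA' : ((X:(ZMod 2)[X]) ^ 3 + X ^ 2) ^ k = (X ^ 2) ^ k * (X + 1) ^ k := by
            rw [hAfac, mul_pow]
          have hB' : ((X:(ZMod 2)[X]) ^ 3 + X) ^ k = X ^ k * ((X + 1) ^ 2) ^ k := by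
            rw [hBfac, mul_pow]
          have heq2 : X ^ 2 * ((X ^ 2) ^ k * (X + 1) ^ k * d₁.comp (X ^ 3 + X ^ 2))
              = (X ^ 2 + 1) * (X ^ k * (((X:(ZMod 2)[X]) + 1) ^ 2) ^ k * d₁.comp (X ^ 3 + X)) := by
            have heq' := heq
            rw [hd₁, hA, hB, hA', hB'] at heq'
            linear_combination heq'
          have hXk : (X:(ZMod 2)[X]) ^ k ≠ 0 := pow_ne_zero _ X_ne_zero
          have hcancel : (X:(ZMod 2)[X]) ^ k * (X ^ (k + 2) * ((X + 1) ^ k * d₁.comp (X ^ 3 + X ^ 2)))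
              = X ^ k * (((X + 1) ^ 2) ^ k * ((X ^ 2 + 1) * d₁.comp (X ^ 3 + X))) := by
            linear_combination heq2
          have hLR := mul_left_cancel₀ hXk hcancel
          have heval := congrArg (eval 0) hLR
          simp [eval_pow, eval_comp] at heval
          have hXd₁ : (X:(ZMod 2)[X]) ∣ d₁ := by
            rw [X_dvd_iff, coeff_zero_eq_eval_zero]
            simpa using heval.symm
          obtain ⟨d₂, hd₂⟩ := hXd₁
          exact ⟨d₂, by rw [hd₁, hd₂]; ring⟩
      have hdvd' := hdvd (d.natDegree + 1)
      have := natDegree_le_of_dvd hdvd' hd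
      rw [natDegree_X_pow] at this
      omega
    -- v = c ^ 2
    set c := contract 2 v with hc
    have hexp : expand (ZMod 2) 2 c = v := expand_contract 2 hder (by norm_num)
    have hv2 : v = c ^ 2 := by
      have := map_frobenius_expand 2 c
      rw [ZMod.frobenius_zmod] at this
      rw [← hexp, ← this]
      simp
    have hcomp' : c.comp (X ^ 3 + X ^ 2) = c.comp (X ^ 3 + X) := by
      apply frobenius_inj ((ZMod 2)[X]) 2
      simp only [frobenius_def]
      rw [hv2] at hcomp
      simpa [pow_comp] using hcomp
    have hdegc : v.natDegree = 2 * c.natDegree := by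
      rw [hv2, natDegree_pow]
    have := ih c.natDegree (by omega) c rfl hcomp'
    omega

theorem stmt_14 :
    ¬ ∃ u v : (ZMod 2)[X], u.natDegree ≠ 0 ∧ v.natDegree ≠ 0 ∧
      u.comp (X ^ 2 + X) = v.comp (X ^ 3 + X ^ 2) := by
  rintro ⟨u, v, hu, hv, h⟩
  have h1 : ((X:(ZMod 2)[X]) ^ 2 + X).comp (X + 1) = X ^ 2 + X := by
    simp [add_comp, pow_comp]
    linear_combination (X:(ZMod 2)[X]) * h2 + h2
  have h3 : ((X:(ZMod 2)[X]) ^ 3 + X ^ 2).comp (X + 1) = X ^ 3 + X := by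
    simp [add_comp, pow_comp]
    linear_combination (2*(X:(ZMod 2)[X])^2 + 2*X + 1) * h2
  have hfix : v.comp (X ^ 3 + X ^ 2) = v.comp (X ^ 3 + X) := by
    have : (u.comp (X ^ 2 + X)).comp (X + 1) = u.comp (X ^ 2 + X) := by
      rw [comp_assoc, h1]
    rw [h, comp_assoc, h3] at this
    exact this.symm
  exact hv (key_lemma v.natDegree v rfl hfix)
end

section
/- Let f₁ = x² and f₂ = (x−1)² over ℚ. Then f₁ and f₂ have no common composite. (More specifically: there is no nonempty finite subset S of an algebraic closure of ℚ that is simultaneously a union of fibers of f₁ and a union of fibers of f₂.) -/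
open Polynomial

lemma no_compat :
    ¬ ∃ S : Finset (AlgebraicClosure ℚ), S.Nonempty ∧
      (∀ a ∈ S, ∀ b : AlgebraicClosure ℚ, b ^ 2 = a ^ 2 → b ∈ S) ∧
      (∀ a ∈ S, ∀ b : AlgebraicClosure ℚ, (b - 1) ^ 2 = (a - 1) ^ 2 → b ∈ S) := by
  rintro ⟨S, ⟨a, ha⟩, h1, h2⟩
  have key : ∀ x ∈ S, x + 2 ∈ S := by
    intro x hx
    have hneg : -x ∈ S := h1 x hx (-x) (by ring)
    exact h2 (-x) hneg (x + 2) (by ring)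
  have hmem : ∀ n : ℕ, a + 2 * n ∈ S := by
    intro n
    induction n with
    | zero => simpa using ha
    | succ k ih =>
      have := key _ ih
      convert this using 1
      push_cast
      ring
  have hinj : Function.Injective (fun n : ℕ => a + 2 * (n : AlgebraicClosure ℚ)) := by
    intro m n h
    have : (m : AlgebraicClosure ℚ) = n := by
      field_simp at h
      have h3 : 2 * m = 2 * n := by exact_mod_cast add_left_cancel h
      exact_mod_cast (show m = n by omega)
    exact_mod_cast this
  have : (S : Set (AlgebraicClosure ℚ)).Infinite :=
    Set.infinite_of_injective_forall_mem hinj (fun n => hmem n)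
  exact this S.finite_toSet

theorem stmt_15 :
    (¬ ∃ u v : ℚ[X], u.natDegree ≠ 0 ∧ v.natDegree ≠ 0 ∧
      u.comp (X ^ 2) = v.comp ((X - 1) ^ 2)) ∧
    ¬ ∃ S : Finset (AlgebraicClosure ℚ), S.Nonempty ∧
      (∀ a ∈ S, ∀ b : AlgebraicClosure ℚ,
        Polynomial.aeval b ((X : ℚ[X]) ^ 2) = Polynomial.aeval a ((X : ℚ[X]) ^ 2) → b ∈ S) ∧
      (∀ a ∈ S, ∀ b : AlgebraicClosure ℚ,
        Polynomial.aeval b (((X : ℚ[X]) - 1) ^ 2) = Polynomial.aeval a (((X : ℚ[X]) - 1) ^ 2) →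
          b ∈ S) := by
  constructor
  · rintro ⟨u, v, hu, hv, huv⟩
    classical
    apply no_compat
    set K := AlgebraicClosure ℚ
    have hhdeg : (u.comp ((X : ℚ[X]) ^ 2)).natDegree ≠ 0 := by
      rw [natDegree_comp]; simp [hu]
    have hh0 : u.comp ((X : ℚ[X]) ^ 2) ≠ 0 := fun h0 => hhdeg (by simp [h0])
    have hmapdeg : ((u.comp ((X : ℚ[X]) ^ 2)).map (algebraMap ℚ K)).degree ≠ 0 := by
      rw [degree_map]
      intro hd
      exact hhdeg (natDegree_eq_zero_iff_degree_le_zero.mpr hd.le)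
    have hmap0 : (u.comp ((X : ℚ[X]) ^ 2)).map (algebraMap ℚ K) ≠ 0 := by
      intro h0
      exact hh0 ((Polynomial.map_eq_zero _).mp h0)
    obtain ⟨z, hz⟩ := IsAlgClosed.exists_root (k := K) _ hmapdeg
    refine ⟨((u.comp ((X : ℚ[X]) ^ 2)).map (algebraMap ℚ K)).roots.toFinset, ?_, ?_, ?_⟩
    · exact ⟨z, Multiset.mem_toFinset.mpr ((mem_roots hmap0).mpr hz)⟩
    · intro a ha b hb
      rw [Multiset.mem_toFinset, mem_roots hmap0, IsRoot, Polynomial.eval_map,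
        ← Polynomial.aeval_def, aeval_comp] at ha ⊢
      simp only [map_pow, aeval_X] at ha ⊢
      rw [hb]; exact ha
    · intro a ha b hb
      rw [Multiset.mem_toFinset, mem_roots hmap0, IsRoot, Polynomial.eval_map,
        ← Polynomial.aeval_def, huv, aeval_comp] at ha ⊢
      simp only [map_pow, map_sub, aeval_X, map_one] at ha ⊢
      rw [hb]; exact ha
  · intro ⟨S, hS, h1, h2⟩
    apply no_compat
    refine ⟨S, hS, ?_, ?_⟩
    · intro a ha b hb
      exact h1 a ha b (by simpa using hb)
    · intro a ha b hb
      exact h2 a ha b (by simpa using hb)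
end
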